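/- arXiv:1705.09494 — 7 statements merged into one kernel-verified Lean document; each statement's English description precedes it below -/
import Mathlib

section
/- Let a, c, d, e > 0 and b ∈ ℝ, and suppose g(x) = a|x|^b e^{-c|x|^d}(1 + O(1/|x|^e)) as x → -∞. Define y(u) = -{ (-b/(cd)) log( ((cd/|b|)(u/a)^{d/b}) / |log((cd/|b|) u^{d/b})| ) }^{1/d} for small u > 0 (assuming b ≠ 0). Then as x → -∞, y(g(x)) = x(1 + O(log|x|/|x|^{2d})) if d ≤ e, and y(g(x)) = x(1 + O(1/|x|^{d+e})) if d > e. -/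
open Filter Topology Asymptotics Real

lemma abs_log1p_le {δ : ℝ} (h : |δ| ≤ 1/2) : |Real.log (1+δ)| ≤ 2*|δ| := by
  obtain ⟨h1, h2⟩ := abs_le.mp h
  have hpos : (0:ℝ) < 1 + δ := by linarith
  have hub : Real.log (1+δ) ≤ δ := by
    have := Real.log_le_sub_one_of_pos hpos; linarith
  have hlb : -(2*|δ|) ≤ Real.log (1+δ) := by
    have hinv : (0:ℝ) < (1+δ)⁻¹ := by positivity
    have h3 := Real.log_le_sub_one_of_pos hinv
    rw [Real.log_inv] at h3
    have h4 : (1+δ)⁻¹ - 1 = -δ/(1+δ) := by field_simp; ring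
    rw [h4] at h3
    have h5 : -δ/(1+δ) ≤ 2*|δ| := by
      rw [div_le_iff₀ hpos]
      cases abs_cases δ with
      | inl hh => nlinarith [hh.1, hh.2]
      | inr hh => nlinarith [hh.1, hh.2]
    linarith
  rw [abs_le]
  refine ⟨by linarith, ?_⟩
  calc Real.log (1+δ) ≤ δ := hub
    _ ≤ |δ| := le_abs_self δ
    _ ≤ 2*|δ| := by nlinarith [abs_nonneg δ]

lemma rpow_one_add_sub_one_abs_le {p η : ℝ} (hp : 0 < p) (h1 : |η| ≤ 1/2)
    (h2 : p * (2*|η|) ≤ 1) : |(1+η)^p - 1| ≤ 4*p*|η| := by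
  have hpos : (0:ℝ) < 1 + η := by
    obtain ⟨hl, _⟩ := abs_le.mp h1; linarith
  rw [Real.rpow_def_of_pos hpos]
  have hlog := abs_log1p_le h1
  have hz : |Real.log (1+η) * p| ≤ 1 := by
    rw [abs_mul, abs_of_pos hp]
    calc |Real.log (1+η)| * p ≤ (2*|η|) * p :=
          mul_le_mul_of_nonneg_right hlog hp.le
      _ = p * (2*|η|) := by ring
      _ ≤ 1 := h2
  calc |Real.exp (Real.log (1+η) * p) - 1| ≤ 2 * |Real.log (1+η) * p| :=
        Real.abs_exp_sub_one_le hz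
    _ ≤ 2 * ((2*|η|) * p) := by
        refine mul_le_mul_of_nonneg_left ?_ (by norm_num)
        rw [abs_mul, abs_of_pos hp]
        exact mul_le_mul_of_nonneg_right hlog hp.le
    _ = 4*p*|η| := by ring

set_option maxHeartbeats 1000000 in
/-- Accuracy of the closed-form approximation to the Generalised Gamma-type
lower tail quantile, composed with the cdf. -/
theorem gg_lower_tail_approx_accuracy
    (g y : ℝ → ℝ) (a b c d e : ℝ)
    (ha : 0 < a) (hc : 0 < c) (hd : 0 < d) (he : 0 < e) (hb : b ≠ 0)
    (hg_tail : (fun x => g x - a * |x| ^ b * Real.exp (-c * |x| ^ d)) =O[atBot]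
      (fun x => a * |x| ^ b * Real.exp (-c * |x| ^ d) / |x| ^ e))
    (hy : ∀ u, y u =
      -((-b / (c * d)) *
        Real.log ((c * d / |b| * (u / a) ^ (d / b)) /
          |Real.log (c * d / |b| * u ^ (d / b))|)) ^ (1 / d)) :
    ((d ≤ e → (fun x => y (g x) - x) =O[atBot]
        (fun x => x * (Real.log |x| / |x| ^ (2 * d)))) ∧
     (d > e → (fun x => y (g x) - x) =O[atBot]
        (fun x => x * (1 / |x| ^ (d + e))))) := by
  have hbabs : 0 < |b| := abs_pos.mpr hb
  -- constants
  obtain ⟨Cg, hCg⟩ := isBigO_iff.mp hg_tail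
  set C₀ : ℝ := max Cg 1 with hC₀def
  have hC₀ : (0:ℝ) < C₀ := lt_of_lt_of_le one_pos (le_max_right _ _)
  set B : ℝ := c * d / |b| with hBdef
  have hB : 0 < B := by positivity
  set K : ℝ := |Real.log B| + |d/b| * |Real.log a| + |d/b| with hKdef
  have hK : 0 ≤ K := by positivity
  set C₁ : ℝ := K + d with hC₁def
  have hC₁ : 0 < C₁ := by positivity
  set C₂ : ℝ := C₁ / B with hC₂def
  have hC₂ : 0 < C₂ := by positivity
  set Ca : ℝ := 2 * C₀ / c with hCadef
  have hCa : 0 < Ca := by positivity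
  set Cb : ℝ := 2 * |b| * C₂ / (c * d) with hCbdef
  have hCb : 0 < Cb := by positivity
  set C₃ : ℝ := Ca + Cb with hC₃def
  have hC₃ : 0 < C₃ := by positivity
  set m : ℝ := min (1/2 : ℝ) (d/2) with hmdef
  have hm : 0 < m := lt_min (by norm_num) (by positivity)
  have hm2 : m ≤ 1/2 := min_le_left _ _
  have hmd : m ≤ d/2 := min_le_right _ _
  set C₄ : ℝ := 4 / d * C₃ with hC₄def
  have hC₄ : 0 < C₄ := by positivity
  clear_value C₀ B K C₁ C₂ Ca Cb C₃ m C₄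
  have hneg : Tendsto (fun x : ℝ => -x) atBot atTop := tendsto_neg_atBot_atTop
  -- eventual facts over atTop
  have F1 : ∀ᶠ t : ℝ in atTop, (1:ℝ) ≤ t := eventually_ge_atTop 1
  have F2 : ∀ᶠ t : ℝ in atTop, (1:ℝ) ≤ Real.log t :=
    Real.tendsto_log_atTop.eventually_ge_atTop 1
  have hsmallpow : ∀ p C : ℝ, 0 < p → 0 < C → ∀ ε : ℝ, 0 < ε →
      ∀ᶠ t : ℝ in atTop, C / t ^ p ≤ ε := by
    intro p C hp hCpos ε hε
    have h0 : Tendsto (fun t : ℝ => C * t ^ (-p)) atTop (𝓝 (C * 0)) :=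
      (tendsto_rpow_neg_atTop hp).const_mul C
    rw [mul_zero] at h0
    filter_upwards [h0.eventually_le_const hε, eventually_gt_atTop (0:ℝ)] with t h1 h2
    rwa [Real.rpow_neg h2.le, ← div_eq_mul_inv] at h1
  have F3 : ∀ᶠ t : ℝ in atTop, C₀ / t ^ e ≤ 1/2 :=
    hsmallpow e C₀ he hC₀ _ (by norm_num)
  have F5 : ∀ᶠ t : ℝ in atTop, Ca / t ^ (d + e) ≤ m / 2 :=
    hsmallpow (d+e) Ca (by positivity) hCa _ (by positivity)
  have F4 : ∀ᶠ t : ℝ in atTop, C₁ * Real.log t ≤ B / 2 * t ^ d := by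
    have hl := (isLittleO_log_rpow_atTop hd).def
      (show (0:ℝ) < B / (2 * C₁) by positivity)
    filter_upwards [hl, F1] with t h1 h2
    rw [Real.norm_eq_abs, Real.norm_eq_abs, abs_of_nonneg (Real.log_nonneg h2),
      abs_of_nonneg (Real.rpow_nonneg (by linarith : (0:ℝ) ≤ t) d)] at h1
    calc C₁ * Real.log t ≤ C₁ * (B / (2 * C₁) * t ^ d) :=
          mul_le_mul_of_nonneg_left h1 hC₁.le
      _ = B / 2 * t ^ d := by field_simp [hC₁.ne']
  have F6 : ∀ᶠ t : ℝ in atTop, Cb * (Real.log t / t ^ (2*d)) ≤ m / 2 := by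
    have hl := (isLittleO_log_rpow_atTop (show (0:ℝ) < 2*d by positivity)).def
      (show (0:ℝ) < m / (2 * Cb) by positivity)
    filter_upwards [hl, F1] with t h1 h2
    have htpos : (0:ℝ) < t := by linarith
    have htd : (0:ℝ) < t ^ (2*d) := Real.rpow_pos_of_pos htpos _
    rw [Real.norm_eq_abs, Real.norm_eq_abs, abs_of_nonneg (Real.log_nonneg h2),
      abs_of_nonneg htd.le] at h1
    have h3 : Real.log t / t ^ (2*d) ≤ m / (2 * Cb) := by
      rw [div_le_iff₀ htd]; exact h1
    calc Cb * (Real.log t / t ^ (2*d)) ≤ Cb * (m / (2 * Cb)) :=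
          mul_le_mul_of_nonneg_left h3 hCb.le
      _ = m / 2 := by
          field_simp
  -- Main eventual bound
  have Hmain : ∀ᶠ x : ℝ in atBot,
      |y (g x) - x| ≤ C₄ * ((-x) / (-x) ^ (d + e) + (-x) * Real.log (-x) / (-x) ^ (2*d)) := by
    filter_upwards [hneg.eventually F1, hneg.eventually F2, hneg.eventually F3,
      hneg.eventually F4, hneg.eventually F5, hneg.eventually F6, hCg] with x e1 e2 e3 e4 e5 e6 eg
    set t : ℝ := -x with htdef
    have ht : (0:ℝ) < t := by linarith
    have hxneg : x < 0 := by linarith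
    have habs : |x| = t := abs_of_neg hxneg
    have htd : (0:ℝ) < t ^ d := Real.rpow_pos_of_pos ht d
    have hte : (0:ℝ) < t ^ e := Real.rpow_pos_of_pos ht e
    have htde : (0:ℝ) < t ^ (d+e) := Real.rpow_pos_of_pos ht _
    have ht2d : (0:ℝ) < t ^ (2*d) := Real.rpow_pos_of_pos ht _
    have htb : (0:ℝ) < t ^ b := Real.rpow_pos_of_pos ht b
    have hlogt : (1:ℝ) ≤ Real.log t := e2
    clear_value t
    set G : ℝ := a * t ^ b * Real.exp (-(c * t ^ d)) with hGdef
    have hG : 0 < G := by positivity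
    clear_value G
    -- δ and its bounds
    set δ : ℝ := (g x - G) / G with hδdef
    clear_value δ
    have hgG : g x = G * (1 + δ) := by rw [hδdef]; field_simp; ring
    have hδ : |δ| ≤ C₀ / t ^ e := by
      rw [Real.norm_eq_abs, Real.norm_eq_abs, habs] at eg
      have hGG : a * t ^ b * Real.exp (-c * t ^ d) = G := by rw [hGdef]; ring_nf
      rw [hGG] at eg
      have heg' : |g x - G| ≤ C₀ * (G / t ^ e) := by
        rw [abs_of_pos (show (0:ℝ) < G / t ^ e by positivity)] at eg
        calc |g x - G| ≤ Cg * (G / t ^ e) := eg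
          _ ≤ C₀ * (G / t ^ e) :=
              mul_le_mul_of_nonneg_right (hC₀def ▸ le_max_left _ _) (by positivity)
      rw [hδdef, abs_div, abs_of_pos hG, div_le_div_iff₀ hG hte]
      calc |g x - G| * t ^ e ≤ C₀ * (G / t ^ e) * t ^ e :=
            mul_le_mul_of_nonneg_right heg' hte.le
        _ = C₀ * G := by field_simp
    have hδhalf : |δ| ≤ 1/2 := hδ.trans e3
    obtain ⟨hδlo, hδhi⟩ := abs_le.mp hδhalf
    have hδpos : (0:ℝ) < 1 + δ := by linarith
    have hgpos : 0 < g x := by rw [hgG]; positivity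
    have hlogδ : |Real.log (1+δ)| ≤ 2*|δ| := abs_log1p_le hδhalf
    have hlogδ1 : |Real.log (1+δ)| ≤ 1 := by
      calc |Real.log (1+δ)| ≤ 2*|δ| := hlogδ
        _ ≤ 2*(1/2) := by linarith
        _ = 1 := by norm_num
    -- rpow computations
    have hua : g x / a = t ^ b * Real.exp (-(c * t ^ d)) * (1 + δ) := by
      rw [hgG, hGdef]; field_simp
    have h1 : (g x / a) ^ (d/b) =
        t ^ d * Real.exp (-(c * t ^ d) * (d/b)) * (1+δ) ^ (d/b) := by
      rw [hua, Real.mul_rpow (by positivity) hδpos.le,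
        Real.mul_rpow htb.le (Real.exp_pos _).le]
      congr 1
      congr 1
      · rw [← Real.rpow_mul ht.le, mul_div_cancel₀ d hb]
      · rw [← Real.exp_mul]
    -- log of g x
    have hloggx : Real.log (g x) =
        Real.log a + b * Real.log t + (-(c * t ^ d)) + Real.log (1+δ) := by
      rw [hgG, hGdef, Real.log_mul (by positivity) hδpos.ne',
        Real.log_mul (by positivity) (Real.exp_ne_zero _),
        Real.log_mul ha.ne' htb.ne', Real.log_rpow ht, Real.log_exp]
    -- L = log (B * (g x)^(d/b))
    set L : ℝ := Real.log (B * g x ^ (d/b)) with hLdef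
    clear_value L
    set R : ℝ := Real.log B + d/b * Real.log a + d * Real.log t + d/b * Real.log (1+δ)
      with hRdef
    clear_value R
    have hL2 : L = R - c * d / b * t ^ d := by
      rw [hLdef, Real.log_mul hB.ne' (Real.rpow_pos_of_pos hgpos _).ne',
        Real.log_rpow hgpos, hloggx, hRdef]
      field_simp
      ring
    have hR : |R| ≤ C₁ * Real.log t := by
      have h1' : |R| ≤ |Real.log B| + |d/b| * |Real.log a| + d * Real.log t
          + |d/b| * |Real.log (1+δ)| := by
        rw [hRdef]
        calc |Real.log B + d/b * Real.log a + d * Real.log t + d/b * Real.log (1+δ)|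
            ≤ |Real.log B + d/b * Real.log a + d * Real.log t| + |d/b * Real.log (1+δ)| :=
              abs_add_le _ _
          _ ≤ |Real.log B + d/b * Real.log a| + |d * Real.log t|
              + |d/b * Real.log (1+δ)| := by
                have := abs_add_le (Real.log B + d/b * Real.log a) (d * Real.log t)
                linarith
          _ ≤ |Real.log B| + |d/b * Real.log a| + |d * Real.log t|
              + |d/b * Real.log (1+δ)| := by
                have := abs_add_le (Real.log B) (d/b * Real.log a)
                linarith
          _ = |Real.log B| + |d/b| * |Real.log a| + d * Real.log t
              + |d/b| * |Real.log (1+δ)| := by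
                rw [abs_mul, abs_mul, abs_mul, abs_of_pos hd,
                  abs_of_nonneg (by linarith : (0:ℝ) ≤ Real.log t)]
      have h2' : |d/b| * |Real.log (1+δ)| ≤ |d/b| := by
        calc |d/b| * |Real.log (1+δ)| ≤ |d/b| * 1 :=
              mul_le_mul_of_nonneg_left hlogδ1 (abs_nonneg _)
          _ = |d/b| := mul_one _
      have hcoef : |Real.log B| + |d/b| * |Real.log a| + |d/b| ≤ K * Real.log t := by
        rw [hKdef]
        exact le_mul_of_one_le_right (by positivity) hlogt
      rw [hC₁def]
      linarith [h1', h2', hcoef]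
    have hRB : |R| ≤ B/2 * t ^ d := by
      calc |R| ≤ C₁ * Real.log t := hR
        _ ≤ B/2 * t ^ d := e4
    obtain ⟨hRlo, hRhi⟩ := abs_le.mp hRB
    -- |L| = B t^d (1+ρ)
    obtain ⟨ρ, hρle, hρhalf, hLabs⟩ :
        ∃ ρ : ℝ, |ρ| ≤ C₂ * (Real.log t / t ^ d) ∧ |ρ| ≤ 1/2 ∧ |L| = B * t ^ d * (1+ρ) := by
      have hRabs : |R| / (B * t ^ d) ≤ C₂ * (Real.log t / t ^ d) := by
        rw [div_le_iff₀ (by positivity)]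
        calc |R| ≤ C₁ * Real.log t := hR
          _ = C₂ * (Real.log t / t ^ d) * (B * t ^ d) := by
              rw [hC₂def]
              field_simp
      have hRhalf : |R| / (B * t ^ d) ≤ 1/2 := by
        rw [div_le_iff₀ (by positivity)]
        calc |R| ≤ B/2 * t ^ d := hRB
          _ = 1/2 * (B * t ^ d) := by ring
      rcases hb.lt_or_gt with hbneg | hbpos
      · -- b < 0 : c*d/b = -B, L = R + B t^d ≥ 0
        refine ⟨R / (B * t ^ d), ?_, ?_, ?_⟩
        · rw [abs_div, abs_of_pos (show (0:ℝ) < B * t ^ d by positivity)]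
          linarith [hRabs]
        · rw [abs_div, abs_of_pos (show (0:ℝ) < B * t ^ d by positivity)]; exact hRhalf
        · have hcb : c * d / b = -B := by
            rw [hBdef, abs_of_neg hbneg]; field_simp
          have hLval : L = R + B * t ^ d := by rw [hL2, hcb]; ring
          have hLpos : 0 ≤ L := by rw [hLval]; linarith
          rw [abs_of_nonneg hLpos, hLval]
          field_simp
          ring
      · -- b > 0 : c*d/b = B, L = R - B t^d ≤ 0
        refine ⟨-R / (B * t ^ d), ?_, ?_, ?_⟩
        · rw [abs_div, abs_of_pos (show (0:ℝ) < B * t ^ d by positivity), abs_neg]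
          linarith [hRabs]
        · rw [abs_div, abs_of_pos (show (0:ℝ) < B * t ^ d by positivity), abs_neg]
          exact hRhalf
        · have hcb : c * d / b = B := by rw [hBdef, abs_of_pos hbpos]
          have hLval : L = R - B * t ^ d := by rw [hL2, hcb]
          have hLneg : L ≤ 0 := by rw [hLval]; linarith
          rw [abs_of_nonpos hLneg, hLval]
          field_simp
          ring
    obtain ⟨hρlo, hρhi⟩ := abs_le.mp hρhalf
    have hρpos : (0:ℝ) < 1 + ρ := by linarith
    have hlogρ : |Real.log (1+ρ)| ≤ 2*|ρ| := abs_log1p_le hρhalf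
    -- the fraction in hy
    have hfrac : B * (g x / a) ^ (d/b) / |L| =
        Real.exp (-(c * t ^ d) * (d/b)) * (1+δ) ^ (d/b) / (1+ρ) := by
      rw [h1, hLabs]
      field_simp
    have hlogfrac : Real.log (B * (g x / a) ^ (d/b) / |L|) =
        -(c * t ^ d) * (d/b) + d/b * Real.log (1+δ) - Real.log (1+ρ) := by
      rw [hfrac, Real.log_div (by positivity) hρpos.ne',
        Real.log_mul (Real.exp_ne_zero _) (Real.rpow_pos_of_pos hδpos _).ne',
        Real.log_exp, Real.log_rpow hδpos]
    -- inner expression = t^d (1+η)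
    set η : ℝ := (-(1/c) * Real.log (1+δ) + b/(c*d) * Real.log (1+ρ)) / t ^ d with hηdef
    clear_value η
    have hInner : -b / (c*d) * Real.log (B * (g x / a) ^ (d/b) / |L|) =
        t ^ d * (1+η) := by
      rw [hlogfrac, hηdef]
      field_simp
      ring
    -- bound on η
    have hηbd : |η| ≤ Ca / t ^ (d+e) + Cb * (Real.log t / t ^ (2*d)) := by
      have hnum : |(-(1/c) * Real.log (1+δ) + b/(c*d) * Real.log (1+ρ))| ≤
          (2/c) * (C₀ / t ^ e) + (2*|b|/(c*d)) * (C₂ * (Real.log t / t ^ d)) := by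
        calc |(-(1/c) * Real.log (1+δ) + b/(c*d) * Real.log (1+ρ))|
            ≤ |(-(1/c)) * Real.log (1+δ)| + |b/(c*d) * Real.log (1+ρ)| := abs_add_le _ _
          _ = (1/c) * |Real.log (1+δ)| + |b|/(c*d) * |Real.log (1+ρ)| := by
              rw [abs_mul, abs_mul, abs_neg, abs_of_pos (show (0:ℝ) < 1/c by positivity),
                abs_div, abs_of_pos (show (0:ℝ) < c*d by positivity)]
          _ ≤ (1/c) * (2*|δ|) + |b|/(c*d) * (2*|ρ|) := by
              have g1 := mul_le_mul_of_nonneg_left hlogδ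
                (show (0:ℝ) ≤ 1/c by positivity)
              have g2 := mul_le_mul_of_nonneg_left hlogρ
                (show (0:ℝ) ≤ |b|/(c*d) by positivity)
              linarith
          _ ≤ (1/c) * (2*(C₀ / t ^ e)) + |b|/(c*d) * (2*(C₂ * (Real.log t / t ^ d))) := by
              have g1 := mul_le_mul_of_nonneg_left
                (show 2*|δ| ≤ 2*(C₀ / t ^ e) by linarith)
                (show (0:ℝ) ≤ 1/c by positivity)
              have g2 := mul_le_mul_of_nonneg_left
                (show 2*|ρ| ≤ 2*(C₂ * (Real.log t / t ^ d)) by linarith)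
                (show (0:ℝ) ≤ |b|/(c*d) by positivity)
              linarith
          _ = (2/c) * (C₀ / t ^ e) + (2*|b|/(c*d)) * (C₂ * (Real.log t / t ^ d)) := by
              ring
      have htsum : t ^ (d+e) = t ^ d * t ^ e := Real.rpow_add ht d e
      have ht2 : t ^ (2*d) = t ^ d * t ^ d := by
        rw [two_mul, Real.rpow_add ht]
      rw [hηdef, abs_div, abs_of_pos htd]
      rw [div_le_iff₀ htd]
      calc |(-(1/c) * Real.log (1+δ) + b/(c*d) * Real.log (1+ρ))|
          ≤ (2/c) * (C₀ / t ^ e) + (2*|b|/(c*d)) * (C₂ * (Real.log t / t ^ d)) := hnum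
        _ = (Ca / t ^ (d+e) + Cb * (Real.log t / t ^ (2*d))) * t ^ d := by
            rw [hCadef, hCbdef, htsum, ht2]
            field_simp
    have hηm : |η| ≤ m := by
      calc |η| ≤ Ca / t ^ (d+e) + Cb * (Real.log t / t ^ (2*d)) := hηbd
        _ ≤ m/2 + m/2 := add_le_add e5 e6
        _ = m := by ring
    have hηhalf : |η| ≤ 1/2 := hηm.trans hm2
    obtain ⟨hηlo, hηhi⟩ := abs_le.mp hηhalf
    have hηpos : (0:ℝ) < 1 + η := by linarith
    -- y (g x)
    have hy' : y (g x) = -(t * (1+η) ^ (1/d)) := by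
      rw [hy (g x), ← hLdef, hInner,
        Real.mul_rpow htd.le hηpos.le, ← Real.rpow_mul ht.le,
        mul_one_div_cancel hd.ne', Real.rpow_one]
    have hdiff : y (g x) - x = -(t * ((1+η) ^ (1/d) - 1)) := by
      rw [hy']
      have : x = -t := by rw [htdef]; ring
      rw [this]; ring
    have hrp : |(1+η) ^ (1/d) - 1| ≤ 4*(1/d)*|η| := by
      apply rpow_one_add_sub_one_abs_le (by positivity) hηhalf
      calc 1/d * (2*|η|) ≤ 1/d * (2*(d/2)) := by
            have : 2*|η| ≤ 2*(d/2) := by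
              have := hηm.trans hmd; linarith
            exact mul_le_mul_of_nonneg_left this (by positivity)
        _ = 1 := by field_simp
    calc |y (g x) - x| = t * |(1+η) ^ (1/d) - 1| := by
          rw [hdiff, abs_neg, abs_mul, abs_of_pos ht]
      _ ≤ t * (4*(1/d)*|η|) :=
          mul_le_mul_of_nonneg_left hrp ht.le
      _ ≤ t * (4*(1/d)*(Ca / t ^ (d+e) + Cb * (Real.log t / t ^ (2*d)))) := by
          have h2 : 4*(1/d)*|η| ≤ 4*(1/d)*(Ca / t ^ (d+e) + Cb * (Real.log t / t ^ (2*d))) :=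
            mul_le_mul_of_nonneg_left hηbd (by positivity)
          exact mul_le_mul_of_nonneg_left h2 ht.le
      _ ≤ C₄ * (t / t ^ (d+e) + t * Real.log t / t ^ (2*d)) := by
          have hA : (0:ℝ) ≤ t / t ^ (d+e) := by positivity
          have hBt : (0:ℝ) ≤ t * Real.log t / t ^ (2*d) :=
            div_nonneg (mul_nonneg ht.le (by linarith)) ht2d.le
          have hexp : t * (4*(1/d)*(Ca / t ^ (d+e) + Cb * (Real.log t / t ^ (2*d))))
              = 4/d * (Ca * (t / t ^ (d+e)) + Cb * (t * Real.log t / t ^ (2*d))) := by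
            ring
          have hexp2 : C₄ * (t / t ^ (d+e) + t * Real.log t / t ^ (2*d))
              = 4/d * ((Ca+Cb) * (t / t ^ (d+e)) + (Ca+Cb) * (t * Real.log t / t ^ (2*d))) := by
            rw [hC₄def, hC₃def]; ring
          rw [hexp, hexp2]
          have k1 : Ca * (t / t ^ (d+e)) ≤ (Ca+Cb) * (t / t ^ (d+e)) :=
            mul_le_mul_of_nonneg_right (by linarith) hA
          have k2 : Cb * (t * Real.log t / t ^ (2*d)) ≤ (Ca+Cb) * (t * Real.log t / t ^ (2*d)) :=
            mul_le_mul_of_nonneg_right (by linarith) hBt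
          have h4d : (0:ℝ) ≤ 4/d := by positivity
          have hin : Ca * (t / t ^ (d+e)) + Cb * (t * Real.log t / t ^ (2*d))
              ≤ (Ca+Cb) * (t / t ^ (d+e)) + (Ca+Cb) * (t * Real.log t / t ^ (2*d)) := by
            linarith [k1, k2]
          exact mul_le_mul_of_nonneg_left hin h4d
  constructor
  · -- case d ≤ e
    intro hde
    rw [isBigO_iff]
    refine ⟨2*C₄, ?_⟩
    filter_upwards [Hmain, hneg.eventually F1, hneg.eventually F2] with x h1 h2 h3
    set t : ℝ := -x with htdef
    have ht : (0:ℝ) < t := by linarith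
    have hxneg : x < 0 := by linarith
    have habs : |x| = t := abs_of_neg hxneg
    have hlogt : (1:ℝ) ≤ Real.log t := h3
    have htde : (0:ℝ) < t ^ (d+e) := Real.rpow_pos_of_pos ht _
    have ht2d : (0:ℝ) < t ^ (2*d) := Real.rpow_pos_of_pos ht _
    rw [Real.norm_eq_abs, Real.norm_eq_abs, habs]
    have hq : |x * (Real.log t / t ^ (2*d))| = t * (Real.log t / t ^ (2*d)) := by
      rw [abs_mul, habs, abs_of_nonneg (div_nonneg (by linarith) ht2d.le)]
    rw [hq]
    have hpow : t ^ (2*d) ≤ t ^ (d+e) :=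
      Real.rpow_le_rpow_of_exponent_le h2 (by linarith)
    have k1 : t / t ^ (d+e) ≤ t / t ^ (2*d) := by
      rw [div_le_div_iff₀ htde ht2d]
      exact mul_le_mul_of_nonneg_left hpow ht.le
    have k2 : t / t ^ (2*d) ≤ t * Real.log t / t ^ (2*d) := by
      rw [div_le_div_iff₀ ht2d ht2d]
      have hts : t ≤ t * Real.log t := by
        have := mul_le_mul_of_nonneg_left hlogt ht.le
        linarith
      exact mul_le_mul_of_nonneg_right hts ht2d.le
    have k3 : t / t ^ (d+e) ≤ t * Real.log t / t ^ (2*d) := k1.trans k2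
    have k4 : C₄ * (t / t ^ (d+e)) ≤ C₄ * (t * Real.log t / t ^ (2*d)) :=
      mul_le_mul_of_nonneg_left k3 hC₄.le
    calc |y (g x) - x| ≤ C₄ * (t / t ^ (d+e) + t * Real.log t / t ^ (2*d)) := h1
      _ ≤ 2*C₄ * (t * Real.log t / t ^ (2*d)) := by
          have hh : C₄ * (t / t ^ (d+e)) + C₄ * (t * Real.log t / t ^ (2*d))
              ≤ 2*C₄ * (t * Real.log t / t ^ (2*d)) := by linarith [k4]
          linarith [hh]
      _ = 2*C₄ * (t * (Real.log t / t ^ (2*d))) := by ring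
  · -- case d > e
    intro hde
    have F7 : ∀ᶠ t : ℝ in atTop, Real.log t ≤ t ^ (d-e) := by
      have hl := (isLittleO_log_rpow_atTop (show (0:ℝ) < d - e by linarith)).def
        one_pos
      filter_upwards [hl, F1] with t h1 h2
      rw [Real.norm_eq_abs, Real.norm_eq_abs, abs_of_nonneg (Real.log_nonneg h2),
        abs_of_nonneg (Real.rpow_nonneg (by linarith : (0:ℝ) ≤ t) _), one_mul] at h1
      exact h1
    rw [isBigO_iff]
    refine ⟨2*C₄, ?_⟩
    filter_upwards [Hmain, hneg.eventually F1, hneg.eventually F2,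
      hneg.eventually F7] with x h1 h2 h3 h7
    set t : ℝ := -x with htdef
    have ht : (0:ℝ) < t := by linarith
    have hxneg : x < 0 := by linarith
    have habs : |x| = t := abs_of_neg hxneg
    have hlogt : (1:ℝ) ≤ Real.log t := h3
    have htde : (0:ℝ) < t ^ (d+e) := Real.rpow_pos_of_pos ht _
    have ht2d : (0:ℝ) < t ^ (2*d) := Real.rpow_pos_of_pos ht _
    have htme : (0:ℝ) < t ^ (d-e) := Real.rpow_pos_of_pos ht _
    rw [Real.norm_eq_abs, Real.norm_eq_abs, habs]
    have hq : |x * (1 / t ^ (d+e))| = t / t ^ (d+e) := by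
      rw [abs_mul, habs, abs_of_nonneg (by positivity : (0:ℝ) ≤ 1 / t ^ (d+e))]
      ring
    rw [hq]
    have hsplit : t ^ (2*d) = t ^ (d+e) * t ^ (d-e) := by
      rw [← Real.rpow_add ht]
      congr 1
      ring
    have k3 : t * Real.log t / t ^ (2*d) ≤ t / t ^ (d+e) := by
      rw [div_le_div_iff₀ ht2d htde, hsplit]
      have hstep := mul_le_mul_of_nonneg_left h7
        (show (0:ℝ) ≤ t * t ^ (d+e) by positivity)
      linarith [hstep]
    have k4 : C₄ * (t * Real.log t / t ^ (2*d)) ≤ C₄ * (t / t ^ (d+e)) :=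
      mul_le_mul_of_nonneg_left k3 hC₄.le
    calc |y (g x) - x| ≤ C₄ * (t / t ^ (d+e) + t * Real.log t / t ^ (2*d)) := h1
      _ ≤ 2*C₄ * (t / t ^ (d+e)) := by linarith [k4]
end

section
/- Let a, c, d > 0 and b ∈ ℝ, b ≠ 0, and define y(u) = -{ (-b/(cd)) log( ((cd/|b|)(u/a)^{d/b}) / |log((cd/|b|) u^{d/b})| ) }^{1/d}. Then as u → 0⁺, y(u) = -(-(1/c) log u)^{1/d} [ 1 - (b log|log u|)/(d² log u) - (b log(a^{d/b}/c))/(d² log u) + (b²/(2d³))(1/d - 1)(log|log u|)²/(log u)² + O(log|log u|/|log u|²) ]. -/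
open Filter Topology Asymptotics Real


lemma gg_log_one_add_abs {x : ℝ} (hx : |x| ≤ 1/2) : |Real.log (1+x)| ≤ 2*|x| := by
  have h1 : |(-x)| < 1 := by rw [abs_neg]; linarith
  have := Real.abs_log_sub_add_sum_range_le h1 0
  simp only [Finset.range_zero, Finset.sum_empty, zero_add, sub_neg_eq_add] at this
  rw [abs_neg, pow_one] at this
  have h2 : |x| / (1 - |x|) ≤ 2 * |x| := by
    rw [div_le_iff₀ (by linarith)]
    nlinarith [abs_nonneg x]
  linarith

set_option maxHeartbeats 1000000 in
lemma gg_rpow_taylor (p : ℝ) :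
    (fun x : ℝ => (1+x)^p - (1 + p*x + p*(p-1)/2*x^2)) =O[𝓝 (0:ℝ)]
      (fun x => |x|^3) := by
  have hρ : (0:ℝ) < min (1/4) (1/(2*(|p|+1))) := by positivity
  rw [isBigO_iff]
  refine ⟨8*|p|^3 + 2*|p| + 2*p^2 + 1, ?_⟩
  filter_upwards [Metric.ball_mem_nhds (0:ℝ) hρ] with x hx
  rw [mem_ball_zero_iff, Real.norm_eq_abs] at hx
  have hx4 : |x| ≤ 1/4 := le_of_lt (lt_of_lt_of_le hx (min_le_left _ _))
  have hxp : |p| * |x| ≤ 1/2 := by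
    have h1 : |x| ≤ 1/(2*(|p|+1)) := le_of_lt (lt_of_lt_of_le hx (min_le_right _ _))
    have h2 : |p| * |x| ≤ |p| * (1/(2*(|p|+1))) :=
      mul_le_mul_of_nonneg_left h1 (abs_nonneg p)
    have h3 : |p| * (1/(2*(|p|+1))) ≤ 1/2 := by
      rw [mul_one_div, div_le_div_iff₀ (by positivity) (by norm_num)]
      nlinarith [abs_nonneg p]
    linarith
  have h0 : (0:ℝ) < 1 + x := by
    rcases abs_le.mp hx4 with ⟨h, _⟩; linarith
  set l := Real.log (1+x) with hl
  -- log Taylor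
  have hlr : |l - (x - x^2/2)| ≤ 2*|x|^3 := by
    have h1 : |(-x)| < 1 := by rw [abs_neg]; linarith
    have := Real.abs_log_sub_add_sum_range_le h1 2
    have hsum : (∑ i ∈ Finset.range 2, (-x) ^ (i + 1) / (i + 1)) = -x + x^2/2 := by
      simp [Finset.sum_range_succ]; ring
    rw [hsum, sub_neg_eq_add, abs_neg] at this
    norm_num at this
    have h2 : |x|^3 / (1 - |x|) ≤ 2*|x|^3 := by
      rw [div_le_iff₀ (by linarith)]
      have : (0:ℝ) ≤ |x|^3 := by positivity
      nlinarith
    calc |l - (x - x^2/2)| = |(-x + x^2/2) + Real.log (1 + x)| := by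
            rw [hl]; ring_nf
      _ ≤ |x|^3 / (1-|x|) := this
      _ ≤ 2*|x|^3 := h2
  have hlabs : |l| ≤ 2*|x| := by
    have h1 : |x - x^2/2| ≤ |x| + |x|^2/2 := by
      calc |x - x^2/2| ≤ |x| + |x^2/2| := abs_sub _ _
        _ = |x| + |x|^2/2 := by rw [abs_div, abs_pow]; norm_num
    have h2 : |l| ≤ |x - x^2/2| + 2*|x|^3 := by
      have := abs_sub_abs_le_abs_sub l (x - x^2/2)
      have h3 := hlr
      calc |l| = |(l - (x-x^2/2)) + (x-x^2/2)| := by ring_nf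
        _ ≤ |l - (x-x^2/2)| + |x-x^2/2| := abs_add_le _ _
        _ ≤ 2*|x|^3 + |x-x^2/2| := by linarith
        _ = |x-x^2/2| + 2*|x|^3 := by ring
    nlinarith [abs_nonneg x, sq_abs x]
  set w := l * p with hwdef
  have hw2 : |w| ≤ 2*|p| *|x| := by
    rw [hwdef, abs_mul]
    calc |l| *|p| ≤ (2*|x|)*|p| := mul_le_mul_of_nonneg_right hlabs (abs_nonneg p)
      _ = 2*|p| *|x| := by ring
  have hw1 : |w| ≤ 1 := by linarith
  have hexp := Real.exp_bound hw1 (n := 3) (by norm_num)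
  have hsum3 : (∑ m ∈ Finset.range 3, w^m / (Nat.factorial m)) = 1 + w + w^2/2 := by
    norm_num [Finset.sum_range_succ, Nat.factorial]
  rw [hsum3] at hexp
  have hwc : |w|^3 * ((Nat.succ 3 : ℕ) / ((Nat.factorial 3 : ℕ) * (3:ℕ) : ℝ)) ≤ |w|^3 := by
    have h1 : (0:ℝ) ≤ |w|^3 := by positivity
    have h2 : ((Nat.succ 3 : ℕ) / ((Nat.factorial 3 : ℕ) * (3:ℕ) : ℝ)) ≤ 1 := by
      norm_num [Nat.factorial]
    nlinarith
  have hE1 : |Real.exp w - (1 + w + w^2/2)| ≤ 8*|p|^3*|x|^3 := by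
    have h2 : |w|^3 ≤ (2*|p| *|x|)^3 := by
      exact pow_le_pow_left₀ (abs_nonneg w) hw2 3
    have h3 : (2*|p| *|x|)^3 = 8*|p|^3*|x|^3 := by ring
    calc |Real.exp w - (1 + w + w^2/2)| ≤ |w|^3 * _ := hexp
      _ ≤ |w|^3 := hwc
      _ ≤ _ := by rw [← h3]; exact h2
  have hlx : |l - x| ≤ |x|^2 := by
    have h1 : |l - x| ≤ |l - (x - x^2/2)| + |x^2/2| := by
      calc |l - x| = |(l - (x - x^2/2)) + (-(x^2/2))| := by ring_nf
        _ ≤ |l - (x - x^2/2)| + |(-(x^2/2))| := abs_add_le _ _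
        _ = |l - (x - x^2/2)| + |x^2/2| := by rw [abs_neg]
    have h2 : |x^2/2| = |x|^2/2 := by
      rw [abs_div, abs_pow]; norm_num
    nlinarith [abs_nonneg x]
  have hA : |w - p*x| ≤ |p| * |x|^2 := by
    have : w - p*x = (l - x)*p := by rw [hwdef]; ring
    rw [this, abs_mul]
    calc |l - x| *|p| ≤ |x|^2*|p| := mul_le_mul_of_nonneg_right hlx (abs_nonneg p)
      _ = |p| *|x|^2 := by ring
  have hB : |w + p*x| ≤ 3*|p| *|x| := by
    calc |w + p*x| ≤ |w| + |p*x| := abs_add_le _ _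
      _ ≤ 2*|p| *|x| + |p| *|x| := by
          have hpx : |p*x| = |p| * |x| := abs_mul p x
          rw [hpx]; linarith
      _ = 3*|p| *|x| := by ring
  have hC : |w^2 - p^2*x^2| ≤ 3*p^2*|x|^3 := by
    have h1 : w^2 - p^2*x^2 = (w - p*x)*(w + p*x) := by ring
    rw [h1, abs_mul]
    calc |w - p*x| *|w + p*x| ≤ (|p| *|x|^2)*(3*|p| *|x|) := by
          apply mul_le_mul hA hB (abs_nonneg _) (by positivity)
      _ = 3*p^2*|x|^3 := by rw [← sq_abs p]; ring
  have hrpow : (1+x)^p = Real.exp w := Real.rpow_def_of_pos h0 p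
  have key : Real.exp w - (1 + p*x + p*(p-1)/2*x^2)
      = (Real.exp w - (1+w+w^2/2)) + p*(l - (x - x^2/2)) + (w^2 - p^2*x^2)/2 := by
    rw [hwdef]; ring
  have hpr : |p*(l - (x - x^2/2))| ≤ 2*|p| *|x|^3 := by
    rw [abs_mul]
    calc |p| *|l - (x-x^2/2)| ≤ |p| *(2*|x|^3) :=
          mul_le_mul_of_nonneg_left hlr (abs_nonneg p)
      _ = 2*|p| *|x|^3 := by ring
  rw [Real.norm_eq_abs, Real.norm_eq_abs, hrpow, key]
  have habs3 : |(|x|^3)| = |x|^3 := abs_of_nonneg (by positivity)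
  rw [habs3]
  have h1 : |(Real.exp w - (1+w+w^2/2)) + p*(l - (x - x^2/2)) + (w^2 - p^2*x^2)/2|
      ≤ |Real.exp w - (1+w+w^2/2)| + |p*(l - (x - x^2/2))| + |w^2 - p^2*x^2|/2 := by
    calc _ ≤ |(Real.exp w - (1+w+w^2/2)) + p*(l - (x - x^2/2))| + |(w^2 - p^2*x^2)/2| :=
          abs_add_le _ _
      _ ≤ _ := by
          rw [abs_div]
          have := abs_add_le (Real.exp w - (1+w+w^2/2)) (p*(l - (x - x^2/2)))
          norm_num at this ⊢
          linarith
  linarith [pow_nonneg (abs_nonneg x) 3,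
    mul_nonneg (sq_nonneg p) (pow_nonneg (abs_nonneg x) 3)]



set_option maxHeartbeats 1000000 in
lemma gg_core (b d A B : ℝ) (hd : 0 < d) :
    (fun s : ℝ => (1 + (b/d) * ((Real.log s + B + Real.log (1 - A/s))/s))^(1/d)
      - (1 + b/d^2*((Real.log s + B)/s)
           + (b^2/(2*d^3))*(1/d-1)*((Real.log s)^2/s^2)))
    =O[atTop] (fun s => Real.log s / s^2) := by
  set δ : ℝ → ℝ := fun s => Real.log (1 - A/s) with hδdef
  set ε : ℝ → ℝ := fun s => (b/d) * ((Real.log s + B + δ s)/s) with hεdef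
  have hd0 : d ≠ 0 := ne_of_gt hd
  have hlog : Tendsto Real.log atTop atTop := Real.tendsto_log_atTop
  have ht2 : Tendsto (fun s : ℝ => Real.log s / s) atTop (𝓝 0) :=
    Real.isLittleO_log_id_atTop.tendsto_div_nhds_zero
  have hinv : Tendsto (fun s : ℝ => 1/s) atTop (𝓝 0) := by
    simpa using tendsto_inv_atTop_zero
  have hAs : Tendsto (fun s : ℝ => A/s) atTop (𝓝 0) := by
    have := hinv.const_mul A
    simpa [mul_one_div, div_eq_mul_inv] using this
  have hδ0 : Tendsto δ atTop (𝓝 0) := by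
    have h1 : Tendsto (fun s : ℝ => 1 - A/s) atTop (𝓝 1) := by
      simpa using (tendsto_const_nhds (x := (1:ℝ))).sub hAs
    have h2 : ContinuousAt Real.log 1 := Real.continuousAt_log (by norm_num)
    have := h2.tendsto.comp h1
    simpa [Real.log_one, Function.comp_def, hδdef] using this
  have hε0 : Tendsto ε atTop (𝓝 0) := by
    have h1 : Tendsto (fun s : ℝ => Real.log s / s + B * (1/s) + δ s * (1/s))
        atTop (𝓝 (0 + B * 0 + 0 * 0)) :=
      (ht2.add ((tendsto_const_nhds).mul hinv)).add (hδ0.mul hinv)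
    have h1' : Tendsto (fun s : ℝ => Real.log s / s + B * (1/s) + δ s * (1/s))
        atTop (𝓝 0) := by simpa using h1
    have h2 : Tendsto (fun s : ℝ => (Real.log s + B + δ s)/s) atTop (𝓝 0) :=
      (tendsto_congr (fun s => by ring)).mp h1'
    have := h2.const_mul (b/d)
    simpa [hεdef, mul_zero] using this
  have hsq : Tendsto (fun s : ℝ => (Real.log s)^2 / s) atTop (𝓝 0) := by
    have h12 : Tendsto (fun s : ℝ => Real.log s / s ^ (1/2 : ℝ)) atTop (𝓝 0) :=
      (isLittleO_log_rpow_atTop (by norm_num)).tendsto_div_nhds_zero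
    have h2 : Tendsto (fun s : ℝ => (Real.log s / s ^ (1/2 : ℝ))^2) atTop (𝓝 0) := by
      simpa using h12.pow 2
    apply h2.congr'
    filter_upwards [eventually_gt_atTop (0:ℝ)] with s hs
    rw [div_pow, ← Real.rpow_natCast (s ^ (1/2:ℝ)) 2, ← Real.rpow_mul (le_of_lt hs)]
    norm_num
  obtain ⟨Cp, hCp0, hCpw⟩ := ((gg_rpow_taylor (1/d)).comp_tendsto hε0).exists_nonneg
  have hCp' : ∀ᶠ s : ℝ in atTop,
      |(1 + ε s)^(1/d) - (1 + (1/d)*(ε s) + (1/d)*((1/d)-1)/2*(ε s)^2)| ≤ Cp * |ε s|^3 := by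
    filter_upwards [hCpw.bound] with s hs
    simpa [Real.norm_eq_abs, abs_of_nonneg (by positivity : (0:ℝ) ≤ |ε s|^3)] using hs
  have evδ : ∀ᶠ s : ℝ in atTop, |δ s| ≤ 2*|A|/s := by
    have h3 : ∀ᶠ s : ℝ in atTop, |A/s| ≤ 1/2 := by
      have := Metric.tendsto_nhds.mp hAs (1/2) (by norm_num)
      filter_upwards [this] with s hs
      rw [Real.dist_eq, sub_zero] at hs; exact le_of_lt hs
    filter_upwards [h3, eventually_gt_atTop (0:ℝ)] with s h1 hs0
    have h2 : |(-(A/s))| ≤ 1/2 := by rwa [abs_neg]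
    have hlb := gg_log_one_add_abs h2
    have heq : (1 : ℝ) + -(A/s) = 1 - A/s := by ring
    rw [heq] at hlb
    calc |δ s| ≤ 2*|(-(A/s))| := hlb
      _ = 2*(|A|/s) := by rw [abs_neg, abs_div, abs_of_pos hs0]
      _ = 2*|A|/s := by ring
  have evε : ∀ᶠ s : ℝ in atTop, |ε s| ≤ (3*|b|/d) * (Real.log s / s) := by
    filter_upwards [evδ, hlog.eventually_ge_atTop (|B| + 1),
      eventually_ge_atTop (max 1 (4*|A|))] with s h1 h2 h3
    have hs1 : (1:ℝ) ≤ s := le_trans (le_max_left _ _) h3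
    have hs0 : (0:ℝ) < s := by linarith
    have hδ1 : |δ s| ≤ 1 := by
      have h5 : 2*|A|/s ≤ 1 := by
        rw [div_le_one hs0]
        have := le_trans (le_max_right _ _) h3
        linarith [abs_nonneg A]
      linarith
    have hL1 : (1:ℝ) ≤ Real.log s := by linarith [abs_nonneg B]
    have h4 : |Real.log s + B + δ s| ≤ 3 * Real.log s := by
      have hLabs : |Real.log s| = Real.log s := abs_of_pos (by linarith)
      calc |Real.log s + B + δ s| ≤ |Real.log s + B| + |δ s| := abs_add_le _ _
        _ ≤ |Real.log s| + |B| + |δ s| := by linarith [abs_add_le (Real.log s) B]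
        _ ≤ Real.log s + |B| + 1 := by rw [hLabs]; linarith
        _ ≤ 3 * Real.log s := by linarith
    have heps : |ε s| = (|b|/d) * (|Real.log s + B + δ s| / s) := by
      rw [hεdef]
      simp only []
      rw [abs_mul, abs_div, abs_div, abs_of_pos hd, abs_of_pos hs0]
    rw [heps]
    have hb0 : (0:ℝ) ≤ |b|/d := by positivity
    have hstep : |Real.log s + B + δ s| / s ≤ (3*Real.log s) / s := by
      gcongr
    calc (|b|/d) * (|Real.log s + B + δ s| / s) ≤ (|b|/d) * ((3*Real.log s) / s) :=
          mul_le_mul_of_nonneg_left hstep hb0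
      _ = (3*|b|/d) * (Real.log s / s) := by ring
  -- final assembly
  rw [isBigO_iff]
  refine ⟨Cp*(3*|b|/d)^3 + |b|/d^2*(2*|A|)
    + |(1/d)*((1/d)-1)/2| * ((|b|/d)*(|B|+1)) * (4*|b|/d), ?_⟩
  have hev1 : ∀ᶠ s : ℝ in atTop, (Real.log s)^2/s ≤ 1 :=
    hsq.eventually (eventually_le_nhds one_pos)
  filter_upwards [hCp', evδ, evε, hlog.eventually_ge_atTop 1,
    eventually_ge_atTop (1:ℝ), hev1, eventually_ge_atTop (2*|A|)] with s h1 h2 h3 hL1 hs1 h6 hs2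
  have hs0 : (0:ℝ) < s := by linarith
  set L := Real.log s with hLdef
  have hL0 : (0:ℝ) ≤ L := by linarith
  have hεs : ε s = (b/d)*((L + B + δ s)/s) := rfl
  set T1 : ℝ := (1 + ε s)^(1/d) - (1 + (1/d)*(ε s) + (1/d)*((1/d)-1)/2*(ε s)^2) with hT1
  set T2 : ℝ := b/d^2*(δ s/s) with hT2
  set T3 : ℝ := (1/d)*((1/d)-1)/2*(ε s)^2 - (b^2/(2*d^3))*(1/d-1)*(L^2/s^2) with hT3
  have hdec : (1 + ε s)^(1/d) - (1 + b/d^2*((L + B)/s)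
      + (b^2/(2*d^3))*(1/d-1)*(L^2/s^2)) = T1 + T2 + T3 := by
    rw [hT1, hT2, hT3, hεs]; ring
  -- bound on T1
  have hbT1 : |T1| ≤ (Cp*(3*|b|/d)^3) * (L/s^2) := by
    have hεb : |ε s| ≤ (3*|b|/d)*(L/s) := h3
    have hc1 : |ε s|^3 ≤ ((3*|b|/d)*(L/s))^3 :=
      pow_le_pow_left₀ (abs_nonneg _) hεb 3
    have hc2 : ((3*|b|/d)*(L/s))^3 = (3*|b|/d)^3 * ((L^2/s)*(L/s^2)) := by ring
    have hc3 : (L^2/s)*(L/s^2) ≤ L/s^2 := by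
      apply mul_le_of_le_one_left (div_nonneg hL0 (by positivity)) h6
    calc |T1| ≤ Cp * |ε s|^3 := h1
      _ ≤ Cp * ((3*|b|/d)^3 * ((L^2/s)*(L/s^2))) := by
          rw [← hc2]; exact mul_le_mul_of_nonneg_left hc1 hCp0
      _ ≤ Cp * ((3*|b|/d)^3 * (L/s^2)) := by
          apply mul_le_mul_of_nonneg_left _ hCp0
          exact mul_le_mul_of_nonneg_left hc3 (by positivity)
      _ = (Cp*(3*|b|/d)^3) * (L/s^2) := by ring
  -- bound on T2
  have hbT2 : |T2| ≤ (|b|/d^2*(2*|A|)) * (L/s^2) := by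
    have e1 : |T2| = (|b|/d^2) * (|δ s|/s) := by
      rw [hT2, abs_mul, abs_div, abs_div, abs_of_pos (by positivity : (0:ℝ) < d^2),
        abs_of_pos hs0]
    rw [e1]
    have e2 : |δ s|/s ≤ (2*|A|/s)/s := by gcongr
    calc (|b|/d^2) * (|δ s|/s) ≤ (|b|/d^2) * ((2*|A|/s)/s) :=
          mul_le_mul_of_nonneg_left e2 (by positivity)
      _ = (|b|/d^2*(2*|A|)) * (1/s^2) := by ring
      _ ≤ (|b|/d^2*(2*|A|)) * (L/s^2) := by
          apply mul_le_mul_of_nonneg_left _ (by positivity)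
          gcongr
  -- bound on T3
  have hbT3 : |T3| ≤ (|(1/d)*((1/d)-1)/2| * ((|b|/d)*(|B|+1)) * (4*|b|/d)) * (L/s^2) := by
    have hδ1 : |δ s| ≤ 1 := by
      have h7 : 2*|A|/s ≤ 1 := by
        rw [div_le_one hs0]; linarith
      linarith
    have e1 : ε s - (b/d)*(L/s) = (b/d)*((B + δ s)/s) := by rw [hεs]; ring
    have e2 : T3 = ((1/d)*((1/d)-1)/2) *
        ((ε s - (b/d)*(L/s)) * (ε s + (b/d)*(L/s))) := by
      rw [hT3]; ring
    have e3 : |ε s - (b/d)*(L/s)| ≤ (|b|/d)*((|B|+1)/s) := by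
      rw [e1]
      have e3a : |(b/d)*((B + δ s)/s)| = (|b|/d)*(|B + δ s|/s) := by
        rw [abs_mul, abs_div, abs_div, abs_of_pos hd, abs_of_pos hs0]
      rw [e3a]
      have e3b : |B + δ s| ≤ |B| + 1 := by
        have := abs_add_le B (δ s); linarith
      apply mul_le_mul_of_nonneg_left _ (by positivity)
      gcongr
    have e4 : |ε s + (b/d)*(L/s)| ≤ (4*|b|/d)*(L/s) := by
      have h8 : |(b/d)*(L/s)| = (|b|/d)*(L/s) := by
        rw [abs_mul, abs_div, abs_div, abs_of_pos hd, abs_of_pos hs0, abs_of_nonneg hL0]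
      calc |ε s + (b/d)*(L/s)| ≤ |ε s| + |(b/d)*(L/s)| := abs_add_le _ _
        _ ≤ (3*|b|/d)*(L/s) + (|b|/d)*(L/s) := by rw [h8]; linarith
        _ = (4*|b|/d)*(L/s) := by ring
    rw [e2, abs_mul, abs_mul]
    calc |(1/d)*((1/d)-1)/2| * (|ε s - (b/d)*(L/s)| * |ε s + (b/d)*(L/s)|)
        ≤ |(1/d)*((1/d)-1)/2| * (((|b|/d)*((|B|+1)/s)) * ((4*|b|/d)*(L/s))) := by
          apply mul_le_mul_of_nonneg_left _ (abs_nonneg _)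
          apply mul_le_mul e3 e4 (abs_nonneg _) (by positivity)
      _ = (|(1/d)*((1/d)-1)/2| * ((|b|/d)*(|B|+1)) * (4*|b|/d)) * (L/s^2) := by ring
  -- combine
  simp only [Real.norm_eq_abs]
  have habs : |T1 + T2 + T3| ≤ |T1| + |T2| + |T3| := by
    have q1 := abs_add_le (T1 + T2) T3
    have q2 := abs_add_le T1 T2
    linarith
  have hnormg : |L/s^2| = L/s^2 := abs_of_nonneg (div_nonneg hL0 (by positivity))
  rw [hdec, hnormg]
  linarith



lemma gg_eps_tendsto (b d A B : ℝ) :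
    Tendsto (fun s : ℝ => (b/d) * ((Real.log s + B + Real.log (1 - A/s))/s))
      atTop (𝓝 0) := by
  have ht2 : Tendsto (fun s : ℝ => Real.log s / s) atTop (𝓝 0) :=
    Real.isLittleO_log_id_atTop.tendsto_div_nhds_zero
  have hinv : Tendsto (fun s : ℝ => 1/s) atTop (𝓝 0) := by
    simpa using tendsto_inv_atTop_zero
  have hAs : Tendsto (fun s : ℝ => A/s) atTop (𝓝 0) := by
    have := hinv.const_mul A
    simpa [mul_one_div, div_eq_mul_inv] using this
  have hδ0 : Tendsto (fun s : ℝ => Real.log (1 - A/s)) atTop (𝓝 0) := by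
    have h1 : Tendsto (fun s : ℝ => 1 - A/s) atTop (𝓝 1) := by
      simpa using (tendsto_const_nhds (x := (1:ℝ))).sub hAs
    have h2 : ContinuousAt Real.log 1 := Real.continuousAt_log (by norm_num)
    have := h2.tendsto.comp h1
    simpa [Real.log_one, Function.comp_def] using this
  have h1 : Tendsto (fun s : ℝ => Real.log s / s + B * (1/s) + Real.log (1 - A/s) * (1/s))
      atTop (𝓝 (0 + B * 0 + 0 * 0)) :=
    (ht2.add ((tendsto_const_nhds).mul hinv)).add (hδ0.mul hinv)
  have h1' : Tendsto (fun s : ℝ => Real.log s / s + B * (1/s) + Real.log (1 - A/s) * (1/s))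
      atTop (𝓝 0) := by simpa using h1
  have h2 : Tendsto (fun s : ℝ => (Real.log s + B + Real.log (1 - A/s))/s) atTop (𝓝 0) :=
    (tendsto_congr (fun s => by ring)).mp h1'
  have := h2.const_mul (b/d)
  simpa [mul_zero] using this

set_option maxHeartbeats 1600000

/-- Asymptotic expansion of the closed-form quantile approximation y(u) for
Generalised Gamma-type tails. -/
theorem gg_y_expansion
    (y : ℝ → ℝ) (a b c d : ℝ)
    (ha : 0 < a) (hc : 0 < c) (hd : 0 < d) (hb : b ≠ 0)
    (hy : ∀ u, y u =
      -((-b / (c * d)) *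
        Real.log ((c * d / |b| * (u / a) ^ (d / b)) /
          |Real.log (c * d / |b| * u ^ (d / b))|)) ^ (1 / d)) :
    (fun u => y u -
      (-(-(1 / c) * Real.log u) ^ (1 / d) *
        (1 - b * Real.log |Real.log u| / (d ^ 2 * Real.log u)
           - b * Real.log (a ^ (d / b) / c) / (d ^ 2 * Real.log u)
           + (b ^ 2 / (2 * d ^ 3)) * (1 / d - 1) *
               (Real.log |Real.log u|) ^ 2 / (Real.log u) ^ 2)))
      =O[𝓝[>] (0:ℝ)]
    (fun u => (-(1 / c) * Real.log u) ^ (1 / d) *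
      (Real.log |Real.log u| / |Real.log u| ^ 2)) := by
  have hd0 : d ≠ 0 := ne_of_gt hd
  have hc0 : c ≠ 0 := ne_of_gt hc
  have hb0 : (0:ℝ) < |b| := abs_pos.mpr hb
  have hcore' := gg_core b d (b * Real.log (c*d/|b|) / d) (Real.log (a ^ (d/b) / c)) hd
  have hεt' := gg_eps_tendsto b d (b * Real.log (c*d/|b|) / d) (Real.log (a ^ (d/b) / c))
  set C0 : ℝ := Real.log (c*d/|b|) with hC0
  set A : ℝ := b*C0/d with hA
  set B : ℝ := Real.log (a ^ (d/b) / c) with hBdef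
  set δ : ℝ → ℝ := fun s => Real.log (1 - A/s) with hδdef
  set ε : ℝ → ℝ := fun s => (b/d) * ((Real.log s + B + δ s)/s) with hεdef
  set E : ℝ → ℝ := fun s =>
      (1 + ε s)^(1/d) - (1 + b/d^2*((Real.log s + B)/s)
        + (b^2/(2*d^3))*(1/d-1)*((Real.log s)^2/s^2)) with hEdef
  set g : ℝ → ℝ := fun s => (s/c)^((1:ℝ)/d) with hgdef
  have hcore : E =O[atTop] (fun s => Real.log s/s^2) := hcore'
  have hεt : Tendsto ε atTop (𝓝 0) := hεt'
  set φ : ℝ → ℝ := fun u => -Real.log u with hφdef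
  have hφ : Tendsto φ (𝓝[>] (0:ℝ)) atTop := by
    have h1 := Real.tendsto_log_nhdsGT_zero
    exact tendsto_neg_atBot_atTop.comp h1
  have hBval : B = (d/b)*Real.log a - Real.log c := by
    rw [hBdef, Real.log_div (ne_of_gt (Real.rpow_pos_of_pos ha _)) hc0, Real.log_rpow ha]
  have hsplit : C0 = Real.log c + Real.log (d/|b|) := by
    rw [hC0, show c*d/|b| = c*(d/|b|) from (mul_div_assoc c d |b|),
      Real.log_mul hc0 (ne_of_gt (by positivity))]
  -- eventual facts
  have e1 : ∀ᶠ u in 𝓝[>] (0:ℝ), 1 ≤ φ u := hφ.eventually (eventually_ge_atTop 1)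
  have e2 : ∀ᶠ u in 𝓝[>] (0:ℝ), |A/(φ u)| ≤ 1/2 := by
    have hat : ∀ᶠ s : ℝ in atTop, |A/s| ≤ 1/2 := by
      have hinv : Tendsto (fun s : ℝ => 1/s) atTop (𝓝 0) := by
        simpa using tendsto_inv_atTop_zero
      have hAs : Tendsto (fun s : ℝ => A/s) atTop (𝓝 0) := by
        have := hinv.const_mul A
        simpa [mul_one_div, div_eq_mul_inv] using this
      have := Metric.tendsto_nhds.mp hAs (1/2) (by norm_num)
      filter_upwards [this] with s hs
      rw [Real.dist_eq, sub_zero] at hs; exact le_of_lt hs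
    exact hφ.eventually hat
  have e3 : ∀ᶠ u in 𝓝[>] (0:ℝ), |ε (φ u)| ≤ 1/2 := by
    have hat : ∀ᶠ s : ℝ in atTop, |ε s| ≤ 1/2 := by
      have := Metric.tendsto_nhds.mp hεt (1/2) (by norm_num)
      filter_upwards [this] with s hs
      rw [Real.dist_eq, sub_zero] at hs; exact le_of_lt hs
    exact hφ.eventually hat
  -- main eventual equality
  have evA : ∀ᶠ u in 𝓝[>] (0:ℝ),
      y u -
      (-(-(1 / c) * Real.log u) ^ (1 / d) *
        (1 - b * Real.log |Real.log u| / (d ^ 2 * Real.log u)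
           - b * B / (d ^ 2 * Real.log u)
           + (b ^ 2 / (2 * d ^ 3)) * (1 / d - 1) *
               (Real.log |Real.log u|) ^ 2 / (Real.log u) ^ 2))
      = -(g (φ u) * E (φ u)) := by
    filter_upwards [e1, e2, e3, self_mem_nhdsWithin] with u h1 h2 h3 hu
    have hu0 : (0:ℝ) < u := hu
    have hs0 : (0:ℝ) < φ u := by linarith
    have hsne : φ u ≠ 0 := ne_of_gt hs0
    have hlogu : Real.log u = -(φ u) := by simp [hφdef]
    have h1mA : (0:ℝ) < 1 - A/(φ u) := by
      have := abs_le.mp h2; linarith [this.1, this.2]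
    have h1pε : (0:ℝ) < 1 + ε (φ u) := by
      have := abs_le.mp h3; linarith [this.1, this.2]
    have hlog_inner : Real.log (c*d/|b| * u^(d/b)) = C0 + (d/b)*Real.log u := by
      rw [Real.log_mul (by positivity) (ne_of_gt (Real.rpow_pos_of_pos hu0 _)),
        Real.log_rpow hu0, ← hC0]
    have habs_inner : |Real.log (c*d/|b| * u^(d/b))| = (d/|b|) * φ u * (1 - A/(φ u)) := by
      rw [hlog_inner, hlogu]
      have key : C0 + (d/b)*(-(φ u)) = (-(d/b)*(φ u))*(1 - A/(φ u)) := by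
        rw [hA]; field_simp; ring
      rw [key, abs_mul, abs_mul, abs_neg, abs_div, abs_of_pos hd,
        abs_of_pos hs0, abs_of_pos h1mA]
    have habs_ne : |Real.log (c*d/|b| * u^(d/b))| ≠ 0 := by
      rw [habs_inner]
      exact ne_of_gt (mul_pos (mul_pos (div_pos hd hb0) hs0) h1mA)
    have hlogabs : Real.log |Real.log (c*d/|b| * u^(d/b))|
        = Real.log (d/|b|) + Real.log (φ u) + δ (φ u) := by
      rw [habs_inner, Real.log_mul (ne_of_gt (mul_pos (div_pos hd hb0) hs0)) (ne_of_gt h1mA),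
        Real.log_mul (ne_of_gt (div_pos hd hb0)) hsne]
    have hnum_ne : c*d/|b| * (u/a)^(d/b) ≠ 0 := by positivity
    have hlognum : Real.log (c*d/|b| * (u/a)^(d/b)) = C0 + (d/b)*(Real.log u - Real.log a) := by
      rw [Real.log_mul (by positivity) (ne_of_gt (Real.rpow_pos_of_pos (by positivity) _)),
        Real.log_rpow (by positivity), Real.log_div (ne_of_gt hu0) (ne_of_gt ha), ← hC0]
    have hX : (-b/(c*d)) * Real.log ((c*d/|b| * (u/a)^(d/b)) / |Real.log (c*d/|b| * u^(d/b))|)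
        = (φ u/c) * (1 + ε (φ u)) := by
      rw [Real.log_div hnum_ne habs_ne, hlognum, hlogabs, hlogu]
      have hεval : ε (φ u) = (b/d)*((Real.log (φ u) + B + δ (φ u))/(φ u)) := rfl
      rw [hεval, hBval, hsplit]
      field_simp
      ring
    have hyu : y u = -(g (φ u) * (1 + ε (φ u))^(1/d)) := by
      rw [hy u, hX, Real.mul_rpow (div_nonneg (le_of_lt hs0) (le_of_lt hc)) (le_of_lt h1pε)]
    have hbase : -(1/c) * Real.log u = φ u / c := by rw [hlogu]; ring
    have habslog : |Real.log u| = φ u := by rw [hlogu, abs_neg, abs_of_pos hs0]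
    have hmain : -(-(1 / c) * Real.log u) ^ (1 / d) *
        (1 - b * Real.log |Real.log u| / (d ^ 2 * Real.log u)
           - b * B / (d ^ 2 * Real.log u)
           + (b ^ 2 / (2 * d ^ 3)) * (1 / d - 1) *
               (Real.log |Real.log u|) ^ 2 / (Real.log u) ^ 2)
        = -(g (φ u) * (1 + b/d^2*((Real.log (φ u) + B)/(φ u))
            + (b^2/(2*d^3))*(1/d-1)*((Real.log (φ u))^2/(φ u)^2))) := by
      rw [habslog, hbase, hlogu]
      have hg' : g (φ u) = (φ u/c)^((1:ℝ)/d) := rfl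
      rw [hg', neg_mul, neg_inj]
      congr 1
      field_simp
      ring
    rw [hyu, hmain]
    have hEval : E (φ u) = (1 + ε (φ u))^(1/d) - (1 + b/d^2*((Real.log (φ u) + B)/(φ u))
        + (b^2/(2*d^3))*(1/d-1)*((Real.log (φ u))^2/(φ u)^2)) := rfl
    rw [hEval]
    ring
  have evB : ∀ᶠ u in 𝓝[>] (0:ℝ),
      (-(1 / c) * Real.log u) ^ (1 / d) * (Real.log |Real.log u| / |Real.log u| ^ 2)
      = g (φ u) * (Real.log (φ u) / (φ u)^2) := by
    filter_upwards [e1, self_mem_nhdsWithin] with u h1 hu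
    have hs0 : (0:ℝ) < φ u := by linarith
    have hlogu : Real.log u = -(φ u) := by simp [hφdef]
    have hbase : -(1/c) * Real.log u = φ u / c := by rw [hlogu]; ring
    have habslog : |Real.log u| = φ u := by rw [hlogu, abs_neg, abs_of_pos hs0]
    rw [habslog, hbase]
  have hO : (fun u => -(g (φ u) * E (φ u))) =O[𝓝[>] (0:ℝ)]
      (fun u => g (φ u) * (Real.log (φ u) / (φ u)^2)) := by
    have h1 : (fun u => E (φ u)) =O[𝓝[>] (0:ℝ)] (fun u => Real.log (φ u) / (φ u)^2) :=
      hcore.comp_tendsto hφ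
    exact ((isBigO_refl (fun u => g (φ u)) _).mul h1).neg_left
  exact hO.congr' (evA.mono fun u h => h.symm) (evB.mono fun u h => h.symm)
end

section
/- Let Φ denote the standard Normal cdf. Then Φ^{-1}(u) = y(u)(1 + O(log|log u|/(log u)²)) as u → 0⁺, where y(u) = -√(-2 log(u √(4π|log u|))). -/
set_option maxHeartbeats 1000000

open Filter Topology Asymptotics Real MeasureTheory

namespace NormalQuantileAux
open Set

lemma sq_tendsto : Tendsto (fun t : ℝ => t^2) atBot atTop := by
  rw [tendsto_atBot_atTop]
  intro b
  refine ⟨-(|b|+1), fun a ha => ?_⟩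
  have h1 : |b| + 1 ≤ -a := by linarith
  have h2 : b ≤ |b| := le_abs_self b
  nlinarith [abs_nonneg b]

lemma gauss_deriv (t : ℝ) : HasDerivAt (fun s : ℝ => Real.exp (-s^2/2)) (Real.exp (-t^2/2) * (-t)) t := by
  have h0 : HasDerivAt (fun s : ℝ => s^2) (2*t) t := by simpa using hasDerivAt_pow 2 t
  have h1 : HasDerivAt (fun s : ℝ => -s^2/2) (-t) t := by
    have := (h0.neg).div_const 2
    refine this.congr_deriv ?_
    ring
  exact h1.exp

lemma gauss_tendsto : Tendsto (fun t : ℝ => Real.exp (-t^2/2)) atBot (𝓝 0) := by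
  apply Real.tendsto_exp_atBot.comp
  have := tendsto_neg_atTop_atBot.comp sq_tendsto
  have h2 := this.atBot_div_const (by norm_num : (0:ℝ) < 2)
  simpa [Function.comp, neg_div] using h2

lemma gauss_int : Integrable (fun t : ℝ => Real.exp (-t^2/2)) := by
  have := integrable_exp_neg_mul_sq (b := (1/2:ℝ)) (by norm_num)
  apply this.congr
  filter_upwards with t
  rw [show (-(1/2) * t^2 : ℝ) = -t^2/2 by ring]

lemma mul_gauss_int : Integrable (fun t : ℝ => Real.exp (-t^2/2) * (-t)) := by
  have := (integrable_mul_exp_neg_mul_sq (b := (1/2:ℝ)) (by norm_num)).neg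
  apply this.congr
  filter_upwards with t
  simp only [Pi.neg_apply]
  rw [show (-(1/2) * t^2 : ℝ) = -t^2/2 by ring]
  ring

lemma ftc_gauss (x : ℝ) : ∫ t in Iic x, Real.exp (-t^2/2) * (-t) = Real.exp (-x^2/2) := by
  have := integral_Iic_of_hasDerivAt_of_tendsto' (f := fun s : ℝ => Real.exp (-s^2/2))
    (a := x) (m := 0) (fun t _ => gauss_deriv t) mul_gauss_int.integrableOn gauss_tendsto
  simpa using this
lemma tail_ub {x : ℝ} (hx : x < 0) :
    ∫ t in Iic x, Real.exp (-t^2/2) ≤ Real.exp (-x^2/2) / (-x) := by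
  have hxpos : (0:ℝ) < -x := by linarith
  have h : ∫ t in Iic x, Real.exp (-t^2/2) ≤ ∫ t in Iic x, Real.exp (-t^2/2) * (-t) / (-x) := by
    apply setIntegral_mono_on gauss_int.integrableOn
      (mul_gauss_int.div_const (-x)).integrableOn measurableSet_Iic
    intro t ht
    rw [mul_div_assoc]
    have h1 : (1:ℝ) ≤ (-t)/(-x) := (one_le_div hxpos).2 (by simpa using ht.out)
    nlinarith [Real.exp_nonneg (-t^2/2)]
  calc ∫ t in Iic x, Real.exp (-t^2/2) ≤ ∫ t in Iic x, Real.exp (-t^2/2) * (-t) / (-x) := h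
    _ = (∫ t in Iic x, Real.exp (-t^2/2) * (-t)) / (-x) := integral_div _ _
    _ = Real.exp (-x^2/2) / (-x) := by rw [ftc_gauss]

lemma inv_gauss_deriv {t : ℝ} (ht : t ≠ 0) :
    HasDerivAt (fun s : ℝ => -(Real.exp (-s^2/2)/s)) (Real.exp (-t^2/2)*(t^2+1)/t^2) t := by
  have h := ((gauss_deriv t).div (hasDerivAt_id t) ht).neg
  refine h.congr_deriv ?_
  simp only [id]
  field_simp
  ring

lemma inv_gauss_int {x : ℝ} (hx : x < 0) :
    IntegrableOn (fun t : ℝ => Real.exp (-t^2/2)*(t^2+1)/t^2) (Iic x) := by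
  have hx2 : (0:ℝ) < x^2 := by nlinarith
  apply Integrable.mono ((gauss_int.mul_const ((x^2+1)/x^2)).integrableOn)
  · apply Measurable.aestronglyMeasurable
    fun_prop
  · rw [ae_restrict_iff' measurableSet_Iic]
    apply ae_of_all
    intro t ht
    have htx : t ≤ x := ht
    have ht2 : x^2 ≤ t^2 := by nlinarith
    have ht2' : (0:ℝ) < t^2 := by nlinarith
    rw [Real.norm_eq_abs, Real.norm_eq_abs, abs_of_nonneg (by positivity), abs_of_nonneg (by positivity)]
    rw [mul_div_assoc]
    apply mul_le_mul_of_nonneg_left _ (Real.exp_nonneg _)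
    rw [div_le_div_iff₀ ht2' hx2]
    nlinarith

lemma ftc_inv_gauss {x : ℝ} (hx : x < 0) :
    ∫ t in Iic x, Real.exp (-t^2/2)*(t^2+1)/t^2 = Real.exp (-x^2/2)/(-x) := by
  have h := integral_Iic_of_hasDerivAt_of_tendsto' (f := fun s : ℝ => -(Real.exp (-s^2/2)/s))
    (a := x) (m := 0) (fun t htx => inv_gauss_deriv (by rintro rfl; exact absurd htx.out (by simpa using hx.not_ge)))
    (inv_gauss_int hx) ?_
  · rw [h]
    simp only [sub_zero]
    ring
  · have hinv : Tendsto (fun t : ℝ => t⁻¹) atBot (𝓝 (0:ℝ)) := by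
      have h0 : Tendsto (fun t : ℝ => ((-t)⁻¹ : ℝ)) atBot (𝓝 (0:ℝ)) :=
        (tendsto_inv_atTop_zero (𝕜 := ℝ)).comp tendsto_neg_atBot_atTop
      have h1 := h0.neg
      rw [neg_zero] at h1
      apply h1.congr
      intro t
      rw [inv_neg, neg_neg]
    have h2 : Tendsto (fun t : ℝ => Real.exp (-t^2/2) * t⁻¹) atBot (𝓝 0) := by
      simpa using gauss_tendsto.mul hinv
    have := h2.neg
    simp only [neg_zero] at this
    apply this.congr
    intro t
    ring

lemma tail_lb {x : ℝ} (hx : x < 0) :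
    Real.exp (-x^2/2) * (-x) / (x^2+1) ≤ ∫ t in Iic x, Real.exp (-t^2/2) := by
  have hx2 : (0:ℝ) < x^2 := by nlinarith
  have h : ∫ t in Iic x, Real.exp (-t^2/2)*(t^2+1)/t^2
      ≤ ∫ t in Iic x, Real.exp (-t^2/2) * ((x^2+1)/x^2) := by
    apply setIntegral_mono_on (inv_gauss_int hx)
      ((gauss_int.mul_const _).integrableOn) measurableSet_Iic
    intro t ht
    have htx : t ≤ x := ht
    have ht2 : x^2 ≤ t^2 := by nlinarith
    have ht2' : (0:ℝ) < t^2 := by nlinarith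
    rw [mul_div_assoc]
    apply mul_le_mul_of_nonneg_left _ (Real.exp_nonneg _)
    rw [div_le_div_iff₀ ht2' hx2]
    nlinarith
  rw [ftc_inv_gauss hx, integral_mul_const] at h
  set I := ∫ t in Iic x, Real.exp (-t^2/2) with hI
  set E := Real.exp (-x^2/2) with hEdef
  have hxpos : (0:ℝ) < -x := by linarith
  have h4 : E * x^2 ≤ I * (x^2+1) * (-x) := by
    rw [div_le_iff₀ hxpos] at h
    calc E * x^2 ≤ I * ((x^2+1)/x^2) * -x * x^2 :=
          mul_le_mul_of_nonneg_right h hx2.le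
      _ = I * (x^2+1) * (-x) := by field_simp; try ring
  rw [div_le_iff₀ (by positivity : (0:ℝ) < x^2+1)]
  nlinarith [h4, hxpos]

lemma key {x A : ℝ} (hx : x ≤ -1) (hA : 100 ≤ A)
    (hU : x^2/2 + Real.log (-x) + Real.log (Real.sqrt (2*Real.pi)) ≤ A)
    (hL : A ≤ x^2/2 + Real.log (-x) + Real.log (Real.sqrt (2*Real.pi)) + 1/x^2) :
    |x - (-Real.sqrt (2*A - Real.log (4*Real.pi*A)))| ≤
      6 * |(-Real.sqrt (2*A - Real.log (4*Real.pi*A))) * (Real.log A / A^2)| := by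
  have hxpos : (0:ℝ) < -x := by linarith
  have hx2 : (1:ℝ) ≤ x^2 := by nlinarith
  have hx2pos : (0:ℝ) < x^2 := by linarith
  have hApos : (0:ℝ) < A := by linarith
  have hpi3 : (3:ℝ) < Real.pi := Real.pi_gt_three
  have hpi315 : Real.pi < 3.15 := Real.pi_lt_d2
  have hlp : Real.log (Real.sqrt (2*Real.pi)) = Real.log (2*Real.pi) / 2 :=
    Real.log_sqrt (by positivity)
  have hexp1 : (2.7182818283:ℝ) < Real.exp 1 := Real.exp_one_gt_d9
  have hl2pi_le : Real.log (2*Real.pi) ≤ 2 := by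
    rw [Real.log_le_iff_le_exp (by positivity)]
    have h2 : Real.exp 2 = Real.exp 1 * Real.exp 1 := by rw [← Real.exp_add]; norm_num
    nlinarith
  have hl2pi_ge : 0 ≤ Real.log (2*Real.pi) := Real.log_nonneg (by nlinarith)
  have hlx2 : Real.log (x^2) = 2 * Real.log (-x) := by
    rw [show x^2 = (-x)^2 by ring, Real.log_pow]
    push_cast; ring
  have hlxnn : 0 ≤ Real.log (-x) := Real.log_nonneg (by linarith)
  have hexp1' : Real.exp 1 < 2.7182818286 := Real.exp_one_lt_d9
  have hlogA1 : 1 ≤ Real.log A := by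
    rw [Real.le_log_iff_exp_le (by positivity)]
    calc Real.exp 1 ≤ 3 := by linarith
      _ ≤ A := by linarith
  have hlog2 : Real.log 2 < 0.6931471808 := Real.log_two_lt_d9
  have hlogA8 : Real.log A ≤ A/8 + 2 := by
    have h1 : Real.log A = Real.log (A/8) + Real.log 8 := by
      rw [← Real.log_mul (by positivity) (by norm_num)]
      norm_num
    have h2 : Real.log (A/8) ≤ A/8 - 1 := Real.log_le_sub_one_of_pos (by positivity)
    have h3 : Real.log 8 = 3 * Real.log 2 := by
      rw [show (8:ℝ) = 2^3 by norm_num, Real.log_pow]; push_cast; ring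
    have hlog2 : Real.log 2 < 0.6931471808 := Real.log_two_lt_d9
    linarith
  have hlog2A : Real.log (2*A) = Real.log 2 + Real.log A := Real.log_mul two_ne_zero (by positivity)
  have hlog2Ale : Real.log (2*A) ≤ Real.log A + 1 := by rw [hlog2A]; linarith
  -- x^2 bounds
  have hx2le : x^2 ≤ 2*A := by linarith
  have hlogx2le : Real.log (x^2) ≤ Real.log (2*A) := Real.log_le_log (by positivity) hx2le
  have hinvx2le1 : 1/x^2 ≤ 1 := by rw [div_le_one hx2pos]; linarith
  have h2x2 : 2/x^2 = 2*(1/x^2) := by ring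
  have hx2ge : (3/2)*A ≤ x^2 := by linarith
  -- D := log(2A) - log(x^2) bounds
  have hD0 : 0 ≤ Real.log (2*A) - Real.log (x^2) := by linarith
  have hnumnn : 0 ≤ 2*A - x^2 := by linarith
  have hnum : 2*A - x^2 ≤ 6 * Real.log A := by linarith
  have hD : Real.log (2*A) - Real.log (x^2) ≤ 4 * Real.log A / A := by
    have e1 : Real.log (2*A) - Real.log (x^2) = Real.log ((2*A)/x^2) :=
      (Real.log_div (by positivity) (by positivity)).symm
    have e2 : Real.log ((2*A)/x^2) ≤ (2*A)/x^2 - 1 := Real.log_le_sub_one_of_pos (by positivity)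
    have e3 : (2*A)/x^2 - 1 = (2*A - x^2)/x^2 := by rw [sub_div, div_self (ne_of_gt hx2pos)]
    have e4 : (2*A - x^2)/x^2 ≤ (6*Real.log A)/((3/2)*A) :=
      div_le_div₀ (by positivity) hnum (by positivity) hx2ge
    have e5 : (6*Real.log A)/((3/2)*A) = 4 * Real.log A / A := by
      rw [div_eq_div_iff (by positivity) (by positivity)]; ring
    linarith
  -- w = y^2
  have hlog4piA : Real.log (4*Real.pi*A) = Real.log (2*Real.pi) + Real.log (2*A) := by
    rw [show (4*Real.pi*A) = (2*Real.pi)*(2*A) by ring,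
      Real.log_mul (by positivity) (by positivity)]
  set w := 2*A - Real.log (4*Real.pi*A) with hw
  have hlog2nn : (0:ℝ) ≤ Real.log 2 := Real.log_nonneg (by norm_num)
  have hwge : A ≤ w := by rw [hw, hlog4piA]; linarith
  have hwle : w ≤ 2*A := by rw [hw, hlog4piA]; linarith
  have hwpos : (0:ℝ) < w := by linarith
  set y := -Real.sqrt w with hy
  have hynonpos : y ≤ 0 := by rw [hy]; simp [Real.sqrt_nonneg]
  have hy2 : y^2 = w := by rw [hy, neg_pow, Real.sq_sqrt hwpos.le]; ring
  have hyA : Real.sqrt A ≤ -y := by rw [hy, neg_neg]; exact Real.sqrt_le_sqrt hwge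
  have hsA : (10:ℝ) ≤ Real.sqrt A := by
    rw [show (10:ℝ) = Real.sqrt 100 by rw [show (100:ℝ) = 10^2 by norm_num, Real.sqrt_sq]; norm_num]
    exact Real.sqrt_le_sqrt hA
  have hypos : (0:ℝ) < -y := by linarith
  -- |x^2 - y^2| ≤ 4 log A / A
  have hxinv : 2/x^2 ≤ 4*Real.log A/A := by
    have h1 : 2/x^2 ≤ 2/((3/2)*A) :=
      div_le_div_of_nonneg_left (by norm_num) (by positivity) hx2ge
    have h2 : 2/((3/2)*A) ≤ 4*Real.log A/A := by
      rw [div_le_div_iff₀ (by positivity) (by positivity)]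
      have hm : 1*A ≤ Real.log A * A := mul_le_mul_of_nonneg_right hlogA1 (by positivity)
      linarith [hm]
    linarith
  have h2x2 : 2/x^2 = 2*(1/x^2) := by ring
  have hxy2 : |x^2 - y^2| ≤ 4 * Real.log A / A := by
    rw [abs_le]
    constructor
    · rw [hy2, hw, hlog4piA]
      linarith
    · rw [hy2, hw, hlog4piA]
      linarith
  -- combine
  have hxyprod : |x - y| * (-y) ≤ |x^2 - y^2| := by
    have habs : |x^2 - y^2| = |x - y| * |x + y| := by
      rw [← abs_mul]; congr 1; ring
    have hsum : |x + y| = -(x+y) := abs_of_neg (by linarith)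
    rw [habs, hsum]
    apply mul_le_mul_of_nonneg_left _ (abs_nonneg _)
    linarith
  have hstep : |x - y| ≤ (4 * Real.log A / A) / (-y) := by
    rw [le_div_iff₀ hypos]
    calc |x - y| * (-y) ≤ |x^2 - y^2| := hxyprod
      _ ≤ 4 * Real.log A / A := hxy2
  have hfin : (4 * Real.log A / A) / (-y) ≤ 6 * ((-y) * (Real.log A / A^2)) := by
    rw [div_le_iff₀ hypos]
    have e : 6 * ((-y) * (Real.log A / A^2)) * (-y) = 6*y^2*Real.log A/A^2 := by ring
    rw [e, div_le_div_iff₀ (by positivity) (by positivity)]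
    have h4A : 4*A ≤ 6*y^2 := by rw [hy2]; linarith
    have hm := mul_le_mul_of_nonneg_right h4A
      (mul_nonneg (by linarith : (0:ℝ) ≤ Real.log A) (by positivity : (0:ℝ) ≤ A))
    linarith [hm]
  have hrhs : |y * (Real.log A / A^2)| = (-y) * (Real.log A / A^2) := by
    rw [abs_mul, abs_of_nonpos hynonpos, abs_of_nonneg (by positivity)]
  calc |x - y| ≤ (4 * Real.log A / A) / (-y) := hstep
    _ ≤ 6 * ((-y) * (Real.log A / A^2)) := hfin
    _ = 6 * |y * (Real.log A / A^2)| := by rw [hrhs]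

end NormalQuantileAux

open NormalQuantileAux Set in
/-- Accuracy of the closed-form approximation to the standard Normal lower
quantile. -/
theorem normal_quantile_approx
    (Φ PhiInv : ℝ → ℝ)
    (hΦ : ∀ x, Φ x = ∫ t in Set.Iic x, Real.exp (-t ^ 2 / 2) / Real.sqrt (2 * Real.pi))
    (hinv : ∀ u ∈ Set.Ioo (0:ℝ) 1, Φ (PhiInv u) = u) :
    (fun u => PhiInv u -
        (-Real.sqrt (-2 * Real.log (u * Real.sqrt (4 * Real.pi * |Real.log u|)))))
      =O[𝓝[>] (0:ℝ)]
    (fun u => -Real.sqrt (-2 * Real.log (u * Real.sqrt (4 * Real.pi * |Real.log u|))) *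
      (Real.log |Real.log u| / (Real.log u) ^ 2)) := by
  have hP : (0:ℝ) < Real.sqrt (2*Real.pi) := Real.sqrt_pos.2 (by positivity)
  have hΦ' : ∀ x, Φ x = (∫ t in Iic x, Real.exp (-t^2/2)) / Real.sqrt (2*Real.pi) := by
    intro x
    rw [hΦ x, ← integral_div]
  have hmono : Monotone Φ := by
    intro a b hab
    rw [hΦ' a, hΦ' b]
    refine (div_le_div_iff_of_pos_right hP).2 ?_
    refine setIntegral_mono_set gauss_int.integrableOn
      (ae_of_all _ fun t => Real.exp_nonneg _) ?_
    exact HasSubset.Subset.eventuallyLE (Iic_subset_Iic.2 hab)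
  have hpos : ∀ c, 0 < Φ c := by
    intro c
    rw [hΦ' c]
    apply div_pos _ hP
    rw [setIntegral_pos_iff_support_of_nonneg_ae
      (ae_of_all _ fun t => Real.exp_nonneg _) gauss_int.integrableOn]
    have hsupp : Function.support (fun t : ℝ => Real.exp (-t^2/2)) = univ := by
      ext t; simp [Real.exp_ne_zero]
    rw [hsupp, univ_inter, Real.volume_Iic]
    simp
  have htend : Tendsto PhiInv (𝓝[>] (0:ℝ)) atBot := by
    rw [tendsto_atBot]
    intro c
    have hc := hpos c
    have hmem : Ioo (0:ℝ) (min (Φ c) 1) ∈ 𝓝[>] (0:ℝ) :=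
      Ioo_mem_nhdsGT_of_mem ⟨le_refl 0, lt_min hc one_pos⟩
    filter_upwards [hmem] with u hu
    by_contra hcon
    push_neg at hcon
    have h1 : Φ c ≤ Φ (PhiInv u) := hmono hcon.le
    have h2 : Φ (PhiInv u) = u := hinv u ⟨hu.1, lt_of_lt_of_le hu.2 (min_le_right _ _)⟩
    have h3 : u < Φ c := lt_of_lt_of_le hu.2 (min_le_left _ _)
    rw [h2] at h1
    linarith
  rw [isBigO_iff]
  refine ⟨6, ?_⟩
  have hev1 : ∀ᶠ u in 𝓝[>] (0:ℝ), u ∈ Ioo (0:ℝ) 1 :=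
    Ioo_mem_nhdsGT_of_mem ⟨le_refl 0, one_pos⟩
  have hev2 : ∀ᶠ u in 𝓝[>] (0:ℝ), PhiInv u ≤ -1 :=
    htend.eventually (eventually_le_atBot (-1))
  have hev3 : ∀ᶠ u in 𝓝[>] (0:ℝ), Real.log u ≤ -100 :=
    Real.tendsto_log_nhdsGT_zero.eventually (eventually_le_atBot (-100))
  filter_upwards [hev1, hev2, hev3] with u hu hx1 hA1
  obtain ⟨hu0, hu1⟩ := hu
  set x := PhiInv u with hxdef
  set A := -Real.log u with hAdef
  have hA : 100 ≤ A := by rw [hAdef]; linarith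
  have hApos : (0:ℝ) < A := by linarith
  have hxneg : x < 0 := by linarith
  have hxpos : (0:ℝ) < -x := by linarith
  have hx2pos : (0:ℝ) < x^2 := by nlinarith
  have hEpos : (0:ℝ) < Real.exp (-x^2/2) := Real.exp_pos _
  have hΦx : Φ x = u := hinv u ⟨hu0, hu1⟩
  have hux : u = (∫ t in Iic x, Real.exp (-t^2/2)) / Real.sqrt (2*Real.pi) := by
    rw [← hΦx, hΦ']
  have hub : u ≤ Real.exp (-x^2/2) / ((-x) * Real.sqrt (2*Real.pi)) := by
    rw [hux]
    calc (∫ t in Iic x, Real.exp (-t^2/2)) / Real.sqrt (2*Real.pi)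
        ≤ (Real.exp (-x^2/2) / (-x)) / Real.sqrt (2*Real.pi) :=
          (div_le_div_iff_of_pos_right hP).2 (tail_ub hxneg)
      _ = Real.exp (-x^2/2) / ((-x) * Real.sqrt (2*Real.pi)) := by rw [div_div]
  have hlb : Real.exp (-x^2/2) * (-x) / ((x^2+1) * Real.sqrt (2*Real.pi)) ≤ u := by
    rw [hux]
    calc Real.exp (-x^2/2) * (-x) / ((x^2+1) * Real.sqrt (2*Real.pi))
        = (Real.exp (-x^2/2) * (-x) / (x^2+1)) / Real.sqrt (2*Real.pi) := by rw [div_div]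
      _ ≤ (∫ t in Iic x, Real.exp (-t^2/2)) / Real.sqrt (2*Real.pi) :=
          (div_le_div_iff_of_pos_right hP).2 (tail_lb hxneg)
  have hU : x^2/2 + Real.log (-x) + Real.log (Real.sqrt (2*Real.pi)) ≤ A := by
    have h1 : Real.log u ≤ Real.log (Real.exp (-x^2/2) / ((-x) * Real.sqrt (2*Real.pi))) :=
      Real.log_le_log hu0 hub
    rw [Real.log_div (ne_of_gt hEpos) (by positivity), Real.log_exp,
      Real.log_mul (ne_of_gt hxpos) (ne_of_gt hP)] at h1
    rw [hAdef]
    linarith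
  have hL : A ≤ x^2/2 + Real.log (-x) + Real.log (Real.sqrt (2*Real.pi)) + 1/x^2 := by
    have h1 : Real.log (Real.exp (-x^2/2) * (-x) / ((x^2+1) * Real.sqrt (2*Real.pi)))
        ≤ Real.log u := Real.log_le_log (by positivity) hlb
    rw [Real.log_div (by positivity) (by positivity),
      Real.log_mul (ne_of_gt hEpos) (ne_of_gt hxpos), Real.log_exp,
      Real.log_mul (by positivity) (ne_of_gt hP)] at h1
    have h2 : Real.log (x^2+1) - Real.log (x^2) ≤ 1/x^2 := by
      rw [← Real.log_div (by positivity) (ne_of_gt hx2pos)]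
      have h3 : Real.log ((x^2+1)/x^2) ≤ (x^2+1)/x^2 - 1 :=
        Real.log_le_sub_one_of_pos (by positivity)
      have h4 : (x^2+1)/x^2 - 1 = 1/x^2 := by rw [add_div, div_self (ne_of_gt hx2pos)]; ring
      linarith
    have hlx2 : Real.log (x^2) = 2*Real.log (-x) := by
      rw [show x^2 = (-x)^2 by ring, Real.log_pow]; push_cast; ring
    rw [hAdef]
    linarith
  have hlogu_neg : Real.log u < 0 := Real.log_neg hu0 hu1
  have habs : |Real.log u| = A := by rw [abs_of_neg hlogu_neg]
  have harg : -2 * Real.log (u * Real.sqrt (4 * Real.pi * |Real.log u|))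
      = 2*A - Real.log (4*Real.pi*A) := by
    rw [habs, Real.log_mul (ne_of_gt hu0) (by positivity),
      Real.log_sqrt (by positivity)]
    rw [hAdef]
    ring
  have hlogabs : Real.log |Real.log u| = Real.log A := by rw [habs]
  have hsq : (Real.log u)^2 = A^2 := by rw [hAdef]; ring
  have hk := key hx1 hA hU hL
  rw [Real.norm_eq_abs, Real.norm_eq_abs, harg, hlogabs, hsq]
  exact hk
end

section
/- Let Φ denote the standard Normal cdf. Then as u → 0⁺, Φ^{-1}(u) = -√(-2 log u) + (log|log u|)/(2√(-2 log u)) + (log 4π)/(2√(-2 log u)) + (log|log u|)²/(8(-2 log u)^{3/2}) + O(log|log u|/|log u|^{3/2}). -/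
open Filter Topology Asymptotics Real MeasureTheory

section Aux
open Set

noncomputable def gauss (t : ℝ) : ℝ := Real.exp (-t^2/2)

lemma gauss_eq (t : ℝ) : gauss t = Real.exp (-(1/2) * t^2) := by
  unfold gauss; ring_nf

lemma gauss_pos (t : ℝ) : 0 < gauss t := Real.exp_pos _

lemma gauss_integrable : MeasureTheory.Integrable gauss := by
  have h := integrable_exp_neg_mul_sq (by norm_num : (0:ℝ) < 1/2)
  exact h.congr (Filter.Eventually.of_forall fun t => (gauss_eq t).symm)

lemma gauss_tendsto : Tendsto gauss atTop (𝓝 0) := by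
  have h1 : Tendsto (fun t : ℝ => -t^2/2) atTop atBot := by
    apply Tendsto.atBot_div_const (by norm_num)
    exact tendsto_neg_atBot_iff.mpr (tendsto_pow_atTop (by norm_num : 2 ≠ 0))
  exact Real.tendsto_exp_atBot.comp h1

lemma gauss_deriv (x : ℝ) : HasDerivAt gauss (-x * gauss x) x := by
  have h1 : HasDerivAt (fun t : ℝ => -t^2/2) (-x) x := by
    have := ((hasDerivAt_pow 2 x).neg).div_const 2
    exact this.congr_deriv (by norm_num; ring)
  have := h1.exp
  show HasDerivAt (fun t => Real.exp (-t^2/2)) (-x * Real.exp (-x^2/2)) x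
  simpa [mul_comm] using this

-- upper Mills
lemma mills_upper {s : ℝ} (hs : 0 < s) : ∫ t in Ioi s, gauss t ≤ gauss s / s := by
  have key : ∫ t in Ioi s, (t/s) * gauss t = gauss s / s := by
    have hderiv : ∀ x ∈ Ici s, HasDerivAt (fun t => -(1/s) * gauss t) ((x/s) * gauss x) x := by
      intro x _
      have h := (gauss_deriv x).const_mul (-(1/s))
      exact h.congr_deriv (by ring)
    have hpos : ∀ x ∈ Ioi s, 0 ≤ (x/s) * gauss x := by
      intro x hx
      have hx' : (0:ℝ) < x := lt_trans hs hx
      have := (gauss_pos x).le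
      positivity
    have hlim : Tendsto (fun t => -(1/s) * gauss t) atTop (𝓝 0) := by
      have := gauss_tendsto.const_mul (-(1/s))
      simpa using this
    have := integral_Ioi_of_hasDerivAt_of_nonneg' hderiv hpos hlim
    rw [this]; field_simp; ring
  rw [← key]
  apply setIntegral_mono_on
  · exact gauss_integrable.integrableOn
  · have h := integrable_mul_exp_neg_mul_sq (by norm_num : (0:ℝ) < 1/2)
    have h2 : MeasureTheory.Integrable (fun t : ℝ => (t/s) * gauss t) := by
      refine (h.div_const s).congr (Filter.Eventually.of_forall fun t => ?_)
      show t * Real.exp (-(1/2)*t^2) / s = t/s * gauss t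
      rw [gauss_eq]; ring
    exact h2.integrableOn
  · exact measurableSet_Ioi
  · intro x hx
    have hx1 : s < x := hx
    have h1 : (1:ℝ) ≤ x/s := (le_div_iff₀ hs).mpr (by linarith)
    nlinarith [gauss_pos x]

-- lower Mills (s ≥ 2)
lemma mills_lower {s : ℝ} (hs : 2 ≤ s) :
    (1/s - 1/s^3) * gauss s ≤ ∫ t in Ioi s, gauss t := by
  have hs0 : (0:ℝ) < s := by linarith
  have hderiv : ∀ x ∈ Ici s, HasDerivAt (fun t => -(1/t - 1/t^3) * gauss t)
      ((1 - 3/x^4) * gauss x) x := by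
    intro x hx
    have hx0 : x ≠ 0 := by have : (2:ℝ) ≤ x := le_trans hs hx; positivity
    have h1 : HasDerivAt (fun t : ℝ => -(1/t - 1/t^3)) (1/x^2 - 3/x^4) x := by
      have ha : HasDerivAt (fun t : ℝ => t⁻¹) (-(x^2)⁻¹) x := hasDerivAt_inv hx0
      have hb : HasDerivAt (fun t : ℝ => (t^3)⁻¹) (-(3*x^2) / (x^3)^2) x :=
        (hasDerivAt_pow 3 x).inv (pow_ne_zero 3 hx0)
      have := (ha.sub hb).neg
      refine (this.congr_deriv ?_).congr_of_eventuallyEq (Filter.Eventually.of_forall fun t => ?_)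
      · field_simp; ring
      · simp [one_div]
    have := h1.mul (gauss_deriv x)
    exact this.congr_deriv (by field_simp; ring)
  have hpos : ∀ x ∈ Ioi s, 0 ≤ (1 - 3/x^4) * gauss x := by
    intro x hx
    have hx2 : (2:ℝ) ≤ x := le_trans hs (le_of_lt hx)
    have hq : (4:ℝ) ≤ x^2 := by nlinarith
    have h16 : (16:ℝ) ≤ x^4 := by nlinarith
    have : 3/x^4 ≤ 3/16 := by
      apply div_le_div_of_nonneg_left (by norm_num) (by positivity) h16
    nlinarith [gauss_pos x]
  have hlim : Tendsto (fun t => -(1/t - 1/t^3) * gauss t) atTop (𝓝 0) := by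
    have h1 : Tendsto (fun t : ℝ => -(1/t - 1/t^3)) atTop (𝓝 0) := by
      have a1 : Tendsto (fun t : ℝ => t⁻¹) atTop (𝓝 0) := tendsto_inv_atTop_zero
      have a2 : Tendsto (fun t : ℝ => (t^3)⁻¹) atTop (𝓝 0) :=
        tendsto_inv_atTop_zero.comp (tendsto_pow_atTop (by norm_num : 3 ≠ 0))
      have := (a1.sub a2).neg
      simpa [one_div] using this
    have := h1.mul gauss_tendsto
    simpa using this
  have key : ∫ t in Ioi s, ((1 - 3/t^4) * gauss t) = (1/s - 1/s^3) * gauss s := by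
    have := integral_Ioi_of_hasDerivAt_of_nonneg' hderiv hpos hlim
    rw [this]
    have hx0 : s ≠ 0 := ne_of_gt hs0
    field_simp
    ring
  rw [← key]
  apply setIntegral_mono_on
  · exact integrableOn_Ioi_deriv_of_nonneg' hderiv hpos hlim
  · exact gauss_integrable.integrableOn
  · exact measurableSet_Ioi
  · intro x hx
    have hx2 : (2:ℝ) ≤ x := le_trans hs (le_of_lt hx)
    have h3 : 0 ≤ 3/x^4 := by positivity
    nlinarith [gauss_pos x]

lemma log_one_sub_ge {w : ℝ} (h0 : 0 ≤ w) (h1 : w ≤ 1/2) : -(2*w) ≤ Real.log (1 - w) := by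
  have hw : (0:ℝ) < 1 - w := by linarith
  rw [Real.le_log_iff_exp_le hw]
  have h2 : Real.exp (2*w) * Real.exp (-(2*w)) = 1 := by
    rw [← Real.exp_add]; simp
  have h3 : 1 + 2*w ≤ Real.exp (2*w) := by
    have := Real.add_one_le_exp (2*w); linarith
  have h4 : (0:ℝ) < 1 + 2*w := by linarith
  have h5 : Real.exp (-(2*w)) ≤ 1/(1+2*w) := by
    rw [le_div_iff₀ h4]
    calc Real.exp (-(2*w)) * (1+2*w) ≤ Real.exp (-(2*w)) * Real.exp (2*w) := by
          apply mul_le_mul_of_nonneg_left h3 (Real.exp_pos _).le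
      _ = 1 := by rw [← Real.exp_add]; simp
  refine le_trans h5 ?_
  rw [div_le_iff₀ h4]
  nlinarith

lemma sqrt_one_sub_le {w : ℝ} (h0 : 0 ≤ w) (h1 : w ≤ 1/2) :
    Real.sqrt (1-w) ≤ 1 - w/2 - w^2/8 := by
  have hg : (0:ℝ) ≤ 1 - w/2 - w^2/8 := by nlinarith
  have h2 : 1 - w ≤ (1 - w/2 - w^2/8)^2 := by nlinarith
  calc Real.sqrt (1-w) ≤ Real.sqrt ((1 - w/2 - w^2/8)^2) := Real.sqrt_le_sqrt h2
    _ = 1 - w/2 - w^2/8 := Real.sqrt_sq hg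

lemma sqrt_one_sub_ge {w : ℝ} (h0 : 0 ≤ w) (h1 : w ≤ 1/2) :
    1 - w/2 - w^2/8 - w^3 ≤ Real.sqrt (1-w) := by
  have hh : (0:ℝ) ≤ 1 - w/2 - w^2/8 - w^3 := by nlinarith
  have hw3 : (0:ℝ) ≤ w^3 := by positivity
  have hkey : 1/8 + w/64 + w^3 ≤ 2 - w - w^2/4 := by nlinarith
  have h2 : (1 - w/2 - w^2/8 - w^3)^2 ≤ 1 - w := by
    nlinarith [mul_le_mul_of_nonneg_left hkey hw3]
  have := Real.sqrt_le_sqrt h2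
  rwa [Real.sqrt_sq hh] at this

lemma rpow_three_halves {y : ℝ} (hy : 0 ≤ y) : y ^ ((3:ℝ)/2) = Real.sqrt y ^ 3 := by
  rw [Real.sqrt_eq_rpow, ← Real.rpow_natCast (y ^ ((1:ℝ)/2)) 3, ← Real.rpow_mul hy]
  norm_num


-- |√a - √b| ≤ |a - b|/q when √a + √b ≥ q
lemma sqrt_diff_le {a b q : ℝ} (ha : 0 ≤ a) (hb : 0 ≤ b) (hq : 0 < q)
    (hsum : q ≤ Real.sqrt a + Real.sqrt b) :
    |Real.sqrt a - Real.sqrt b| ≤ |a - b|/q := by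
  have ha2 : Real.sqrt a ^ 2 = a := Real.sq_sqrt ha
  have hb2 : Real.sqrt b ^ 2 = b := Real.sq_sqrt hb
  have hdiff : (Real.sqrt a - Real.sqrt b) * (Real.sqrt a + Real.sqrt b) = a - b := by
    nlinarith
  have habs : |Real.sqrt a - Real.sqrt b| * (Real.sqrt a + Real.sqrt b) = |a - b| := by
    rw [← abs_of_nonneg (by linarith : (0:ℝ) ≤ Real.sqrt a + Real.sqrt b), ← abs_mul, hdiff]
  rw [le_div_iff₀ hq]
  calc |Real.sqrt a - Real.sqrt b| * q
      ≤ |Real.sqrt a - Real.sqrt b| * (Real.sqrt a + Real.sqrt b) :=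
        mul_le_mul_of_nonneg_left hsum (abs_nonneg _)
    _ = |a - b| := habs

-- step3: sqrt expansion
lemma sqrt_expansion {q B R : ℝ} (hq : 31 ≤ q) (hB0 : 0 ≤ B) (hB2R : B ≤ 2*R)
    (hR : 3 ≤ R) (hR2q : R ≤ 2*q) :
    |Real.sqrt (q^2 - B) - (q - B/(2*q) - B^2/(8*q^3))| ≤ 32*R/q^3 := by
  have hq0 : (0:ℝ) < q := by linarith
  have hw2 : B/q^2 ≤ 1/2 := by
    rw [div_le_iff₀ (by positivity)]; nlinarith
  have hw0 : 0 ≤ B/q^2 := by positivity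
  have hfact : q^2 - B = q^2 * (1 - B/q^2) := by field_simp
  have hsqrt : Real.sqrt (q^2 - B) = q * Real.sqrt (1 - B/q^2) := by
    rw [hfact, Real.sqrt_mul (by positivity), Real.sqrt_sq hq0.le]
  have hT : q * (1 - (B/q^2)/2 - (B/q^2)^2/8) = q - B/(2*q) - B^2/(8*q^3) := by
    field_simp
  have hub := sqrt_one_sub_le hw0 hw2
  have hlb := sqrt_one_sub_ge hw0 hw2
  have key : |Real.sqrt (q^2 - B) - (q - B/(2*q) - B^2/(8*q^3))| ≤ q * (B/q^2)^3 := by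
    rw [hsqrt, ← hT, abs_le]
    constructor <;> nlinarith
  refine key.trans ?_
  have hB3 : B^3 ≤ 8*R^3 := by nlinarith [pow_le_pow_left₀ hB0 hB2R 3]
  have hR2 : R^2 ≤ 4*q^2 := by nlinarith
  have expand : q * (B/q^2)^3 = B^3 / q^5 := by
    field_simp
  rw [expand, div_le_div_iff₀ (by positivity) (by positivity)]
  -- B³ q³ ≤ 32 R q⁵
  have : B^3 * q^3 ≤ 8*R^3 * q^3 := by nlinarith [pow_pos hq0 3]
  refine this.trans ?_
  have : R^3 ≤ 4*q^2*R := by nlinarith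
  nlinarith [pow_pos hq0 3, pow_pos hq0 2]

-- rho bound
set_option maxHeartbeats 1000000 in
lemma rho_bound {s q c R : ℝ} (hs : 2 < s) (hq : 31 ≤ q) (hc1 : 1 ≤ c) (hc2 : c ≤ 2)
    (hR : 3 ≤ R) (hR2q : R ≤ 2*q) (hRlog : R = Real.log (q^2))
    (h1 : s^2 + 2*Real.log s + c ≤ q^2) (h2 : q^2 ≤ s^2 + 2*Real.log s + c + 4/s^2) :
    |(q^2 - s^2) - (R + c)| ≤ 12*R/q^2 := by
  have hq0 : (0:ℝ) < q := by linarith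
  have hs0 : (0:ℝ) < s := by linarith
  have hlogs : 0 < Real.log s := Real.log_pos (by linarith)
  have hq2pos : (0:ℝ) < q^2 := by positivity
  have hs2pos : (0:ℝ) < s^2 := by positivity
  have hApos : 0 < q^2 - s^2 := by nlinarith
  have hsq : s ≤ q := by nlinarith
  have h2logs : 2*Real.log s ≤ R := by
    rw [hRlog]
    have : Real.log (s^2) ≤ Real.log (q^2) := Real.log_le_log hs2pos (by nlinarith)
    rw [Real.log_pow] at this; push_cast at this; linarith
  have h4s2pos : (0:ℝ) < 4/s^2 := by positivity
  have h4s2 : 4/s^2 ≤ 1 := by rw [div_le_one hs2pos]; nlinarith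
  have hA2R : q^2 - s^2 ≤ 2*R := by nlinarith
  have hs2half : q^2/2 ≤ s^2 := by nlinarith
  -- t := (q²-s²)/q², 1 - t = s²/q²
  have ht0 : 0 ≤ (q^2-s^2)/q^2 := by positivity
  have ht2 : (q^2-s^2)/q^2 ≤ 1/2 := by
    rw [div_le_iff₀ hq2pos]; nlinarith
  have hts : 1 - (q^2-s^2)/q^2 = s^2/q^2 := by field_simp; ring
  have hlog_eq : 2*Real.log s - R = Real.log (1 - (q^2-s^2)/q^2) := by
    rw [hts, Real.log_div (ne_of_gt hs2pos) (ne_of_gt hq2pos), hRlog, Real.log_pow, Real.log_pow]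
    push_cast; ring
  have hlog_le : Real.log (1 - (q^2-s^2)/q^2) ≤ 0 := by
    apply Real.log_nonpos <;> [linarith; linarith]
  have hlog_ge : -(2*((q^2-s^2)/q^2)) ≤ Real.log (1 - (q^2-s^2)/q^2) := log_one_sub_ge ht0 ht2
  -- now ρ = (q²-s²) - R - c = (2 log s - R) + ε, ε := (q²-s²) - 2 log s - c ∈ [0, 4/s²]
  have heps0 : 0 ≤ (q^2-s^2) - 2*Real.log s - c := by linarith
  have heps1 : (q^2-s^2) - 2*Real.log s - c ≤ 4/s^2 := by linarith
  have hbound1 : 2*((q^2-s^2)/q^2) ≤ 4*R/q^2 := by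
    rw [show 2*((q^2-s^2)/q^2) = 2*(q^2-s^2)/q^2 from by ring,
      div_le_div_iff₀ hq2pos hq2pos]
    nlinarith [mul_le_mul_of_nonneg_right hA2R hq2pos.le]
  have hbound2 : 4/s^2 ≤ 8*R/q^2 := by
    rw [div_le_div_iff₀ hs2pos hq2pos]
    nlinarith
  have hid : (q^2 - s^2) - (R + c) =
      Real.log (1 - (q^2-s^2)/q^2) + ((q^2-s^2) - 2*Real.log s - c) := by
    rw [← hlog_eq]; ring
  rw [hid, abs_le]
  constructor
  · have h12 : 4*R/q^2 ≤ 12*R/q^2 := by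
      rw [div_le_div_iff₀ hq2pos hq2pos]
      nlinarith [mul_pos hq2pos hq2pos, mul_nonneg (by linarith : (0:ℝ) ≤ R) hq2pos.le]
    linarith
  · have h12 : 8*R/q^2 ≤ 12*R/q^2 := by
      rw [div_le_div_iff₀ hq2pos hq2pos]
      nlinarith [mul_pos hq2pos hq2pos, mul_nonneg (by linarith : (0:ℝ) ≤ R) hq2pos.le]
    linarith

lemma log_two_pi_bounds : 1 ≤ Real.log (2*Real.pi) ∧ Real.log (2*Real.pi) ≤ 2 := by
  have hpi1 := Real.pi_gt_three
  have hpi2 := Real.pi_lt_d2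
  constructor
  · rw [Real.le_log_iff_exp_le (by positivity)]
    calc Real.exp 1 ≤ 2.7182818286 := le_of_lt Real.exp_one_lt_d9
      _ ≤ 2 * Real.pi := by nlinarith
  · rw [Real.log_le_iff_le_exp (by positivity)]
    have h2 : Real.exp 2 = Real.exp 1 ^ 2 := by
      rw [← Real.exp_nat_mul]; norm_num
    nlinarith [Real.exp_one_gt_d9]

set_option maxHeartbeats 1000000 in
lemma core_estimate {s y : ℝ} (hs : 2 < s) (hy : 1000 ≤ y)
    (h1 : s^2 + 2*Real.log s + Real.log (2*Real.pi) ≤ y)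
    (h2 : y ≤ s^2 + 2*Real.log s + Real.log (2*Real.pi) + 4/s^2) :
    |s - (Real.sqrt y - (Real.log y + Real.log (2*Real.pi))/(2*Real.sqrt y)
      - (Real.log y + Real.log (2*Real.pi))^2/(8 * Real.sqrt y^3))|
      ≤ 50 * Real.log y / Real.sqrt y ^ 3 := by
  have hy0 : (0:ℝ) < y := by linarith
  obtain ⟨q, hq0', rfl⟩ : ∃ q, 0 ≤ q ∧ q^2 = y :=
    ⟨Real.sqrt y, Real.sqrt_nonneg y, Real.sq_sqrt hy0.le⟩
  rw [Real.sqrt_sq hq0']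
  have hq31 : 31 ≤ q := by nlinarith
  have hq0 : (0:ℝ) < q := by linarith
  obtain ⟨hc1, hc2⟩ := log_two_pi_bounds
  have hR3 : 3 ≤ Real.log (q^2) := by
    rw [Real.le_log_iff_exp_le (by positivity)]
    calc Real.exp 3 = Real.exp 1 ^ 3 := by rw [← Real.exp_nat_mul]; norm_num
      _ ≤ 2.7182818286 ^ 3 := by
          have h := Real.exp_one_lt_d9
          have h0 := Real.exp_pos 1
          nlinarith [pow_lt_pow_left₀ h h0.le (by norm_num : 3 ≠ 0)]
      _ ≤ 1000 := by norm_num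
      _ ≤ q^2 := hy
  have hR2q : Real.log (q^2) ≤ 2*q := by
    have hlq : Real.log q ≤ q - 1 := Real.log_le_sub_one_of_pos hq0
    rw [Real.log_pow]; push_cast; linarith
  have hρ := rho_bound hs hq31 hc1 hc2 hR3 hR2q rfl h1 h2
  have hB0 : 0 ≤ Real.log (q^2) + Real.log (2*Real.pi) := by linarith
  have hB2R : Real.log (q^2) + Real.log (2*Real.pi) ≤ 2*Real.log (q^2) := by linarith
  have hexp := sqrt_expansion hq31 hB0 hB2R hR3 hR2q
  have hsq2 : Real.sqrt (s^2) = s := Real.sqrt_sq (by linarith)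
  have hlogs : 0 < Real.log s := Real.log_pos (by linarith)
  have hApos : 0 < q^2 - s^2 := by linarith
  have hsq' : s ≤ q := by nlinarith
  have hA2R : q^2 - s^2 ≤ 2*Real.log (q^2) := by
    have h2logs : 2*Real.log s ≤ Real.log (q^2) := by
      have : Real.log (s^2) ≤ Real.log (q^2) :=
        Real.log_le_log (by positivity) (by nlinarith)
      rw [Real.log_pow] at this; push_cast at this; linarith
    have h4s2 : 4/s^2 ≤ 1 := by
      rw [div_le_one (by positivity)]; nlinarith
    linarith
  have hBq : Real.log (q^2) + Real.log (2*Real.pi) ≤ q^2/2 := by nlinarith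
  have hs2half : q^2/2 ≤ s^2 := by nlinarith
  have hsge : q/2 ≤ s := by nlinarith
  have hbge : q/2 ≤ Real.sqrt (q^2 - (Real.log (q^2) + Real.log (2*Real.pi))) := by
    have h : (q/2)^2 ≤ q^2 - (Real.log (q^2) + Real.log (2*Real.pi)) := by nlinarith
    have := Real.sqrt_le_sqrt h
    rwa [Real.sqrt_sq (by positivity : (0:ℝ) ≤ q/2)] at this
  have hdiff := sqrt_diff_le (sq_nonneg s)
    (by nlinarith : (0:ℝ) ≤ q^2 - (Real.log (q^2) + Real.log (2*Real.pi))) hq0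
    (by rw [hsq2]; linarith)
  rw [hsq2] at hdiff
  have hnum : |s^2 - (q^2 - (Real.log (q^2) + Real.log (2*Real.pi)))|
      ≤ 12*Real.log (q^2)/q^2 := by
    have he : s^2 - (q^2 - (Real.log (q^2) + Real.log (2*Real.pi)))
        = -((q^2 - s^2) - (Real.log (q^2) + Real.log (2*Real.pi))) := by ring
    rw [he, abs_neg]
    exact hρ
  have hstep : |s^2 - (q^2 - (Real.log (q^2) + Real.log (2*Real.pi)))|/q
      ≤ 12*Real.log (q^2)/q^3 := by
    have h3 : |s^2 - (q^2 - (Real.log (q^2) + Real.log (2*Real.pi)))|/q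
        ≤ (12*Real.log (q^2)/q^2)/q := by gcongr
    refine h3.trans (le_of_eq ?_)
    rw [div_div, show q^2*q = q^3 from by ring]
  have htri := abs_sub_le s (Real.sqrt (q^2 - (Real.log (q^2) + Real.log (2*Real.pi))))
      (q - (Real.log (q^2) + Real.log (2*Real.pi))/(2*q)
      - (Real.log (q^2) + Real.log (2*Real.pi))^2/(8 * q^3))
  have hfin : 12*Real.log (q^2)/q^3 + 32*Real.log (q^2)/q^3 ≤ 50*Real.log (q^2)/q^3 := by
    have hpos : 0 ≤ 6*Real.log (q^2)/q^3 := by positivity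
    have : 12*Real.log (q^2)/q^3 + 32*Real.log (q^2)/q^3 + 6*Real.log (q^2)/q^3
        = 50*Real.log (q^2)/q^3 := by ring
    linarith
  linarith [hdiff.trans hstep, hexp, htri]


lemma gauss_symm (x : ℝ) : ∫ t in Iic x, gauss t = ∫ t in Ioi (-x), gauss t := by
  have h := integral_comp_neg_Ioi (-x) gauss
  simp only [neg_neg] at h
  rw [← h]
  apply setIntegral_congr_fun measurableSet_Ioi
  intro t _
  simp [gauss, neg_sq]

lemma gauss_mono_Iic {a x : ℝ} (h : a ≤ x) :
    ∫ t in Iic a, gauss t ≤ ∫ t in Iic x, gauss t := by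
  apply setIntegral_mono_set gauss_integrable.integrableOn
  · exact Filter.Eventually.of_forall fun t => (gauss_pos t).le
  · exact HasSubset.Subset.eventuallyLE (Iic_subset_Iic.mpr h)

lemma mills_log_bounds {s u : ℝ} (hs : 2 < s) (hu : 0 < u)
    (hlow : (1/s - 1/s^3) * gauss s ≤ Real.sqrt (2*Real.pi) * u)
    (hhigh : Real.sqrt (2*Real.pi) * u ≤ gauss s / s) :
    s^2 + 2*Real.log s + Real.log (2*Real.pi) ≤ -2*Real.log u ∧
    -2*Real.log u ≤ s^2 + 2*Real.log s + Real.log (2*Real.pi) + 4/s^2 := by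
  have hs0 : (0:ℝ) < s := by linarith
  have h2pi : (0:ℝ) < 2*Real.pi := by positivity
  have hsqrt2pi : (0:ℝ) < Real.sqrt (2*Real.pi) := Real.sqrt_pos.mpr h2pi
  have hlogsqrt : Real.log (Real.sqrt (2*Real.pi)) = Real.log (2*Real.pi)/2 :=
    Real.log_sqrt h2pi.le
  have hloggauss : Real.log (gauss s) = -s^2/2 := by
    rw [show gauss s = Real.exp (-s^2/2) from rfl, Real.log_exp]
  have hlogmul : Real.log (Real.sqrt (2*Real.pi) * u)
      = Real.log (2*Real.pi)/2 + Real.log u := by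
    rw [Real.log_mul (ne_of_gt hsqrt2pi) (ne_of_gt hu), hlogsqrt]
  constructor
  · -- from hhigh
    have h1 : Real.log (Real.sqrt (2*Real.pi) * u) ≤ Real.log (gauss s / s) :=
      Real.log_le_log (by positivity) hhigh
    rw [hlogmul, Real.log_div (ne_of_gt (gauss_pos s)) (ne_of_gt hs0), hloggauss] at h1
    have hlogs : 0 < Real.log s := Real.log_pos (by linarith)
    linarith
  · -- from hlow
    have hfac : (0:ℝ) < 1/s - 1/s^3 := by
      rw [div_sub_div _ _ (ne_of_gt hs0) (by positivity : s^3 ≠ 0)]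
      apply div_pos
      · nlinarith
      · positivity
    have h1 : Real.log ((1/s - 1/s^3) * gauss s) ≤ Real.log (Real.sqrt (2*Real.pi) * u) :=
      Real.log_le_log (mul_pos hfac (gauss_pos s)) hlow
    rw [hlogmul, Real.log_mul (ne_of_gt hfac) (ne_of_gt (gauss_pos s)), hloggauss] at h1
    have hfac2 : 1/s - 1/s^3 = (1 - 1/s^2)/s := by field_simp
    have hw2 : 1/s^2 ≤ 1/2 := by
      rw [div_le_div_iff₀ (by positivity) (by norm_num)]; nlinarith
    have hlog1 : -(2*(1/s^2)) ≤ Real.log (1 - 1/s^2) := log_one_sub_ge (by positivity) hw2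
    rw [hfac2, Real.log_div (by nlinarith [hfac, hfac2] : 1 - 1/s^2 ≠ 0) (ne_of_gt hs0)] at h1
    have h4 : 4/s^2 = 2*(2*(1/s^2)) := by ring
    linarith [hlog1]

lemma nine_eighths_le {D Q : ℝ} (hD : 0 ≤ D) (hQ : 0 < Q) :
    9*D/(8*Q) ≤ 2*D/Q := by
  rw [div_le_div_iff₀ (by positivity) hQ]; nlinarith

lemma log4pi_bounds : 1 ≤ Real.log (4*Real.pi) ∧ Real.log (4*Real.pi) ≤ 3 := by
  have hpi1 := Real.pi_gt_three
  have hpi2 := Real.pi_lt_d2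
  constructor
  · rw [Real.le_log_iff_exp_le (by positivity)]
    calc Real.exp 1 ≤ 2.7182818286 := le_of_lt Real.exp_one_lt_d9
      _ ≤ 4 * Real.pi := by nlinarith
  · rw [Real.log_le_iff_le_exp (by positivity)]
    have h3 : Real.exp 3 = Real.exp 1 ^ 3 := by rw [← Real.exp_nat_mul]; norm_num
    nlinarith [Real.exp_one_gt_d9, Real.exp_pos 1,
      pow_lt_pow_left₀ Real.exp_one_gt_d9 (by norm_num : (0:ℝ) ≤ 2.7182818283) (by norm_num : 3 ≠ 0)]

end Aux

lemma sqrt_two_mul_cube {a : ℝ} (ha : 0 ≤ a) :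
    2*Real.sqrt a^3 ≤ Real.sqrt (2*a)^3 := by
  rw [Real.sqrt_mul (by norm_num : (0:ℝ) ≤ 2), mul_pow]
  have h22 : Real.sqrt 2^2 = 2 := Real.sq_sqrt (by norm_num)
  have h21 : 1 ≤ Real.sqrt 2 := by nlinarith [Real.sqrt_nonneg 2]
  have h23 : (2:ℝ) ≤ Real.sqrt 2^3 := by nlinarith [Real.sqrt_nonneg 2]
  nlinarith [mul_le_mul_of_nonneg_right h23 (pow_nonneg (Real.sqrt_nonneg a) 3)]

lemma final_combine {x Q P lY lL l4 l2 : ℝ}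
    (hQpos : 0 < Q) (hPpos : 0 < P)
    (hcore : |(-x) - (Q - (lY + l2)/(2*Q) - (lY + l2)^2/(8*Q^3))| ≤ 50*lY/Q^3)
    (hBeq : lY + l2 = lL + l4)
    (hlogy3 : 3 ≤ lY) (hlogL1 : 1 ≤ lL) (hlogy2L : lY ≤ 2*lL)
    (h4pi1 : 1 ≤ l4) (h4pi3 : l4 ≤ 3) (hl2a : 1 ≤ l2) (hlL : lL ≤ lY)
    (hQcube : 2*P^3 ≤ Q^3) :
    |x - (-Q + lL/(2*Q) + l4/(2*Q) + lL^2/(8*Q^3))| ≤ 60*|lL/P^3| := by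
  have hQ3 : (0:ℝ) < Q^3 := pow_pos hQpos 3
  have hP3 : (0:ℝ) < P^3 := pow_pos hPpos 3
  have hident : x - (-Q + lL/(2*Q) + l4/(2*Q) + lL^2/(8*Q^3))
      = -((-x) - (Q - (lY + l2)/(2*Q) - (lY + l2)^2/(8*Q^3)))
        + ((lY + l2)^2 - lL^2)/(8*Q^3) := by
    rw [hBeq]
    field_simp
    ring
  have hBsq : (lY + l2)^2 - lL^2 = l4 * ((lY + l2) + lL) := by
    rw [hBeq]; ring
  have hBsq_bound : (lY + l2)^2 - lL^2 ≤ 9*lY := by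
    rw [hBsq]; nlinarith
  have hBsq_nonneg : 0 ≤ (lY + l2)^2 - lL^2 := by
    rw [hBsq]; nlinarith
  have hterm2 : |((lY + l2)^2 - lL^2)/(8*Q^3)| ≤ 2*lY/Q^3 := by
    rw [abs_div, abs_of_nonneg hBsq_nonneg, abs_of_pos (by positivity : (0:ℝ) < 8*Q^3)]
    calc _ ≤ (9*lY)/(8*Q^3) := by gcongr
      _ ≤ _ := nine_eighths_le (by linarith) hQ3
  have htri := abs_add_le (-((-x) - (Q - (lY + l2)/(2*Q) - (lY + l2)^2/(8*Q^3))))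
      (((lY + l2)^2 - lL^2)/(8*Q^3))
  rw [abs_neg] at htri
  rw [hident]
  refine htri.trans ?_
  have hfinal : 50*lY/Q^3 + 2*lY/Q^3 ≤ 60*|lL/P^3| := by
    rw [abs_of_nonneg (by positivity)]
    have hsum : 50*lY/Q^3 + 2*lY/Q^3 = 52*lY/Q^3 := by ring
    rw [hsum]
    calc 52*lY/Q^3 ≤ (104*lL)/(2*P^3) :=
          div_le_div₀ (by positivity) (by linarith) (by positivity) hQcube
      _ = 52*(lL/P^3) := by field_simp; ring
      _ ≤ 60*(lL/P^3) := by
          have h0 : 0 ≤ lL/P^3 := by positivity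
          linarith
  linarith

set_option maxHeartbeats 2000000 in
/-- Asymptotic expansion of the standard Normal lower quantile. -/
theorem normal_quantile_expansion
    (Φ PhiInv : ℝ → ℝ)
    (hΦ : ∀ x, Φ x = ∫ t in Set.Iic x, Real.exp (-t ^ 2 / 2) / Real.sqrt (2 * Real.pi))
    (hinv : ∀ u ∈ Set.Ioo (0:ℝ) 1, Φ (PhiInv u) = u) :
    (fun u => PhiInv u -
      (-Real.sqrt (-2 * Real.log u)
        + Real.log |Real.log u| / (2 * Real.sqrt (-2 * Real.log u))
        + Real.log (4 * Real.pi) / (2 * Real.sqrt (-2 * Real.log u))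
        + (Real.log |Real.log u|) ^ 2 / (8 * (-2 * Real.log u) ^ ((3:ℝ) / 2))))
      =O[𝓝[>] (0:ℝ)]
    (fun u => Real.log |Real.log u| / |Real.log u| ^ ((3:ℝ) / 2)) := by
  have h2pi : (0:ℝ) < 2*Real.pi := by positivity
  have hsqrt2pi : (0:ℝ) < Real.sqrt (2*Real.pi) := Real.sqrt_pos.mpr h2pi
  have hphi : ∀ x, Φ x = (∫ t in Set.Iic x, gauss t) / Real.sqrt (2*Real.pi) := by
    intro x
    rw [hΦ x, MeasureTheory.integral_div]
    rfl
  have hc2pos : 0 < Φ (-2) := by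
    rw [hphi, gauss_symm, show -(-2:ℝ) = 2 by norm_num]
    apply div_pos _ hsqrt2pi
    have h := mills_lower (le_refl (2:ℝ))
    have h2 : (0:ℝ) < (1/2 - 1/2^3) * gauss 2 := by
      have := gauss_pos 2; norm_num; linarith
    calc (0:ℝ) < (1/2 - 1/2^3) * gauss 2 := h2
      _ ≤ _ := by
          have : ((1:ℝ)/2 - 1/2^3) = (1/(2:ℝ) - 1/(2:ℝ)^3) := by norm_num
          rw [this]; exact h
  set δ := min (Φ (-2)) (Real.exp (-500)) with hδdef
  have hδpos : 0 < δ := lt_min hc2pos (Real.exp_pos _)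
  rw [Asymptotics.isBigO_iff]
  refine ⟨60, ?_⟩
  have hmem : Set.Ioo (0:ℝ) δ ∈ 𝓝[>] (0:ℝ) :=
    Ioo_mem_nhdsGT_of_mem ⟨le_refl 0, hδpos⟩
  filter_upwards [hmem] with u hu
  obtain ⟨hu0, huδ⟩ := hu
  have huexp : u < Real.exp (-500) := lt_of_lt_of_le huδ (min_le_right _ _)
  have hu1 : u < 1 := lt_trans huexp (by
    rw [Real.exp_lt_one_iff]; norm_num)
  have hux : Φ (PhiInv u) = u := hinv u ⟨hu0, hu1⟩
  -- PhiInv u < -2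
  have hx2 : PhiInv u < -2 := by
    by_contra h
    push_neg at h
    have hmono : Φ (-2) ≤ Φ (PhiInv u) := by
      rw [hphi, hphi]
      apply div_le_div_of_nonneg_right _ hsqrt2pi.le
      exact gauss_mono_Iic h
    rw [hux] at hmono
    have : u < Φ (-2) := lt_of_lt_of_le huδ (min_le_left _ _)
    linarith
  have hs2 : 2 < -PhiInv u := by linarith
  -- Mills inputs
  have hkey : Real.sqrt (2*Real.pi) * u = ∫ t in Set.Ioi (-PhiInv u), gauss t := by
    have h1 : (∫ t in Set.Iic (PhiInv u), gauss t) / Real.sqrt (2*Real.pi) = u := by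
      rw [← hphi]; exact hux
    rw [div_eq_iff (ne_of_gt hsqrt2pi)] at h1
    rw [← gauss_symm, h1]
    ring
  have hlow := mills_lower (le_of_lt hs2)
  have hhigh := mills_upper (by linarith : (0:ℝ) < -PhiInv u)
  rw [← hkey] at hlow hhigh
  obtain ⟨hy1, hy2⟩ := mills_log_bounds hs2 hu0 hlow hhigh
  -- log u bounds
  have hlogu : Real.log u < -500 := by
    have h := Real.log_lt_log hu0 huexp
    rwa [Real.log_exp] at h
  have hy1000 : (1000:ℝ) ≤ -2*Real.log u := by linarith
  have hcore := core_estimate hs2 hy1000 hy1 hy2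
  -- notation
  have hlogu0 : Real.log u < 0 := by linarith
  have habs : |Real.log u| = -Real.log u := abs_of_neg hlogu0
  have hLpos : (0:ℝ) < -Real.log u := by linarith
  have hrpow1 : (-2*Real.log u) ^ ((3:ℝ)/2) = Real.sqrt (-2*Real.log u)^3 :=
    rpow_three_halves (by linarith)
  have hrpow2 : (-Real.log u) ^ ((3:ℝ)/2) = Real.sqrt (-Real.log u)^3 :=
    rpow_three_halves (by linarith)
  rw [Real.norm_eq_abs, Real.norm_eq_abs, habs, hrpow1, hrpow2]
  -- abbreviations as equalities
  have hQ2 : Real.sqrt (-2*Real.log u)^2 = -2*Real.log u := Real.sq_sqrt (by linarith)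
  have hQ0 : 0 ≤ Real.sqrt (-2*Real.log u) := Real.sqrt_nonneg _
  have hQ31 : 31 ≤ Real.sqrt (-2*Real.log u) := by nlinarith
  have hQpos : 0 < Real.sqrt (-2*Real.log u) := by linarith
  -- log identities
  have hyL : -2*Real.log u = 2*(-Real.log u) := by ring
  have hlogy : Real.log (-2*Real.log u) = Real.log 2 + Real.log (-Real.log u) := by
    rw [hyL, Real.log_mul (by norm_num) (ne_of_gt hLpos)]
  have hlog4pi : Real.log (4*Real.pi) = Real.log 2 + Real.log (2*Real.pi) := by
    rw [show (4:ℝ)*Real.pi = 2*(2*Real.pi) by ring,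
      Real.log_mul (by norm_num) (ne_of_gt h2pi)]
  have hBeq : Real.log (-2*Real.log u) + Real.log (2*Real.pi)
      = Real.log (-Real.log u) + Real.log (4*Real.pi) := by
    rw [hlogy, hlog4pi]; ring
  -- bounds on logs
  have hlogL1 : 1 ≤ Real.log (-Real.log u) := by
    rw [Real.le_log_iff_exp_le hLpos]
    calc Real.exp 1 ≤ 2.7182818286 := le_of_lt Real.exp_one_lt_d9
      _ ≤ -Real.log u := by linarith
  have hlogy3 : 3 ≤ Real.log (-2*Real.log u) := by
    rw [Real.le_log_iff_exp_le (by linarith)]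
    calc Real.exp 3 = Real.exp 1 ^ 3 := by rw [← Real.exp_nat_mul]; norm_num
      _ ≤ 2.7182818286 ^ 3 := by
          nlinarith [pow_lt_pow_left₀ Real.exp_one_lt_d9 (Real.exp_pos 1).le
            (by norm_num : 3 ≠ 0)]
      _ ≤ 1000 := by norm_num
      _ ≤ -2*Real.log u := hy1000
  have hlogL_le : Real.log (-Real.log u) ≤ Real.log (-2*Real.log u) := by
    apply Real.log_le_log hLpos; linarith
  have hlogy2L : Real.log (-2*Real.log u) ≤ 2*Real.log (-Real.log u) := by
    have h2' : Real.log 2 ≤ Real.log (-Real.log u) :=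
      Real.log_le_log (by norm_num) (by linarith)
    rw [hlogy]; linarith
  obtain ⟨h4pi1, h4pi3⟩ := log4pi_bounds
  obtain ⟨h2pi1, h2pi2⟩ := log_two_pi_bounds
  have hPpos : 0 < Real.sqrt (-Real.log u) := Real.sqrt_pos.mpr hLpos
  have hQcube : 2 * Real.sqrt (-Real.log u)^3 ≤ Real.sqrt (-2*Real.log u)^3 := by
    rw [hyL]
    exact sqrt_two_mul_cube hLpos.le
  exact final_combine hQpos hPpos hcore hBeq hlogy3 hlogL1 hlogy2L h4pi1 h4pi3 h2pi1 hlogL_le hQcube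
end

section
/- Let Φ denote the standard Normal cdf and y*(u) = -√(-2 log u). Then Φ^{-1}(u) = y*(u)(1 + O(log|log u|/log u)) as u → 0⁺, and moreover y*(g(x)) = x(1 + O(log|x|/x²)) as x → -∞, where g = Φ. -/
open Filter Topology Asymptotics Real MeasureTheory

set_option maxHeartbeats 1000000 in
/-- The dominant-term approximation y*(u) = -√(-2 log u) to the standard
Normal lower quantile and its accuracy. -/
theorem normal_quantile_dominant_term
    (Φ PhiInv : ℝ → ℝ)
    (hΦ : ∀ x, Φ x = ∫ t in Set.Iic x, Real.exp (-t ^ 2 / 2) / Real.sqrt (2 * Real.pi))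
    (hinv : ∀ u ∈ Set.Ioo (0:ℝ) 1, Φ (PhiInv u) = u) :
    ((fun u => PhiInv u - (-Real.sqrt (-2 * Real.log u))) =O[𝓝[>] (0:ℝ)]
        (fun u => -Real.sqrt (-2 * Real.log u) * (Real.log |Real.log u| / Real.log u)) ∧
     (fun x => -Real.sqrt (-2 * Real.log (Φ x)) - x) =O[atBot]
        (fun x => x * (Real.log |x| / x ^ 2))) := by
  have hπpos : (0:ℝ) < 2 * Real.pi := by positivity
  have hπ : 0 < Real.sqrt (2 * Real.pi) := Real.sqrt_pos.2 hπpos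
  have hπ1 : 1 ≤ Real.sqrt (2 * Real.pi) :=
    Real.one_le_sqrt.2 (by nlinarith [Real.pi_gt_three])
  have hπ2 : Real.log (Real.sqrt (2 * Real.pi)) ≤ 5/2 := by
    have h1 : Real.sqrt (2 * Real.pi) ≤ 2.6 := by
      rw [show (2.6:ℝ) = Real.sqrt (2.6 ^ 2) from (Real.sqrt_sq (by norm_num)).symm]
      exact Real.sqrt_le_sqrt (by nlinarith [Real.pi_lt_d2])
    have := Real.log_le_sub_one_of_pos hπ
    linarith
  -- integrability facts
  have hint : MeasureTheory.Integrable (fun t : ℝ => Real.exp (-t ^ 2 / 2)) := by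
    have := integrable_exp_neg_mul_sq (b := 1/2) (by norm_num)
    exact this.congr (Filter.Eventually.of_forall fun t => by
      show Real.exp (-(1/2 : ℝ) * t ^ 2) = Real.exp (-t ^ 2 / 2)
      rw [show -(1/2 : ℝ) * t ^ 2 = -t ^ 2 / 2 by ring])
  have hint_t : MeasureTheory.Integrable (fun t : ℝ => -t * Real.exp (-t ^ 2 / 2)) := by
    have := (integrable_mul_exp_neg_mul_sq (b := 1/2) (by norm_num)).neg
    exact this.congr (Filter.Eventually.of_forall fun t => by
      show -(t * Real.exp (-(1/2 : ℝ) * t ^ 2)) = -t * Real.exp (-t ^ 2 / 2)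
      rw [show -(1/2 : ℝ) * t ^ 2 = -t ^ 2 / 2 by ring]; ring)
  -- FTC computation of the truncated first moment
  have hFTC : ∀ x : ℝ, (∫ t in Set.Iic x, -t * Real.exp (-t ^ 2 / 2)) = Real.exp (-x ^ 2 / 2) := by
    intro x
    have hderiv : ∀ t ∈ Set.Iic x,
        HasDerivAt (fun s : ℝ => Real.exp (-s ^ 2 / 2)) (-t * Real.exp (-t ^ 2 / 2)) t := by
      intro t _
      have h1 : HasDerivAt (fun s : ℝ => -s ^ 2 / 2) (-t) t := by
        have : HasDerivAt (fun s : ℝ => -s ^ 2 / 2) (-((2:ℕ) * t ^ (2 - 1)) / 2) t := ((hasDerivAt_pow 2 t).neg).div_const 2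
        convert this using 1
        simp; ring
      have := h1.exp
      simpa [mul_comm] using this
    have hlim : Tendsto (fun s : ℝ => Real.exp (-s ^ 2 / 2)) atBot (𝓝 0) := by
      apply Real.tendsto_exp_atBot.comp
      apply tendsto_atBot_mono' atBot _ tendsto_id
      filter_upwards [eventually_le_atBot (-2:ℝ)] with s hs
      simp only [id_eq]
      nlinarith
    simpa using integral_Iic_of_hasDerivAt_of_tendsto' hderiv hint_t.integrableOn hlim
  -- upper Gaussian tail bound
  have hub : ∀ x : ℝ, x ≤ -1 →
      (∫ t in Set.Iic x, Real.exp (-t ^ 2 / 2)) ≤ Real.exp (-x ^ 2 / 2) / (-x) := by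
    intro x hx
    have hx0 : (0:ℝ) < -x := by linarith
    have h1 : (∫ t in Set.Iic x, Real.exp (-t ^ 2 / 2)) ≤
        ∫ t in Set.Iic x, (-x)⁻¹ * (-t * Real.exp (-t ^ 2 / 2)) := by
      apply setIntegral_mono_on hint.integrableOn
        (hint_t.integrableOn.const_mul _) measurableSet_Iic
      intro t ht
      have ht' : t ≤ x := ht
      have h2 : (1:ℝ) ≤ (-x)⁻¹ * (-t) := by
        rw [← div_eq_inv_mul]
        exact (one_le_div hx0).2 (by linarith)
      nlinarith [Real.exp_pos (-t ^ 2 / 2)]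
    rw [MeasureTheory.integral_const_mul, hFTC x] at h1
    calc (∫ t in Set.Iic x, Real.exp (-t ^ 2 / 2))
        ≤ (-x)⁻¹ * Real.exp (-x ^ 2 / 2) := h1
      _ = Real.exp (-x ^ 2 / 2) / (-x) := by ring
  -- lower Gaussian tail bound
  have hlb : ∀ x : ℝ, x ≤ -1 →
      Real.exp (-x ^ 2 / 2 - 3/2) / (-x) ≤ ∫ t in Set.Iic x, Real.exp (-t ^ 2 / 2) := by
    intro x hx
    have hx0 : (0:ℝ) < -x := by linarith
    have hxne : x ≠ 0 := by intro h; rw [h] at hx; norm_num at hx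
    have hlen : (0:ℝ) ≤ x - (x + 1/x) := by
      have : (0:ℝ) < -1/x := div_pos_of_neg_of_neg (by norm_num) (by linarith)
      have hE : x - (x + 1/x) = -1/x := by ring
      linarith [hE ▸ this]
    have h1 : (∫ t in Set.Ioc (x + 1/x) x, Real.exp (-t ^ 2 / 2)) ≤
        ∫ t in Set.Iic x, Real.exp (-t ^ 2 / 2) := by
      apply setIntegral_mono_set hint.integrableOn
        (Filter.Eventually.of_forall fun t => (Real.exp_pos _).le)
      exact HasSubset.Subset.eventuallyLE (fun t ht => ht.2)
    have hbound : ∀ t ∈ Set.Ioc (x + 1/x) x,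
        Real.exp (-x ^ 2 / 2 - 3/2) ≤ Real.exp (-t ^ 2 / 2) := by
      intro t ht
      apply Real.exp_le_exp.2
      have ht1 : x + 1/x < t := ht.1
      have ht2 : t ≤ x := ht.2
      have hax : (1/x) * x = 1 := by field_simp
      have ha1 : (-1:ℝ) ≤ 1/x := by nlinarith [hax]
      have ha0 : (1/x : ℝ) < 0 := div_neg_of_pos_of_neg (by norm_num) (by linarith)
      nlinarith [mul_pos (by linarith : (0:ℝ) < t - (x + 1/x))
        (by linarith : (0:ℝ) < -(x + 1/x + t)),
        mul_nonneg (by linarith : (0:ℝ) ≤ 1 + 1/x) (by linarith : (0:ℝ) ≤ 1 - 1/x)]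
    have h2 := setIntegral_ge_of_const_le_real (c := Real.exp (-x ^ 2 / 2 - 3/2))
      measurableSet_Ioc measure_Ioc_lt_top.ne hbound hint.integrableOn
    have hμ : (volume (Set.Ioc (x + 1/x) x)).toReal = -1/x := by
      rw [Real.volume_Ioc, ENNReal.toReal_ofReal hlen]; ring
    rw [measureReal_def, hμ] at h2
    calc Real.exp (-x ^ 2 / 2 - 3/2) / (-x)
        = Real.exp (-x ^ 2 / 2 - 3/2) * (-1/x) := by ring
      _ ≤ ∫ t in Set.Ioc (x + 1/x) x, Real.exp (-t ^ 2 / 2) := h2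
      _ ≤ _ := h1
  -- rewriting Φ
  have hΦeq : ∀ x, Φ x = (∫ t in Set.Iic x, Real.exp (-t ^ 2 / 2)) / Real.sqrt (2 * Real.pi) := by
    intro x; rw [hΦ x, MeasureTheory.integral_div]
  -- bounds on Φ in exponential form
  have hΦub : ∀ x : ℝ, x ≤ -1 → Φ x ≤ Real.exp (-x ^ 2 / 2 - Real.log (-x)) := by
    intro x hx
    have hx0 : (0:ℝ) < -x := by linarith
    have hI0 : 0 ≤ ∫ t in Set.Iic x, Real.exp (-t ^ 2 / 2) :=
      MeasureTheory.integral_nonneg fun t => (Real.exp_pos _).le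
    rw [hΦeq]
    calc (∫ t in Set.Iic x, Real.exp (-t ^ 2 / 2)) / Real.sqrt (2 * Real.pi)
        ≤ ∫ t in Set.Iic x, Real.exp (-t ^ 2 / 2) := div_le_self hI0 hπ1
      _ ≤ Real.exp (-x ^ 2 / 2) / (-x) := hub x hx
      _ = Real.exp (-x ^ 2 / 2 - Real.log (-x)) := by
          rw [Real.exp_sub, Real.exp_log hx0]
  have hΦlb : ∀ x : ℝ, x ≤ -1 → Real.exp (-x ^ 2 / 2 - Real.log (-x) - 4) ≤ Φ x := by
    intro x hx
    have hx0 : (0:ℝ) < -x := by linarith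
    rw [hΦeq]
    have h1 := hlb x hx
    have h2 : Real.exp (-x ^ 2 / 2 - Real.log (-x) - 4) ≤
        (Real.exp (-x ^ 2 / 2 - 3/2) / (-x)) / Real.sqrt (2 * Real.pi) := by
      have hE : (Real.exp (-x ^ 2 / 2 - 3/2) / (-x)) / Real.sqrt (2 * Real.pi)
          = Real.exp (-x ^ 2 / 2 - 3/2 - Real.log (-x) - Real.log (Real.sqrt (2 * Real.pi))) := by
        simp only [Real.exp_sub, Real.exp_log hx0, Real.exp_log hπ]
      rw [hE]
      exact Real.exp_le_exp.2 (by linarith)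
    calc Real.exp (-x ^ 2 / 2 - Real.log (-x) - 4)
        ≤ (Real.exp (-x ^ 2 / 2 - 3/2) / (-x)) / Real.sqrt (2 * Real.pi) := h2
      _ ≤ (∫ t in Set.Iic x, Real.exp (-t ^ 2 / 2)) / Real.sqrt (2 * Real.pi) :=
          (div_le_div_iff_of_pos_right hπ).2 h1
  -- monotonicity of Φ
  have hmono : ∀ a b : ℝ, a ≤ b → Φ a ≤ Φ b := by
    intro a b hab
    rw [hΦ a, hΦ b]
    have hint2 : MeasureTheory.Integrable
        (fun t : ℝ => Real.exp (-t ^ 2 / 2) / Real.sqrt (2 * Real.pi)) := hint.div_const _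
    exact setIntegral_mono_set hint2.integrableOn
      (Filter.Eventually.of_forall fun t => by positivity)
      (HasSubset.Subset.eventuallyLE (Set.Iic_subset_Iic.2 hab))
  have h5 : (5:ℝ) ≤ Real.exp 4 := by linarith [Real.add_one_le_exp (4:ℝ)]
  -- key elementary estimate
  have hkey : ∀ x : ℝ, x ≤ -Real.exp 4 →
      (0 ≤ Real.sqrt (-2 * Real.log (Φ x)) + x ∧
       Real.sqrt (-2 * Real.log (Φ x)) + x ≤ 2 * (Real.log (-x) / (-x))) := by
    intro x hx
    have hx1 : x ≤ -1 := by linarith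
    have hx0 : (0:ℝ) < -x := by linarith
    have hl := hΦlb x hx1
    have hu := hΦub x hx1
    have hΦpos : 0 < Φ x := lt_of_lt_of_le (Real.exp_pos _) hl
    have hlog_u : Real.log (Φ x) ≤ -x ^ 2 / 2 - Real.log (-x) := by
      calc Real.log (Φ x) ≤ Real.log (Real.exp (-x ^ 2 / 2 - Real.log (-x))) :=
            Real.log_le_log hΦpos hu
        _ = -x ^ 2 / 2 - Real.log (-x) := Real.log_exp _
    have hlog_l : -x ^ 2 / 2 - Real.log (-x) - 4 ≤ Real.log (Φ x) := by
      calc -x ^ 2 / 2 - Real.log (-x) - 4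
          = Real.log (Real.exp (-x ^ 2 / 2 - Real.log (-x) - 4)) := (Real.log_exp _).symm
        _ ≤ Real.log (Φ x) := Real.log_le_log (Real.exp_pos _) hl
    have hlt : (4:ℝ) ≤ Real.log (-x) := by
      rw [show (4:ℝ) = Real.log (Real.exp 4) from (Real.log_exp 4).symm]
      exact Real.log_le_log (Real.exp_pos 4) (by linarith)
    have hA1 : x ^ 2 + 2 * Real.log (-x) ≤ -2 * Real.log (Φ x) := by linarith
    have hA3 : -2 * Real.log (Φ x) ≤ x ^ 2 + 4 * Real.log (-x) := by linarith
    have hs1 : -x ≤ Real.sqrt (-2 * Real.log (Φ x)) := by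
      rw [show -x = Real.sqrt ((-x) ^ 2) from (Real.sqrt_sq hx0.le).symm]
      exact Real.sqrt_le_sqrt (by nlinarith)
    have hs2 : Real.sqrt (-2 * Real.log (Φ x)) ≤ -x + 2 * (Real.log (-x) / (-x)) := by
      have hd : (0:ℝ) ≤ 2 * (Real.log (-x) / (-x)) := by positivity
      have hb : (0:ℝ) ≤ -x + 2 * (Real.log (-x) / (-x)) := by linarith
      rw [show -x + 2 * (Real.log (-x) / (-x))
          = Real.sqrt ((-x + 2 * (Real.log (-x) / (-x))) ^ 2) from (Real.sqrt_sq hb).symm]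
      apply Real.sqrt_le_sqrt
      have hxne : x ≠ 0 := by intro h; rw [h] at hx0; norm_num at hx0
      have hc : (-x) * (2 * (Real.log (-x) / (-x))) = 2 * Real.log (-x) := by
        field_simp
      nlinarith [sq_nonneg (2 * (Real.log (-x) / (-x)))]
    exact ⟨by linarith, by linarith⟩
  -- norm computation for the second part
  have hpart2core : ∀ x : ℝ, x ≤ -Real.exp 4 →
      ‖-Real.sqrt (-2 * Real.log (Φ x)) - x‖ ≤ 2 * ‖x * (Real.log |x| / x ^ 2)‖ := by
    intro x hx
    obtain ⟨hk1, hk2⟩ := hkey x hx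
    have hx0 : x < 0 := by nlinarith [Real.exp_pos (4:ℝ)]
    have hxa : |x| = -x := abs_of_neg hx0
    have hlt : (4:ℝ) ≤ Real.log (-x) := by
      rw [show (4:ℝ) = Real.log (Real.exp 4) from (Real.log_exp 4).symm]
      exact Real.log_le_log (Real.exp_pos 4) (by linarith)
    have h1 : ‖-Real.sqrt (-2 * Real.log (Φ x)) - x‖
        = Real.sqrt (-2 * Real.log (Φ x)) + x := by
      rw [Real.norm_eq_abs, show -Real.sqrt (-2 * Real.log (Φ x)) - x
        = -(Real.sqrt (-2 * Real.log (Φ x)) + x) by ring, abs_neg, abs_of_nonneg hk1]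
    have h2 : ‖x * (Real.log |x| / x ^ 2)‖ = Real.log (-x) / (-x) := by
      rw [Real.norm_eq_abs, hxa]
      have hnn : x * (Real.log (-x) / x ^ 2) ≤ 0 :=
        mul_nonpos_of_nonpos_of_nonneg hx0.le (by positivity)
      rw [abs_of_nonpos hnn]
      field_simp [hx0.ne]
    rw [h1, h2]
    linarith
  constructor
  · -- first part
    rw [Asymptotics.isBigO_iff]
    refine ⟨2, ?_⟩
    have hM1 : -Real.exp 4 ≤ -1 := by linarith
    have hMpos : 0 < Φ (-Real.exp 4) :=
      lt_of_lt_of_le (Real.exp_pos _) (hΦlb _ hM1)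
    have hMlt1 : Φ (-Real.exp 4) ≤ 1 := by
      have h := hΦub _ hM1
      simp only [neg_neg, neg_sq] at h
      have h2 : Real.exp (-(Real.exp 4) ^ 2 / 2 - Real.log (Real.exp 4)) < 1 := by
        apply Real.exp_lt_one_iff.2
        rw [Real.log_exp]
        nlinarith [Real.exp_pos (4:ℝ)]
      have h3 : -(Real.exp 4) ^ 2 / 2 - Real.log (Real.exp 4)
          = -Real.exp 4 ^ 2 / 2 - Real.log (Real.exp 4) := by ring
      rw [h3] at h2
      linarith
    filter_upwards [Ioo_mem_nhdsGT_of_mem (Set.mem_Ico.2 ⟨le_refl (0:ℝ), hMpos⟩)] with u hu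
    obtain ⟨hu0, hu1⟩ := hu
    have huI : u ∈ Set.Ioo (0:ℝ) 1 := ⟨hu0, lt_of_lt_of_le hu1 hMlt1⟩
    have hux : Φ (PhiInv u) = u := hinv u huI
    set x := PhiInv u with hxdef
    have hxlt : x ≤ -Real.exp 4 := by
      by_contra h
      push_neg at h
      have := hmono (-Real.exp 4) x h.le
      rw [hux] at this
      linarith
    obtain ⟨hk1, hk2⟩ := hkey x hxlt
    have hx1 : x ≤ -1 := by linarith
    have hx0 : (0:ℝ) < -x := by linarith
    have hl := hΦlb x hx1
    have hu' := hΦub x hx1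
    have hΦpos : 0 < Φ x := lt_of_lt_of_le (Real.exp_pos _) hl
    have hlog_u : Real.log (Φ x) ≤ -x ^ 2 / 2 - Real.log (-x) := by
      calc Real.log (Φ x) ≤ Real.log (Real.exp (-x ^ 2 / 2 - Real.log (-x))) :=
            Real.log_le_log hΦpos hu'
        _ = -x ^ 2 / 2 - Real.log (-x) := Real.log_exp _
    have hlog_l : -x ^ 2 / 2 - Real.log (-x) - 4 ≤ Real.log (Φ x) := by
      calc -x ^ 2 / 2 - Real.log (-x) - 4
          = Real.log (Real.exp (-x ^ 2 / 2 - Real.log (-x) - 4)) := (Real.log_exp _).symm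
        _ ≤ Real.log (Φ x) := Real.log_le_log (Real.exp_pos _) hl
    have hlt4 : (4:ℝ) ≤ Real.log (-x) := by
      rw [show (4:ℝ) = Real.log (Real.exp 4) from (Real.log_exp 4).symm]
      exact Real.log_le_log (Real.exp_pos 4) (by linarith)
    have hlogx_le : Real.log (-x) ≤ -x - 1 := by
      have := Real.log_le_sub_one_of_pos hx0
      linarith
    have hx5 : (5:ℝ) ≤ -x := by linarith
    -- P := -log (Φ x)
    have hP1 : x ^ 2 / 2 + Real.log (-x) ≤ -Real.log (Φ x) := by linarith
    have hP2 : -Real.log (Φ x) ≤ x ^ 2 := by nlinarith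
    have hPpos : 0 < -Real.log (Φ x) := by nlinarith
    have hlogneg : Real.log (Φ x) < 0 := by linarith
    -- lower bound on the comparison function
    have hz : Real.log (-x) / (-x) ≤
        -Real.sqrt (-2 * Real.log u) * (Real.log |Real.log u| / Real.log u) := by
      rw [← hux]
      have habs : |Real.log (Φ x)| = -Real.log (Φ x) := abs_of_neg hlogneg
      have hzeq : -Real.sqrt (-2 * Real.log (Φ x)) *
            (Real.log |Real.log (Φ x)| / Real.log (Φ x))
          = Real.sqrt (-2 * Real.log (Φ x)) * Real.log (-Real.log (Φ x))
              / (-Real.log (Φ x)) := by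
        rw [habs]; ring
      rw [hzeq]
      have hs1 : -x ≤ Real.sqrt (-2 * Real.log (Φ x)) := by
        rw [show -x = Real.sqrt ((-x) ^ 2) from (Real.sqrt_sq hx0.le).symm]
        exact Real.sqrt_le_sqrt (by nlinarith)
      have hlogP : Real.log (-x) ≤ Real.log (-Real.log (Φ x)) :=
        Real.log_le_log hx0 (by nlinarith)
      have hlogxpos : (0:ℝ) < Real.log (-x) := by linarith
      have hxne : x ≠ 0 := by intro h; rw [h] at hx0; norm_num at hx0
      have heq : Real.log (-x) / (-x) = (-x) * Real.log (-x) / ((-x) ^ 2) := by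
        field_simp
      rw [heq]
      apply div_le_div₀
      · exact mul_nonneg (Real.sqrt_nonneg _) (by linarith)
      · exact mul_le_mul hs1 hlogP hlogxpos.le (Real.sqrt_nonneg _)
      · exact hPpos
      · nlinarith
    -- now conclude
    have hlhs : ‖x - -Real.sqrt (-2 * Real.log u)‖ ≤ 2 * (Real.log (-x) / (-x)) := by
      rw [← hux, sub_neg_eq_add, Real.norm_eq_abs, add_comm,
        abs_of_nonneg hk1]
      exact hk2
    calc ‖x - -Real.sqrt (-2 * Real.log u)‖
        ≤ 2 * (Real.log (-x) / (-x)) := hlhs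
      _ ≤ 2 * (-Real.sqrt (-2 * Real.log u) * (Real.log |Real.log u| / Real.log u)) := by
          linarith
      _ ≤ 2 * ‖-Real.sqrt (-2 * Real.log u) * (Real.log |Real.log u| / Real.log u)‖ := by
          have := le_abs_self
            (-Real.sqrt (-2 * Real.log u) * (Real.log |Real.log u| / Real.log u))
          rw [Real.norm_eq_abs]
          linarith
  · -- second part
    rw [Asymptotics.isBigO_iff]
    refine ⟨2, ?_⟩
    filter_upwards [eventually_le_atBot (-Real.exp 4)] with x hx
    exact hpart2core x hx
end

section
/- Let λ(u) = 2Φ(Φ^{-1}(u)√((1-ρ)/(1+ρ))) for fixed ρ ∈ (-1, 1), where Φ is the standard Normal cdf. Then λ(u) ~ u^{(1-ρ)/(1+ρ)} L(u) as u → 0⁺, where L(u) = 2√((1+ρ)/(1-ρ)) (-4π log u)^{-ρ/(1+ρ)}. -/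
open Filter Topology Asymptotics Real MeasureTheory

section AuxMill

open Filter Topology Real MeasureTheory Set

noncomputable def gaussG (x : ℝ) : ℝ := ∫ t in Set.Iic x, Real.exp (-t^2/2)

lemma gauss_fun_eq : (fun t : ℝ => Real.exp (-t^2/2)) = fun t => Real.exp (-(1/2 : ℝ)*t^2) := by
  funext t; ring_nf

lemma gauss_integrable_s12 : Integrable (fun t : ℝ => Real.exp (-t^2/2)) := by
  rw [gauss_fun_eq]; exact integrable_exp_neg_mul_sq (by norm_num)

lemma gaussG_pos (x : ℝ) : 0 < gaussG x := by
  rw [gaussG, setIntegral_pos_iff_support_of_nonneg_ae]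
  · have : Function.support (fun t : ℝ => Real.exp (-t^2/2)) = Set.univ := by
      ext t; simp [Function.mem_support, (Real.exp_pos _).ne']
    rw [this, Set.univ_inter]
    simp [Real.volume_Iic]
  · exact Filter.Eventually.of_forall fun t => (Real.exp_pos _).le
  · exact gauss_integrable_s12.integrableOn

lemma gaussG_mono : Monotone gaussG := by
  intro a b hab
  exact setIntegral_mono_set gauss_integrable_s12.integrableOn
    (Filter.Eventually.of_forall fun t => (Real.exp_pos _).le)
    (HasSubset.Subset.eventuallyLE (Set.Iic_subset_Iic.2 hab))


lemma gauss_hasDerivAt (t : ℝ) :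
    HasDerivAt (fun t : ℝ => Real.exp (-t^2/2)) ((-t) * Real.exp (-t^2/2)) t := by
  have h : HasDerivAt (fun t : ℝ => -t^2/2) (-t) t := by
    have heq : (fun t : ℝ => -t^2/2) = fun s : ℝ => -(s^2/2) := by funext s; ring
    rw [heq]
    have := ((hasDerivAt_pow 2 t).div_const 2).neg
    simp at this; exact this
  simpa [mul_comm] using h.exp

lemma neg_sq_half_tendsto : Tendsto (fun t : ℝ => -t^2/2) atBot atBot := by
  have h1 : Tendsto (fun t : ℝ => t^2) atBot atTop := by
    have h2 : Tendsto (fun t : ℝ => (-t)^2) atBot atTop :=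
      (tendsto_pow_atTop (two_ne_zero)).comp tendsto_neg_atBot_atTop
    refine h2.congr fun t => by ring
  have := (h1.atTop_mul_const_of_neg (by norm_num : (-1/2 : ℝ) < 0))
  refine this.congr fun t => by ring

lemma gauss_tendsto_atBot :
    Tendsto (fun t : ℝ => Real.exp (-t^2/2)) atBot (𝓝 0) := by
  exact Real.tendsto_exp_atBot.comp neg_sq_half_tendsto

lemma gauss_deriv_integral {x : ℝ} (hx : 0 < x) :
    ∫ t in Set.Iic (-x), (-t) * Real.exp (-t^2/2) = Real.exp (-x^2/2) := by
  have h := integral_Iic_of_hasDerivAt_of_tendsto' (m := 0)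
    (f := fun t : ℝ => Real.exp (-t^2/2))
    (f' := fun t => (-t) * Real.exp (-t^2/2)) (a := -x)
    (fun t _ => gauss_hasDerivAt t) ?_ gauss_tendsto_atBot
  · rw [h]; ring_nf
  · have : Integrable (fun t : ℝ => (-t) * Real.exp (-t^2/2)) := by
      have h2 := (integrable_mul_exp_neg_mul_sq (b := (1/2:ℝ)) (by norm_num)).neg
      refine h2.congr (Filter.Eventually.of_forall fun t => ?_)
      simp only [Pi.neg_apply]; ring_nf
    exact this.integrableOn

lemma gaussG_upper {x : ℝ} (hx : 0 < x) : gaussG (-x) ≤ Real.exp (-x^2/2) / x := by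
  have key : gaussG (-x) ≤ ∫ t in Set.Iic (-x), (x⁻¹ * ((-t) * Real.exp (-t^2/2))) := by
    rw [gaussG]
    refine setIntegral_mono_on gauss_integrable_s12.integrableOn ?_ measurableSet_Iic ?_
    · have : Integrable (fun t : ℝ => x⁻¹ * ((-t) * Real.exp (-t^2/2))) := by
        have h2 := ((integrable_mul_exp_neg_mul_sq (b := (1/2:ℝ)) (by norm_num)).neg).const_mul x⁻¹
        refine h2.congr (Filter.Eventually.of_forall fun t => ?_)
        simp only [Pi.neg_apply]; ring_nf
      exact this.integrableOn
    · intro t ht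
      have ht' : x ≤ -t := by simpa using le_neg_of_le_neg ht
      have h1 : (1:ℝ) ≤ x⁻¹ * (-t) := by
        rw [inv_mul_eq_div]
        exact (one_le_div hx).2 ht'
      nlinarith [Real.exp_pos (-t^2/2)]
  rw [integral_const_mul, gauss_deriv_integral hx] at key
  rw [div_eq_inv_mul]; exact key

lemma gaussG_lower {x : ℝ} (hx : 0 < x) :
    Real.exp (-x^2/2) / x ≤ (1 + x⁻¹^2) * gaussG (-x) := by
  have hder : ∀ t ∈ Set.Iic (-x), HasDerivAt (fun t : ℝ => -(Real.exp (-t^2/2) * t⁻¹))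
      (Real.exp (-t^2/2) * (1 + t⁻¹^2)) t := by
    intro t ht
    have htne : t ≠ 0 := by intro h; rw [h] at ht; simp at ht; linarith
    have h1 : HasDerivAt (fun t : ℝ => -(Real.exp (-t^2/2) * t⁻¹)) _ t :=
      ((gauss_hasDerivAt t).mul ((hasDerivAt_id t).inv htne)).neg
    convert h1 using 1
    simp only [Pi.inv_apply, id_eq]
    field_simp
    ring
  have hint : IntegrableOn (fun t : ℝ => Real.exp (-t^2/2) * (1 + t⁻¹^2)) (Set.Iic (-x)) := by
    refine Integrable.mono' ((gauss_integrable_s12.const_mul (1 + x⁻¹^2)).integrableOn) ?_ ?_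
    · apply Measurable.aestronglyMeasurable
      measurability
    · filter_upwards [ae_restrict_mem measurableSet_Iic] with t ht
      have ht' : x ≤ -t := by simpa using le_neg_of_le_neg ht
      have htx : x^2 ≤ t^2 := by nlinarith
      have h2 : t⁻¹^2 ≤ x⁻¹^2 := by
        rw [← one_div, ← one_div, div_pow, div_pow]
        apply div_le_div_of_nonneg_left (by norm_num) (by positivity) htx
      rw [Real.norm_eq_abs, abs_of_nonneg (by positivity)]
      have := Real.exp_pos (-t^2/2)
      nlinarith
  have htend : Tendsto (fun t : ℝ => -(Real.exp (-t^2/2) * t⁻¹)) atBot (𝓝 0) := by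
    have h1 : Tendsto (fun t : ℝ => t⁻¹) atBot (𝓝 0) := by
      have h2 : Tendsto (fun t : ℝ => -t) atBot atTop := tendsto_neg_atBot_atTop
      have h3 := h2.inv_tendsto_atTop.neg
      have h4 : Tendsto (fun t : ℝ => -((fun t : ℝ => -t)⁻¹ t)) atBot (𝓝 0) := by
        simpa using h3
      refine h4.congr fun t => by simp [Pi.inv_apply, inv_neg]

    have := (gauss_tendsto_atBot.mul h1).neg
    simpa using this
  have h := integral_Iic_of_hasDerivAt_of_tendsto' (m := 0) hder hint htend
  rw [sub_zero] at h
  have key : ∫ t in Set.Iic (-x), Real.exp (-t^2/2) * (1 + t⁻¹^2)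
      ≤ ∫ t in Set.Iic (-x), Real.exp (-t^2/2) * (1 + x⁻¹^2) := by
    refine setIntegral_mono_on hint ((gauss_integrable_s12.mul_const (1 + x⁻¹^2)).integrableOn)
      measurableSet_Iic ?_
    intro t ht
    have ht' : x ≤ -t := by simpa using le_neg_of_le_neg ht
    have htx : x^2 ≤ t^2 := by nlinarith
    have h2 : t⁻¹^2 ≤ x⁻¹^2 := by
      rw [← one_div, ← one_div, div_pow, div_pow]
      apply div_le_div_of_nonneg_left (by norm_num) (by positivity) htx
    have := Real.exp_pos (-t^2/2)
    nlinarith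
  rw [h] at key
  rw [integral_mul_const, ← gaussG] at key
  have : -(Real.exp (-(-x)^2/2) * (-x)⁻¹) = Real.exp (-x^2/2)/x := by
    rw [neg_sq, inv_neg]
    ring
  rw [this] at key
  linarith [key]

noncomputable def millA (x : ℝ) : ℝ := gaussG (-x) * x * Real.exp (x^2/2)

lemma exp_prod (x : ℝ) : Real.exp (-x^2/2) * Real.exp (x^2/2) = 1 := by
  rw [← Real.exp_add, show -x^2/2 + x^2/2 = 0 by ring, Real.exp_zero]

lemma millA_pos {x : ℝ} (hx : 0 < x) : 0 < millA x := by
  have := gaussG_pos (-x)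
  rw [millA]; positivity

lemma millA_le_one {x : ℝ} (hx : 0 < x) : millA x ≤ 1 := by
  have h1 : gaussG (-x) * x ≤ Real.exp (-x^2/2) := (le_div_iff₀ hx).1 (gaussG_upper hx)
  have h2 := mul_le_mul_of_nonneg_right h1 (Real.exp_pos (x^2/2)).le
  rw [exp_prod] at h2
  exact h2

lemma millA_ge {x : ℝ} (hx : 0 < x) : (1 + x⁻¹^2)⁻¹ ≤ millA x := by
  have hc : (0:ℝ) < 1 + x⁻¹^2 := by positivity
  have h1 : Real.exp (-x^2/2) ≤ (1 + x⁻¹^2) * gaussG (-x) * x :=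
    (div_le_iff₀ hx).1 (gaussG_lower hx)
  have h2 := mul_le_mul_of_nonneg_right h1 (Real.exp_pos (x^2/2)).le
  rw [exp_prod] at h2
  rw [inv_eq_one_div, div_le_iff₀ hc]
  calc millA x * (1 + x⁻¹^2) = (1 + x⁻¹^2) * gaussG (-x) * x * Real.exp (x^2/2) := by
        rw [millA]; ring
  _ ≥ 1 := h2

lemma millA_tendsto : Tendsto millA atTop (𝓝 1) := by
  have hlow : Tendsto (fun x : ℝ => (1 + x⁻¹^2)⁻¹) atTop (𝓝 1) := by
    have h1 : Tendsto (fun x : ℝ => 1 + x⁻¹^2) atTop (𝓝 (1 + 0^2)) := by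
      exact tendsto_const_nhds.add (tendsto_inv_atTop_zero.pow 2)
    have h2 := h1.inv₀ (by norm_num)
    simpa using h2
  refine tendsto_of_tendsto_of_tendsto_of_le_of_le' hlow tendsto_const_nhds ?_ ?_
  · filter_upwards [eventually_ge_atTop (1:ℝ)] with x hx
    exact millA_ge (by linarith)
  · filter_upwards [eventually_ge_atTop (1:ℝ)] with x hx
    exact millA_le_one (by linarith)

lemma gaussG_eq_millA {x : ℝ} (hx : 0 < x) :
    gaussG (-x) = millA x * Real.exp (-x^2/2) / x := by
  rw [millA]
  field_simp
  have := exp_prod x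
  rw [show -x^2/2 = -(x^2/2) by ring] at this
  linear_combination gaussG (-x) * this.symm

lemma log_millA_tendsto : Tendsto (fun x => Real.log (millA x)) atTop (𝓝 0) := by
  have := (Real.continuousAt_log one_ne_zero).tendsto.comp millA_tendsto
  simpa [Function.comp_def] using this


end AuxMill

set_option maxHeartbeats 1600000 in
/-- λ(u) = 2Φ(Φ⁻¹(u)√((1-ρ)/(1+ρ))) is regularly varying at 0 with index
(1-ρ)/(1+ρ) and explicit slowly varying part. -/
theorem lambda_regular_variation
    (Φ PhiInv : ℝ → ℝ) (ρ : ℝ) (hρ : ρ ∈ Set.Ioo (-1 : ℝ) 1)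
    (hΦ : ∀ x, Φ x = ∫ t in Set.Iic x, Real.exp (-t ^ 2 / 2) / Real.sqrt (2 * Real.pi))
    (hinv : ∀ u ∈ Set.Ioo (0:ℝ) 1, Φ (PhiInv u) = u) :
    Tendsto (fun u =>
        (2 * Φ (PhiInv u * Real.sqrt ((1 - ρ) / (1 + ρ)))) /
        (u ^ ((1 - ρ) / (1 + ρ)) *
          (2 * Real.sqrt ((1 + ρ) / (1 - ρ)) *
            (-4 * Real.pi * Real.log u) ^ (-ρ / (1 + ρ)))))
      (𝓝[>] (0:ℝ)) (𝓝 1) := by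
  obtain ⟨hρ1, hρ2⟩ := hρ
  have hπ := Real.pi_pos
  set S := Real.sqrt (2*Real.pi) with hSdef
  have hS : 0 < S := Real.sqrt_pos.2 (by linarith)
  have hlogS : Real.log S = (Real.log 2 + Real.log Real.pi)/2 := by
    rw [hSdef, Real.log_sqrt (by linarith), Real.log_mul two_ne_zero hπ.ne']
  have h1ρ : 0 < 1 + ρ := by linarith
  have h1ρ' : 0 < 1 - ρ := by linarith
  set α : ℝ := (1-ρ)/(1+ρ) with hαdef
  have hα : 0 < α := div_pos h1ρ' h1ρ
  set c : ℝ := Real.sqrt α with hcdef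
  have hc : 0 < c := Real.sqrt_pos.2 hα
  have hc2 : c^2 = α := Real.sq_sqrt hα.le
  set E : ℝ := -ρ/(1+ρ) with hEdef
  have hα21 : α = 2*E + 1 := by rw [hαdef, hEdef]; field_simp; ring
  have hcinv : Real.sqrt ((1+ρ)/(1-ρ)) = c⁻¹ := by
    rw [hcdef, ← Real.sqrt_inv]
    congr 1
    rw [hαdef, inv_div]
  have hΦG : ∀ y, Φ y = gaussG y / S := fun y => by
    rw [hΦ y, gaussG, ← integral_div]
  have hΦpos : ∀ y, 0 < Φ y := fun y => by
    rw [hΦG]; exact div_pos (gaussG_pos y) hS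
  have hΦmono : Monotone Φ := fun a b hab => by
    rw [hΦG, hΦG]; exact (div_le_div_iff_of_pos_right hS).2 (gaussG_mono hab)
  -- PhiInv tends to -infinity
  have hXtend : Tendsto (fun u => -PhiInv u) (𝓝[>](0:ℝ)) atTop := by
    rw [tendsto_atTop]
    intro M
    set M' := max M 1 with hM'
    have hε : 0 < min (Φ (-M')) 1 := lt_min (hΦpos _) one_pos
    filter_upwards [Ioo_mem_nhdsGT hε] with u hu
    have hu01 : u ∈ Set.Ioo (0:ℝ) 1 := ⟨hu.1, lt_of_lt_of_le hu.2 (min_le_right _ _)⟩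
    have hlt : u < Φ (-M') := lt_of_lt_of_le hu.2 (min_le_left _ _)
    by_contra hcon
    push_neg at hcon
    have h1 : -M' ≤ PhiInv u := by
      have h2 : M ≤ M' := le_max_left _ _
      linarith
    have h2 := hΦmono h1
    rw [hinv u hu01] at h2
    linarith
  -- eventual basic facts
  have hev : ∀ᶠ u in 𝓝[>](0:ℝ), u ∈ Set.Ioo (0:ℝ) 1 ∧ 1 ≤ -PhiInv u := by
    filter_upwards [Ioo_mem_nhdsGT one_pos, hXtend.eventually_ge_atTop 1] with u h1 h2
    exact ⟨h1, h2⟩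
  -- the log identity for u
  have hlogu : ∀ᶠ u in 𝓝[>](0:ℝ), Real.log u =
      Real.log (millA (-PhiInv u)) - (-PhiInv u)^2/2 - Real.log (-PhiInv u) - Real.log S := by
    filter_upwards [hev] with u hu
    obtain ⟨hu01, hx1⟩ := hu
    have hx : (0:ℝ) < -PhiInv u := by linarith
    have hueq : u = millA (-PhiInv u) * Real.exp (-(-PhiInv u)^2/2) / (-PhiInv u) / S := by
      conv_lhs => rw [← hinv u hu01]
      rw [hΦG, ← gaussG_eq_millA hx, neg_neg]
    calc Real.log u
        = Real.log (millA (-PhiInv u) * Real.exp (-(-PhiInv u)^2/2) / (-PhiInv u) / S) := by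
          rw [← hueq]
      _ = _ := by
          rw [Real.log_div (div_pos (mul_pos (millA_pos hx) (Real.exp_pos _)) hx).ne' hS.ne',
            Real.log_div (mul_pos (millA_pos hx) (Real.exp_pos _)).ne' hx.ne',
            Real.log_mul (millA_pos hx).ne' (Real.exp_ne_zero _), Real.log_exp]
          ring
  -- the ratio x^2 / (-2 log u) tends to 1
  have hQ : Tendsto (fun y : ℝ => 1 + (-2*Real.log (millA y) + 2*Real.log y + 2*Real.log S)/y^2)
      atTop (𝓝 1) := by
    have r1 : Tendsto (fun y : ℝ => (y^2)⁻¹) atTop (𝓝 0) :=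
      (tendsto_pow_atTop two_ne_zero).inv_tendsto_atTop
    have r2 : Tendsto (fun y : ℝ => Real.log y / y) atTop (𝓝 0) := by
      have := Real.isLittleO_log_id_atTop.tendsto_div_nhds_zero
      exact this
    have q1 := (log_millA_tendsto.const_mul (-2 : ℝ)).mul r1
    have q2 := (r2.mul tendsto_inv_atTop_zero).const_mul (2:ℝ)
    have q3 := r1.const_mul (2*Real.log S)
    have hsum := (q1.add q2).add q3
    have hsum0 : Tendsto (fun y : ℝ =>
        (-2*Real.log (millA y) + 2*Real.log y + 2*Real.log S)/y^2) atTop (𝓝 0) := by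
      have heq : (fun y : ℝ => (-2*Real.log (millA y) + 2*Real.log y + 2*Real.log S)/y^2)
          = fun y : ℝ => (-2 : ℝ)*Real.log (millA y) * (y^2)⁻¹
              + (2:ℝ)*(Real.log y / y * y⁻¹) + 2*Real.log S * (y^2)⁻¹ := by
        funext y; ring
      rw [heq]
      have h0 : ((-2:ℝ)*0*0 + 2*(0*0)) + 2*Real.log S*0 = 0 := by ring
      rw [h0] at hsum
      exact hsum
    have h7 := (tendsto_const_nhds (x := (1:ℝ)) (f := atTop (α := ℝ))).add hsum0
    rw [add_zero] at h7
    exact h7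
  have t3 : Tendsto (fun u => (-PhiInv u)^2 / (-2 * Real.log u)) (𝓝[>](0:ℝ)) (𝓝 1) := by
    have h1 : Tendsto (fun u => (-2*Real.log u)/(-PhiInv u)^2) (𝓝[>](0:ℝ)) (𝓝 1) := by
      refine Filter.Tendsto.congr' ?_ (hQ.comp hXtend)
      filter_upwards [hev, hlogu] with u hu hlu
      obtain ⟨hu01, hx1⟩ := hu
      have hx : (0:ℝ) < -PhiInv u := by linarith
      simp only [Function.comp_apply]
      have hx2 : ((-PhiInv u):ℝ)^2 ≠ 0 := pow_ne_zero 2 hx.ne'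
      rw [eq_div_iff hx2, add_mul, div_mul_cancel₀ _ hx2, hlu]
      ring
    have h2 := h1.inv₀ one_ne_zero
    rw [inv_one] at h2
    refine Filter.Tendsto.congr' ?_ h2
    filter_upwards with u
    rw [inv_div]
  -- limit of the exponent
  have hT : Tendsto (fun u => Real.log (millA (c * -PhiInv u)) - α * Real.log (millA (-PhiInv u))
      + E * Real.log ((-PhiInv u)^2 / (-2 * Real.log u))) (𝓝[>](0:ℝ)) (𝓝 0) := by
    have t1 : Tendsto (fun u => Real.log (millA (c * -PhiInv u))) (𝓝[>](0:ℝ)) (𝓝 0) := by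
      have hc' : Tendsto (fun y : ℝ => c * y) atTop atTop :=
        Tendsto.const_mul_atTop hc tendsto_id
      exact log_millA_tendsto.comp (hc'.comp hXtend)
    have t2 : Tendsto (fun u => α * Real.log (millA (-PhiInv u))) (𝓝[>](0:ℝ)) (𝓝 (α * 0)) :=
      (log_millA_tendsto.comp hXtend).const_mul α
    have t4 : Tendsto (fun u => E * Real.log ((-PhiInv u)^2 / (-2 * Real.log u)))
        (𝓝[>](0:ℝ)) (𝓝 (E * Real.log 1)) :=
      (((Real.continuousAt_log one_ne_zero).tendsto).comp t3).const_mul E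
    have h5 := (t1.sub t2).add t4
    have h0 : ((0:ℝ) - α * 0) + E * Real.log 1 = 0 := by simp
    rw [h0] at h5
    exact h5
  -- conclude
  have hexp : Tendsto (fun u => Real.exp
      (Real.log (millA (c * -PhiInv u)) - α * Real.log (millA (-PhiInv u))
        + E * Real.log ((-PhiInv u)^2 / (-2 * Real.log u)))) (𝓝[>](0:ℝ)) (𝓝 1) := by
    have h6 := (Real.continuous_exp.tendsto 0).comp hT
    rw [Real.exp_zero] at h6
    exact h6
  refine Filter.Tendsto.congr' ?_ hexp
  filter_upwards [hev, hlogu] with u hu hlu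
  obtain ⟨hu01, hx1⟩ := hu
  have hx : (0:ℝ) < -PhiInv u := by linarith
  have hcx : (0:ℝ) < c * -PhiInv u := mul_pos hc hx
  have hbpos : 0 < millA (c * -PhiInv u) := millA_pos hcx
  have hapos : 0 < millA (-PhiInv u) := millA_pos hx
  have hlogneg : Real.log u < 0 := Real.log_neg hu01.1 hu01.2
  have hL : (0:ℝ) < -Real.log u := by linarith
  have hbase : (0:ℝ) < -4*Real.pi*Real.log u := by nlinarith
  rw [hcinv]
  have hPhi1 : Φ (PhiInv u * c)
      = millA (c * -PhiInv u) * Real.exp (-(c * -PhiInv u)^2/2) / (c * -PhiInv u) / S := by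
    rw [show PhiInv u * c = -(c * -PhiInv u) by ring, hΦG, gaussG_eq_millA hcx]
  have hN : 0 < 2 * Φ (PhiInv u * c) := by have := hΦpos (PhiInv u * c); linarith
  have hD : 0 < u^α * (2*c⁻¹*(-4*Real.pi*Real.log u)^E) :=
    mul_pos (Real.rpow_pos_of_pos hu01.1 α)
      (mul_pos (mul_pos two_pos (inv_pos.2 hc)) (Real.rpow_pos_of_pos hbase E))
  rw [← Real.exp_log (div_pos hN hD)]
  congr 1
  rw [Real.log_div hN.ne' hD.ne']
  have hlogN : Real.log (2 * Φ (PhiInv u * c)) =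
      Real.log 2 + (Real.log (millA (c * -PhiInv u)) - α*(-PhiInv u)^2/2
        - (Real.log c + Real.log (-PhiInv u)) - Real.log S) := by
    have hce : (c * -PhiInv u)^2 = α * (-PhiInv u)^2 := by rw [mul_pow, hc2]
    rw [Real.log_mul two_ne_zero (hΦpos _).ne', hPhi1,
      Real.log_div (div_pos (mul_pos hbpos (Real.exp_pos _)) hcx).ne' hS.ne',
      Real.log_div (mul_pos hbpos (Real.exp_pos _)).ne' hcx.ne',
      Real.log_mul hbpos.ne' (Real.exp_ne_zero _), Real.log_exp,
      Real.log_mul hc.ne' hx.ne', hce]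
    ring
  have hlogD : Real.log (u^α * (2*c⁻¹*(-4*Real.pi*Real.log u)^E)) =
      α * Real.log u + (Real.log 2 - Real.log c
        + E * (2*Real.log 2 + Real.log Real.pi + Real.log (-Real.log u))) := by
    rw [Real.log_mul (Real.rpow_pos_of_pos hu01.1 α).ne'
        (mul_pos (mul_pos two_pos (inv_pos.2 hc)) (Real.rpow_pos_of_pos hbase E)).ne',
      Real.log_rpow hu01.1,
      Real.log_mul (mul_pos two_pos (inv_pos.2 hc)).ne' (Real.rpow_pos_of_pos hbase E).ne',
      Real.log_mul two_ne_zero (inv_ne_zero hc.ne'), Real.log_inv,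
      Real.log_rpow hbase,
      show -4*Real.pi*Real.log u = 2^2*Real.pi*(-Real.log u) by ring,
      Real.log_mul (by positivity) hL.ne',
      Real.log_mul (by positivity) hπ.ne', Real.log_pow]
    push_cast
    ring
  have hlograt : Real.log ((-PhiInv u)^2/(-2*Real.log u)) =
      2*Real.log (-PhiInv u) - (Real.log 2 + Real.log (-Real.log u)) := by
    have h2L : (0:ℝ) < -2*Real.log u := by linarith
    rw [Real.log_div (pow_ne_zero 2 hx.ne') h2L.ne',
      show (-2*Real.log u) = 2*(-Real.log u) by ring,
      Real.log_mul two_ne_zero hL.ne', Real.log_pow]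
    push_cast
    ring
  rw [hlogN, hlogD, hlograt, hα21]
  linear_combination (2*E+1) * hlu - (2*E) * hlogS
end

section
/- Let X ~ Γ(α, β) with density f(x) = (β^α/Γ(α)) x^{α-1} e^{-βx} for x > 0, with α ≠ 1. Then the cdf g satisfies g(x) = 1 - (β^{α-1}/Γ(α)) x^{α-1} e^{-βx}(1 + O(1/x)) as x → ∞, and the quantile function h = g^{-1} satisfies, as u → 1⁻: h(u) = -(1/β) log(1-u) + ((α-1)/β) log|log(1-u)| - (1/β) log Γ(α) + O(log|log(1-u)|/|log(1-u)|). -/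
open Filter Topology Asymptotics Real MeasureTheory

open Set

lemma gq_integrable (p b x : ℝ) (hb : 0 < b) (hx : 0 < x) :
    IntegrableOn (fun t : ℝ => t ^ p * Real.exp (-b*t)) (Ioi x) := by
  apply integrable_of_isBigO_exp_neg (half_pos hb)
  · apply ContinuousOn.mul
    · exact fun t ht => (Real.continuousAt_rpow_const t p
        (Or.inl (ne_of_gt (lt_of_lt_of_le hx ht)))).continuousWithinAt
    · exact (Real.continuous_exp.comp (continuous_const.mul continuous_id)).continuousOn
  · have h1 := (tendsto_rpow_mul_exp_neg_mul_atTop_nhds_zero p (b/2)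
      (half_pos hb)).isBigO_one (F := ℝ)
    have h2 := h1.mul (isBigO_refl (fun t : ℝ => Real.exp (-(b/2)*t)) atTop)
    refine h2.congr (fun t => ?_) (fun t => one_mul _)
    rw [mul_assoc, ← Real.exp_add]; ring_nf

lemma gq_exp_int (b x : ℝ) (hb : 0 < b) : ∫ t in Ioi x, Real.exp (-b*t) = (1/b) * Real.exp (-b*x) := by
  have hder : ∀ t ∈ Ici x, HasDerivAt (fun t : ℝ => -(1/b) * Real.exp (-b*t)) (Real.exp (-b*t)) t := by
    intro t _
    have h2 : HasDerivAt (fun t : ℝ => Real.exp (-b*t)) (Real.exp (-b*t) * (-b)) t := by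
      simpa using ((hasDerivAt_id t).const_mul (-b)).exp
    have := h2.const_mul (-(1/b))
    refine this.congr_deriv ?_
    linear_combination (Real.exp (-b*t)) * mul_inv_cancel₀ hb.ne'
  have hlim : Tendsto (fun t : ℝ => -(1/b) * Real.exp (-b*t)) atTop (𝓝 0) := by
    have : Tendsto (fun t : ℝ => Real.exp (-b*t)) atTop (𝓝 0) :=
      Real.tendsto_exp_atBot.comp (tendsto_id.const_mul_atTop_of_neg (neg_neg_iff_pos.2 hb))
    simpa using this.const_mul (-(1/b))
  have := integral_Ioi_of_hasDerivAt_of_tendsto' hder (exp_neg_integrableOn_Ioi x hb) hlim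
  rw [this]; ring

lemma gq_ftc (p b x : ℝ) (hb : 0 < b) (hx : 0 < x) :
    ∫ t in Ioi x, t ^ p * Real.exp (-b*t) =
      (1/b) * (x ^ p * Real.exp (-b*x)) + (p/b) * ∫ t in Ioi x, t ^ (p-1) * Real.exp (-b*t) := by
  have hder : ∀ t ∈ Ici x, HasDerivAt (fun t : ℝ => -(1/b) * (t ^ p * Real.exp (-b*t)))
      (t ^ p * Real.exp (-b*t) - (p/b) * (t ^ (p-1) * Real.exp (-b*t))) t := by
    intro t ht
    have ht0 : t ≠ 0 := ne_of_gt (lt_of_lt_of_le hx ht)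
    have h1 : HasDerivAt (fun t : ℝ => t ^ p) (p * t ^ (p-1)) t :=
      Real.hasDerivAt_rpow_const (Or.inl ht0)
    have h2 : HasDerivAt (fun t : ℝ => Real.exp (-b*t)) (Real.exp (-b*t) * (-b)) t := by
      simpa using ((hasDerivAt_id t).const_mul (-b)).exp
    have := (h1.mul h2).const_mul (-(1/b))
    refine this.congr_deriv ?_
    linear_combination (t ^ p * Real.exp (-b*t)) * mul_inv_cancel₀ hb.ne'
  have hlim : Tendsto (fun t : ℝ => -(1/b) * (t ^ p * Real.exp (-b*t))) atTop (𝓝 0) := by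
    simpa using (tendsto_rpow_mul_exp_neg_mul_atTop_nhds_zero p b hb).const_mul (-(1/b))
  have hint1 := gq_integrable p b x hb hx
  have hint2 := (gq_integrable (p-1) b x hb hx).const_mul (p/b)
  have := integral_Ioi_of_hasDerivAt_of_tendsto' hder (hint1.sub hint2) hlim
  rw [integral_sub hint1 hint2, MeasureTheory.integral_const_mul] at this
  simp only [zero_sub, neg_neg] at this
  linarith

lemma gq_mono (p b : ℝ) (hb : 0 < b) {x t : ℝ} (h1 : 1 ≤ x) (h2 : 2*|p|/b ≤ x)
    (ht : x ≤ t) : t ^ p * Real.exp (-(b/2)*t) ≤ x ^ p * Real.exp (-(b/2)*x) := by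
  have hx0 : 0 < x := lt_of_lt_of_le one_pos h1
  have ht0 : 0 < t := lt_of_lt_of_le hx0 ht
  rw [Real.rpow_def_of_pos hx0, Real.rpow_def_of_pos ht0, ← Real.exp_add, ← Real.exp_add]
  apply Real.exp_le_exp.2
  have hlog : Real.log t - Real.log x ≤ (t - x)/x := by
    have h := Real.log_le_sub_one_of_pos (x := t/x) (by positivity)
    rw [Real.log_div ht0.ne' hx0.ne'] at h
    have : t/x - 1 = (t-x)/x := by field_simp
    linarith [this ▸ h]
  have hlog0 : 0 ≤ Real.log t - Real.log x := by
    have := Real.log_le_log hx0 ht; linarith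
  have hp2 : |p| ≤ b*x/2 := by
    rw [div_le_iff₀ hb] at h2; nlinarith
  have key : p * (Real.log t - Real.log x) ≤ (b/2) * (t - x) := by
    rcases le_total p 0 with hp | hp
    · have : p * (Real.log t - Real.log x) ≤ 0 := mul_nonpos_of_nonpos_of_nonneg hp hlog0
      nlinarith
    · have h3 : p * (Real.log t - Real.log x) ≤ p * ((t-x)/x) :=
        mul_le_mul_of_nonneg_left hlog hp
      have h4 : p * ((t-x)/x) ≤ (b/2) * (t - x) := by
        rw [abs_of_nonneg hp] at hp2
        rw [mul_div_assoc']
        rw [div_le_iff₀ hx0]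
        nlinarith
      linarith
  nlinarith

lemma gq_tail_bound (p b x : ℝ) (hb : 0 < b) (h1 : 1 ≤ x) (h2 : 2*|p|/b ≤ x) :
    ∫ t in Ioi x, t ^ p * Real.exp (-b*t) ≤ (2/b) * (x ^ p * Real.exp (-b*x)) := by
  have hx0 : 0 < x := lt_of_lt_of_le one_pos h1
  have hInt := gq_integrable p b x hb hx0
  have hmaj : IntegrableOn (fun t => (x ^ p * Real.exp (-(b/2)*x)) * Real.exp (-(b/2)*t)) (Ioi x) :=
    (exp_neg_integrableOn_Ioi x (half_pos hb)).const_mul _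
  have hle : ∀ t ∈ Ioi x, t ^ p * Real.exp (-b*t) ≤
      (x ^ p * Real.exp (-(b/2)*x)) * Real.exp (-(b/2)*t) := by
    intro t ht
    have key := gq_mono p b hb h1 h2 (le_of_lt ht)
    calc t ^ p * Real.exp (-b*t) = (t ^ p * Real.exp (-(b/2)*t)) * Real.exp (-(b/2)*t) := by
          rw [mul_assoc, ← Real.exp_add]; ring_nf
      _ ≤ (x ^ p * Real.exp (-(b/2)*x)) * Real.exp (-(b/2)*t) :=
          mul_le_mul_of_nonneg_right key (Real.exp_pos _).le
  have hm := setIntegral_mono_on hInt hmaj measurableSet_Ioi hle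
  rw [MeasureTheory.integral_const_mul, gq_exp_int (b/2) x (half_pos hb)] at hm
  calc ∫ t in Ioi x, t ^ p * Real.exp (-b*t) ≤
      x ^ p * Real.exp (-(b/2)*x) * (1/(b/2) * Real.exp (-(b/2)*x)) := hm
    _ = (2/b) * (x ^ p * Real.exp (-b*x)) := by
        rw [show (-b*x) = (-(b/2)*x) + (-(b/2)*x) by ring, Real.exp_add]
        field_simp

lemma gq_abs_log {y : ℝ} (h1 : 1/2 ≤ y) (h2 : y ≤ 2) : |Real.log y| ≤ 2 * |y - 1| := by
  have hy : 0 < y := by linarith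
  rcases le_total 1 y with h | h
  · rw [abs_of_nonneg (Real.log_nonneg h), abs_of_nonneg (by linarith)]
    have := Real.log_le_sub_one_of_pos hy; linarith
  · rw [abs_of_nonpos (Real.log_nonpos (by linarith) h), abs_of_nonpos (by linarith)]
    have h3 := Real.log_le_sub_one_of_pos (x := y⁻¹) (by positivity)
    rw [Real.log_inv] at h3
    have h4 : y * y⁻¹ = 1 := mul_inv_cancel₀ hy.ne'
    nlinarith

lemma gq_mass (α β : ℝ) (hα : 0 < α) (hβ : 0 < β) :
    ∫ t in Ioi (0:ℝ), (β ^ α / Real.Gamma α) * t ^ (α - 1) * Real.exp (-β * t) = 1 := by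
  simp_rw [mul_assoc, MeasureTheory.integral_const_mul, neg_mul]
  rw [integral_rpow_mul_exp_neg_mul_Ioi hα hβ, one_div, Real.inv_rpow hβ.le]
  field_simp [(Real.rpow_pos_of_pos hβ α).ne', (Real.Gamma_pos_of_pos hα).ne']

lemma gq_intf (α β : ℝ) (hα : 0 < α) (hβ : 0 < β) :
    IntegrableOn (fun t : ℝ => (β ^ α / Real.Gamma α) * t ^ (α - 1) * Real.exp (-β * t))
      (Ioi 0) := by
  have := integrableOn_rpow_mul_exp_neg_mul_rpow (s := α-1) (p := 1)
    (by linarith) one_pos hβ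
  simp_rw [Real.rpow_one] at this
  simpa [mul_assoc, IntegrableOn] using this.const_mul (β ^ α / Real.Gamma α)

lemma gq_tail (α β : ℝ) (hα : 0 < α) (hβ : 0 < β) :
    ∃ K x₀ : ℝ, 0 ≤ K ∧ 1 ≤ x₀ ∧ ∀ x, x₀ ≤ x →
      |(∫ t in Ioi x, (β ^ α / Real.Gamma α) * t ^ (α - 1) * Real.exp (-β * t)) -
        (β ^ (α-1) / Real.Gamma α) * (x ^ (α-1) * Real.exp (-β * x))| ≤
      K * (x ^ (α-1) * Real.exp (-β * x) / x) := by
  have hc : 0 < β ^ α / Real.Gamma α := by positivity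
  refine ⟨(β ^ α / Real.Gamma α) * |α-1| / β * (2/β), max 1 (2*|α-1-1|/β), by positivity,
    le_max_left _ _, fun x hx => ?_⟩
  have hx1 : 1 ≤ x := le_trans (le_max_left _ _) hx
  have hx0 : 0 < x := lt_of_lt_of_le one_pos hx1
  have hx2 : 2*|α-1-1|/β ≤ x := le_trans (le_max_right _ _) hx
  have hI : ∫ t in Ioi x, (β ^ α / Real.Gamma α) * t ^ (α-1) * Real.exp (-β*t)
      = (β ^ α / Real.Gamma α) * ∫ t in Ioi x, t ^ (α-1) * Real.exp (-β*t) := by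
    simp_rw [mul_assoc]; exact MeasureTheory.integral_const_mul _ _
  have hftc := gq_ftc (α-1) β x hβ hx0
  have hJ0 : 0 ≤ ∫ t in Ioi x, t ^ (α-1-1) * Real.exp (-β*t) :=
    setIntegral_nonneg measurableSet_Ioi (fun t ht =>
      mul_nonneg (Real.rpow_nonneg (le_of_lt (lt_trans hx0 ht)) _) (Real.exp_pos _).le)
  have hJb := gq_tail_bound (α-1-1) β x hβ hx1 hx2
  have hAc : β ^ (α-1) / Real.Gamma α = (β ^ α / Real.Gamma α) / β := by
    rw [Real.rpow_sub hβ, Real.rpow_one]; ring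
  rw [hAc, hI, hftc]
  have heq : (β ^ α / Real.Gamma α) *
        ((1/β) * (x ^ (α-1) * Real.exp (-β*x)) + ((α-1)/β) * ∫ t in Ioi x, t ^ (α-1-1) * Real.exp (-β*t))
        - (β ^ α / Real.Gamma α)/β * (x ^ (α-1) * Real.exp (-β*x))
      = ((β ^ α / Real.Gamma α) * (α-1) / β) * ∫ t in Ioi x, t ^ (α-1-1) * Real.exp (-β*t) := by
    ring
  rw [heq, abs_mul, abs_of_nonneg hJ0, abs_div, abs_mul, abs_of_pos hc, abs_of_pos hβ]
  calc (β ^ α / Real.Gamma α) * |α-1| / β * ∫ t in Ioi x, t ^ (α-1-1) * Real.exp (-β*t)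
      ≤ (β ^ α / Real.Gamma α) * |α-1| / β * ((2/β) * (x ^ (α-1-1) * Real.exp (-β*x))) := by
        apply mul_le_mul_of_nonneg_left hJb (by positivity)
    _ = (β ^ α / Real.Gamma α) * |α-1| / β * (2/β) * (x ^ (α-1) * Real.exp (-β*x) / x) := by
        rw [Real.rpow_sub hx0 (α-1) 1, Real.rpow_one]; ring
noncomputable def gqT (α β : ℝ) (x : ℝ) : ℝ :=
  ∫ t in Ioi x, (β ^ α / Real.Gamma α) * t ^ (α - 1) * Real.exp (-β * t)

lemma gqT_pos (α β : ℝ) (hα : 0 < α) (hβ : 0 < β) {x : ℝ} (hx : 0 < x) : 0 < gqT α β x := by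
  rw [gqT, setIntegral_pos_iff_support_of_nonneg_ae]
  · have hss : (Function.support fun t : ℝ =>
        (β ^ α / Real.Gamma α) * t ^ (α - 1) * Real.exp (-β * t)) ∩ Ioi x = Ioi x := by
      rw [inter_eq_right]
      intro t ht
      have ht0 : 0 < t := lt_trans hx ht
      have : 0 < (β ^ α / Real.Gamma α) * t ^ (α - 1) * Real.exp (-β * t) := by
        have := Real.rpow_pos_of_pos ht0 (α - 1)
        positivity
      exact Function.mem_support.2 this.ne'
    rw [hss, Real.volume_Ioi]
    simp
  · refine eventually_of_mem (self_mem_ae_restrict measurableSet_Ioi) (fun t ht => ?_)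
    have ht0 : 0 < t := lt_trans hx ht
    have := Real.rpow_pos_of_pos ht0 (α - 1)
    positivity
  · have := gq_intf α β hα hβ
    exact this.mono_set (Ioi_subset_Ioi hx.le)
lemma gq_key (α β : ℝ) (hα : 0 < α) (hβ : 0 < β) :
    ∃ C : ℝ, ∀ᶠ x in atTop,
      Real.exp 1 ≤ -Real.log (gqT α β x) ∧
      |x - ((-Real.log (gqT α β x))/β + ((α-1)/β) * Real.log (-Real.log (gqT α β x))
          - (1/β) * Real.log (Real.Gamma α))| ≤
        C * (Real.log (-Real.log (gqT α β x)) / (-Real.log (gqT α β x))) := by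
  obtain ⟨K, x₀, hK0, hx₀1, htail⟩ := gq_tail α β hα hβ
  have hΓ : 0 < Real.Gamma α := Real.Gamma_pos_of_pos hα
  set A := β ^ (α-1) / Real.Gamma α with hA_def
  have hA : 0 < A := by rw [hA_def]; positivity
  refine ⟨(|α-1| * (4*|α-1| + 2*|Real.log A| + 2) + 3*K*β/A)/β, ?_⟩
  have ev3 : ∀ᶠ x in atTop, |α-1| * Real.log x + (|Real.log A| + 1) ≤ (β/2) * x := by
    have hlo : (fun x : ℝ => |α-1| * Real.log x + (|Real.log A| + 1)) =o[atTop]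
        (fun x : ℝ => x) := by
      exact (isLittleO_log_id_atTop.const_mul_left |α-1|).add
        (isLittleO_const_id_atTop (E'' := ℝ) (|Real.log A| + 1))
    filter_upwards [hlo.bound (half_pos hβ), eventually_ge_atTop (0:ℝ)] with x hx hx0
    calc |α-1| * Real.log x + (|Real.log A| + 1)
        ≤ ‖|α-1| * Real.log x + (|Real.log A| + 1)‖ := le_abs_self _
      _ ≤ β/2 * ‖x‖ := hx
      _ = (β/2) * x := by rw [Real.norm_of_nonneg hx0]
  have ev4 : ∀ᶠ x in atTop,
      Real.exp 1 + Real.exp |Real.log (2/β)| ≤ (β/2) * x := by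
    filter_upwards [eventually_ge_atTop ((Real.exp 1 + Real.exp |Real.log (2/β)|)/(β/2))]
      with x hx
    rw [div_le_iff₀ (half_pos hβ)] at hx
    linarith
  filter_upwards [eventually_ge_atTop x₀, eventually_ge_atTop (2*(K/A)), ev3, ev4,
    eventually_ge_atTop (1:ℝ)] with x hx1 hx2 hx3 hx4 hx5
  have hx0 : 0 < x := lt_of_lt_of_le one_pos hx5
  have hE : 0 < x ^ (α-1) * Real.exp (-β*x) := by
    have := Real.rpow_pos_of_pos hx0 (α-1); positivity
  set E := x ^ (α-1) * Real.exp (-β*x) with hE_def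
  set T := gqT α β x with hT_def
  have htx : |T - A * E| ≤ K * (E / x) := htail x hx1
  have hAE : 0 < A * E := mul_pos hA hE
  set ρ := T / (A * E) with hρ_def
  have hρ1 : |ρ - 1| ≤ K/A * (1/x) := by
    rw [hρ_def]
    have : T / (A*E) - 1 = (T - A*E)/(A*E) := by field_simp
    rw [this, abs_div, abs_of_pos hAE]
    rw [div_le_iff₀ hAE]
    calc |T - A*E| ≤ K * (E/x) := htx
      _ = K/A * (1/x) * (A*E) := by field_simp
  have hhalf : K/A * (1/x) ≤ 1/2 := by
    rw [mul_one_div, div_le_iff₀ hx0]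
    linarith
  have hρlo : 1/2 ≤ ρ := by
    have := abs_le.1 (hρ1.trans hhalf)
    linarith [this.1]
  have hρhi : ρ ≤ 3/2 := by
    have := abs_le.1 (hρ1.trans hhalf)
    linarith [this.2]
  have hρ0 : 0 < ρ := by linarith
  have hT_eq : T = (A*E) * ρ := by rw [hρ_def]; field_simp
  have hTpos : 0 < T := by rw [hT_eq]; positivity
  have hlogT : Real.log T = Real.log A + ((α-1) * Real.log x - β*x) + Real.log ρ := by
    rw [hT_eq, Real.log_mul hAE.ne' hρ0.ne', Real.log_mul hA.ne' hE.ne', hE_def,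
      Real.log_mul (Real.rpow_pos_of_pos hx0 _).ne' (Real.exp_pos _).ne',
      Real.log_rpow hx0, Real.log_exp]
    ring
  set L := -Real.log T with hL_def
  have hL_eq : L = β*x - (α-1)*Real.log x - Real.log A - Real.log ρ := by
    rw [hL_def, hlogT]; ring
  have hlogρ : |Real.log ρ| ≤ 2*(K/A * (1/x)) :=
    (gq_abs_log hρlo (by linarith)).trans (by linarith [mul_le_mul_of_nonneg_left hρ1 (by norm_num : (0:ℝ) ≤ 2)])
  have hlogρ1 : |Real.log ρ| ≤ 1 := hlogρ.trans (by linarith)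
  have hlogx0 : 0 ≤ Real.log x := Real.log_nonneg hx5
  have hΔ : |β*x - L| ≤ |α-1| * Real.log x + (|Real.log A| + 1) := by
    have : β*x - L = (α-1)*Real.log x + Real.log A + Real.log ρ := by rw [hL_eq]; ring
    rw [this]
    calc |(α-1)*Real.log x + Real.log A + Real.log ρ|
        ≤ |(α-1)*Real.log x + Real.log A| + |Real.log ρ| := abs_add_le _ _
      _ ≤ |(α-1)*Real.log x| + |Real.log A| + |Real.log ρ| := by
          linarith [abs_add_le ((α-1)*Real.log x) (Real.log A)]
      _ ≤ |α-1| * Real.log x + (|Real.log A| + 1) := by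
          rw [abs_mul, abs_of_nonneg hlogx0]; linarith
  have hΔ2 : |β*x - L| ≤ (β/2)*x := hΔ.trans hx3
  have hLlo : (β/2)*x ≤ L := by
    have := abs_le.1 hΔ2; linarith [this.2]
  have hLhi : L ≤ (3*β/2)*x := by
    have := abs_le.1 hΔ2; linarith [this.1]
  have hLe : Real.exp 1 ≤ L := by
    have h0 : 0 ≤ Real.exp |Real.log (2/β)| := (Real.exp_pos _).le
    linarith
  have hL0 : 0 < L := lt_of_lt_of_le (Real.exp_pos 1) hLe
  have hlogL1 : 1 ≤ Real.log L := by
    have := Real.log_le_log (Real.exp_pos 1) hLe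
    rwa [Real.log_exp] at this
  have hlogL2 : |Real.log (2/β)| ≤ Real.log L := by
    have h1 : Real.exp |Real.log (2/β)| ≤ L := by
      have h0 : 0 < Real.exp 1 := Real.exp_pos 1
      linarith
    have := Real.log_le_log (Real.exp_pos _) h1
    rwa [Real.log_exp] at this
  have hlogx2 : Real.log x ≤ 2 * Real.log L := by
    have hxle : x ≤ L * (2/β) := by
      have hb : β * x ≤ 2 * L := by linarith
      rw [← mul_le_mul_iff_right₀ hβ]
      calc β * x ≤ 2 * L := hb
        _ = β * (L * (2/β)) := by field_simp
    calc Real.log x ≤ Real.log (L * (2/β)) :=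
          Real.log_le_log hx0 hxle
      _ = Real.log L + Real.log (2/β) := Real.log_mul hL0.ne' (by positivity)
      _ ≤ Real.log L + |Real.log (2/β)| := by linarith [le_abs_self (Real.log (2/β))]
      _ ≤ 2 * Real.log L := by linarith
  have hrlo : 1/2 ≤ β*x/L := by
    rw [le_div_iff₀ hL0]; linarith [mul_nonneg hβ.le hx0.le]
  have hrhi : β*x/L ≤ 2 := by
    rw [div_le_iff₀ hL0]; linarith [mul_nonneg hβ.le hx0.le]
  have hlbx : |Real.log (β*x/L)| ≤ (4*|α-1| + 2*|Real.log A| + 2) * (Real.log L / L) := by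
    have h1 : |Real.log (β*x/L)| ≤ 2 * |β*x/L - 1| := gq_abs_log hrlo hrhi
    have h2 : |β*x/L - 1| = |β*x - L| / L := by
      rw [show β*x/L - 1 = (β*x - L)/L by field_simp, abs_div, abs_of_pos hL0]
    have h3 : |β*x - L| ≤ (2*|α-1| + |Real.log A| + 1) * Real.log L := by
      calc |β*x - L| ≤ |α-1| * Real.log x + (|Real.log A| + 1) := hΔ
        _ ≤ |α-1| * (2*Real.log L) + (|Real.log A| + 1) * Real.log L := by
            have h5 := mul_le_mul_of_nonneg_left hlogx2 (abs_nonneg (α-1))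
            have h6 := mul_le_mul_of_nonneg_left hlogL1
              (add_nonneg (abs_nonneg (Real.log A)) zero_le_one)
            linarith
        _ = (2*|α-1| + |Real.log A| + 1) * Real.log L := by ring
    calc |Real.log (β*x/L)| ≤ 2 * (|β*x - L|/L) := by rw [← h2]; linarith
      _ ≤ 2 * ((2*|α-1| + |Real.log A| + 1) * Real.log L / L) := by
          apply mul_le_mul_of_nonneg_left _ (by norm_num : (0:ℝ) ≤ 2)
          exact div_le_div_of_nonneg_right h3 hL0.le
      _ = (4*|α-1| + 2*|Real.log A| + 2) * (Real.log L / L) := by ring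
  have hlρ2 : |Real.log ρ| ≤ (3*K*β/A) * (Real.log L / L) := by
    have hinv : 1/x ≤ (3*β/2)/L := by
      rw [div_le_div_iff₀ hx0 hL0]; linarith [mul_nonneg hβ.le hx0.le]
    calc |Real.log ρ| ≤ 2*(K/A * (1/x)) := hlogρ
      _ ≤ 2*(K/A * ((3*β/2)/L)) := by
          have := mul_le_mul_of_nonneg_left hinv (div_nonneg hK0 hA.le)
          linarith
      _ = (3*K*β/A) * (1 / L) := by ring
      _ ≤ (3*K*β/A) * (Real.log L / L) := by
          apply mul_le_mul_of_nonneg_left _ (by positivity)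
          exact div_le_div_of_nonneg_right hlogL1 hL0.le
  have hlogA : Real.log A = (α-1)*Real.log β - Real.log (Real.Gamma α) := by
    rw [hA_def, Real.log_div (Real.rpow_pos_of_pos hβ _).ne' hΓ.ne', Real.log_rpow hβ]
  have hlogbx : Real.log (β*x/L) = Real.log β + Real.log x - Real.log L := by
    rw [Real.log_div (by positivity) hL0.ne', Real.log_mul hβ.ne' hx0.ne']
  have hD : β*x - (L + (α-1)*Real.log L - Real.log (Real.Gamma α))
      = (α-1) * Real.log (β*x/L) + Real.log ρ := by
    have h1 : β*x - L = (α-1)*Real.log x + Real.log A + Real.log ρ := by rw [hL_eq]; ring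
    rw [hlogA] at h1
    rw [hlogbx]
    linear_combination h1
  refine ⟨hLe, ?_⟩
  have hgoal_eq : x - (L/β + ((α-1)/β) * Real.log L - (1/β) * Real.log (Real.Gamma α))
      = (β*x - (L + (α-1)*Real.log L - Real.log (Real.Gamma α)))/β := by
    field_simp
  rw [hgoal_eq, hD, abs_div, abs_of_pos hβ, div_le_iff₀ hβ]
  have hfin : |(α-1) * Real.log (β*x/L) + Real.log ρ| ≤
      (|α-1| * (4*|α-1| + 2*|Real.log A| + 2) + 3*K*β/A) * (Real.log L / L) := by
    calc |(α-1) * Real.log (β*x/L) + Real.log ρ|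
        ≤ |α-1| * |Real.log (β*x/L)| + |Real.log ρ| := by
          rw [← abs_mul]; exact abs_add_le _ _
      _ ≤ |α-1| * ((4*|α-1| + 2*|Real.log A| + 2) * (Real.log L / L))
          + (3*K*β/A) * (Real.log L / L) := by
          have := mul_le_mul_of_nonneg_left hlbx (abs_nonneg (α-1))
          linarith
      _ = (|α-1| * (4*|α-1| + 2*|Real.log A| + 2) + 3*K*β/A) * (Real.log L / L) := by ring
  refine hfin.trans (le_of_eq ?_)
  field_simp

/-- Gamma distribution: upper tail estimate of the cdf and expansion of the
upper quantile function. -/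
theorem gamma_upper_quantile_expansion
    (g h : ℝ → ℝ) (α β : ℝ) (hα : 0 < α) (hβ : 0 < β) (hα1 : α ≠ 1)
    (hg : ∀ x, g x = ∫ t in Set.Ioc (0:ℝ) x,
      (β ^ α / Real.Gamma α) * t ^ (α - 1) * Real.exp (-β * t))
    (hinv : ∀ u ∈ Set.Ioo (0:ℝ) 1, g (h u) = u) :
    ((fun x => g x - (1 - (β ^ (α - 1) / Real.Gamma α) * x ^ (α - 1) * Real.exp (-β * x)))
        =O[atTop]
      (fun x => (β ^ (α - 1) / Real.Gamma α) * x ^ (α - 1) * Real.exp (-β * x) / x) ∧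
     (fun u => h u -
        (-(1 / β) * Real.log (1 - u)
          + ((α - 1) / β) * Real.log |Real.log (1 - u)|
          - (1 / β) * Real.log (Real.Gamma α)))
        =O[𝓝[<] (1:ℝ)]
      (fun u => Real.log |Real.log (1 - u)| / |Real.log (1 - u)|)) := by
  have hΓ : 0 < Real.Gamma α := Real.Gamma_pos_of_pos hα
  have hA : 0 < β ^ (α-1) / Real.Gamma α := by positivity
  obtain ⟨K, x₀, hK0, hx₀1, htail⟩ := gq_tail α β hα hβ
  have hgeq : ∀ x : ℝ, 0 < x → g x = 1 - gqT α β x := by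
    intro x hx
    have hsplit : (∫ t in Set.Ioc (0:ℝ) x,
        (β ^ α / Real.Gamma α) * t ^ (α - 1) * Real.exp (-β * t)) + gqT α β x = 1 := by
      simp only [gqT]
      rw [← setIntegral_union (Ioc_disjoint_Ioi le_rfl) measurableSet_Ioi
        ((gq_intf α β hα hβ).mono_set Ioc_subset_Ioi_self)
        ((gq_intf α β hα hβ).mono_set (Ioi_subset_Ioi hx.le)),
        Ioc_union_Ioi_eq_Ioi hx.le, gq_mass α β hα hβ]
    rw [hg x]; linarith
  have hmono : Monotone g := by
    intro x y hxy
    rw [hg x, hg y]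
    apply setIntegral_mono_set ((gq_intf α β hα hβ).mono_set Ioc_subset_Ioi_self)
    · refine (ae_restrict_iff' measurableSet_Ioc).mpr (ae_of_all _ (fun t ht => ?_))
      have ht0 : 0 < t := ht.1
      have := Real.rpow_pos_of_pos ht0 (α-1)
      positivity
    · exact HasSubset.Subset.eventuallyLE (Ioc_subset_Ioc_right hxy)
  have htend : Tendsto h (𝓝[<] (1:ℝ)) atTop := by
    rw [tendsto_atTop]
    intro b
    have hM0 : (0:ℝ) < max b 1 := lt_of_lt_of_le one_pos (le_max_right _ _)
    have hgM : g (max b 1) < 1 := by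
      rw [hgeq _ hM0]
      linarith [gqT_pos α β hα hβ hM0]
    have hmem : Set.Ioo (max (g (max b 1)) 0) 1 ∈ 𝓝[<] (1:ℝ) :=
      Ioo_mem_nhdsLT_of_mem ⟨max_lt hgM one_pos, le_refl 1⟩
    filter_upwards [hmem] with u hu
    have hu01 : u ∈ Set.Ioo (0:ℝ) 1 := ⟨lt_of_le_of_lt (le_max_right _ _) hu.1, hu.2⟩
    by_contra hcon
    push_neg at hcon
    have h1 : g (h u) ≤ g (max b 1) := hmono (hcon.le.trans (le_max_left b 1))
    rw [hinv u hu01] at h1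
    exact absurd h1 (not_le.2 (lt_of_le_of_lt (le_max_left _ _) hu.1))
  constructor
  · apply IsBigO.of_bound (K / (β ^ (α-1) / Real.Gamma α))
    filter_upwards [eventually_ge_atTop x₀, eventually_ge_atTop (1:ℝ)] with x hx hx1
    have hx0 : 0 < x := lt_of_lt_of_le one_pos hx1
    have ht : |gqT α β x - (β ^ (α-1) / Real.Gamma α) * (x ^ (α-1) * Real.exp (-β*x))| ≤
        K * (x ^ (α-1) * Real.exp (-β*x) / x) := htail x hx
    rw [Real.norm_eq_abs, Real.norm_eq_abs, hgeq x hx0]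
    have heq : (1 - gqT α β x) -
        (1 - β ^ (α - 1) / Real.Gamma α * x ^ (α - 1) * Real.exp (-β * x))
        = -(gqT α β x - (β ^ (α-1) / Real.Gamma α) * (x ^ (α-1) * Real.exp (-β*x))) := by
      ring
    rw [heq, abs_neg]
    have hEx : (0:ℝ) ≤ β ^ (α - 1) / Real.Gamma α * x ^ (α - 1) * Real.exp (-β * x) / x := by
      have := (Real.rpow_pos_of_pos hx0 (α-1)).le
      positivity
    rw [abs_of_nonneg hEx]
    have hfs : K / (β ^ (α-1) / Real.Gamma α) *
        (β ^ (α - 1) / Real.Gamma α * x ^ (α - 1) * Real.exp (-β * x) / x)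
        = K * (x ^ (α-1) * Real.exp (-β*x) / x) := by
      field_simp
    rw [hfs]
    exact ht
  · obtain ⟨C, hkey⟩ := gq_key α β hα hβ
    apply IsBigO.of_bound C
    have hmem01 : ∀ᶠ u in 𝓝[<] (1:ℝ), u ∈ Set.Ioo (0:ℝ) 1 :=
      eventually_of_mem (Ioo_mem_nhdsLT_of_mem ⟨zero_lt_one, le_refl 1⟩) (fun u hu => hu)
    filter_upwards [htend.eventually hkey, htend.eventually (eventually_ge_atTop (1:ℝ)),
      hmem01] with u hk hx1 hu01
    obtain ⟨hLe, hbound⟩ := hk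
    have hx0 : 0 < h u := lt_of_lt_of_le one_pos hx1
    have h1u : 1 - u = gqT α β (h u) := by
      have := hgeq (h u) hx0
      rw [hinv u hu01] at this
      linarith
    have hL0 : 0 < -Real.log (gqT α β (h u)) := lt_of_lt_of_le (Real.exp_pos 1) hLe
    have hlogL0 : 0 ≤ Real.log (-Real.log (gqT α β (h u))) := by
      have := Real.log_le_log (Real.exp_pos 1) hLe
      rw [Real.log_exp] at this; linarith
    rw [Real.norm_eq_abs, Real.norm_eq_abs, h1u]
    have habs2 : |Real.log (gqT α β (h u))| = -Real.log (gqT α β (h u)) :=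
      abs_of_nonpos (by linarith)
    rw [habs2, abs_of_nonneg (div_nonneg hlogL0 hL0.le)]
    have hneg : -(1/β) * Real.log (gqT α β (h u)) = (-Real.log (gqT α β (h u)))/β := by
      ring
    rw [hneg]
    exact hbound
end
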